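/- arXiv:2310.20565 — 5 statements merged into one kernel-verified Lean document; each statement's English description precedes it below -/
import Mathlib

section
/- Fix an integer d ≥ 1 and any unitary U ∈ U(d). Then d · Σ_{x ∈ Fin d} ∫ ∫ |⟨U e_x, ψ⟩|² · |⟨U e_x, φ⟩|² · |⟨ψ, φ⟩|² dμ_d(φ) dμ_d(ψ) = (d+3)/(d+1)². Equivalently, for a single measurement in the orthonormal basis given by the columns of U, the average risk (infidelity) of the Bayesian mean estimator over the Haar ensemble of pure states equals exactly 1 − (d+3)/(d+1)², independently of U. -/
open MeasureTheory Matrix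

/-- The Hermitian inner product `⟨u, v⟩ = ∑ i, conj (u i) * v i` on `ℂ^d`. -/
noncomputable def cInner {d : ℕ} (u v : Fin d → ℂ) : ℂ :=
  ∑ i, (starRingEnd ℂ) (u i) * v i

/-- `μ` is the Haar probability measure on the compact group `U(d)` of `d × d`
complex unitary matrices, viewed as a Borel measure on the space of all `d × d`
complex matrices: it is a probability measure, it is supported on the unitary
matrices, and it is invariant under left translation by every unitary matrix.
(On the compact metrizable group `U(d)` these properties characterize the Haar
probability measure uniquely.) -/
def IsHaarUnitary {d : ℕ} (μ : Measure (Fin d → Fin d → ℂ)) : Prop :=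
  IsProbabilityMeasure μ ∧
    (∀ᵐ U ∂μ, Matrix.of U ∈ Matrix.unitaryGroup (Fin d) ℂ) ∧
    ∀ V ∈ Matrix.unitaryGroup (Fin d) ℂ,
      μ.map (fun U => Matrix.of.symm (V * Matrix.of U)) = μ

/-- The Haar pure-state measure `μ_d` on `ℂ^d`: the pushforward of the Haar
probability measure on `U(d)` under the map sending a unitary to its first
column. -/
noncomputable def pureStateMeasure {d : ℕ} (hd : 0 < d)
    (μ : Measure (Fin d → Fin d → ℂ)) : Measure (Fin d → ℂ) :=
  μ.map fun U i => U i ⟨0, hd⟩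

/-- The Born-rule probability `|⟨U e_x, ψ⟩|²` of outcome `x` when measuring the
pure state `ψ` in the orthonormal basis given by the columns of `U`. -/
noncomputable def bornP {d : ℕ} (U : Fin d → Fin d → ℂ) (x : Fin d)
    (ψ : Fin d → ℂ) : ℝ :=
  ‖∑ i, (starRingEnd ℂ) (U i x) * ψ i‖ ^ 2

namespace AFSS

@[fun_prop] lemma meas_conj' : Measurable fun z : ℂ => (starRingEnd ℂ) z :=
  Complex.continuous_conj.measurable

@[fun_prop] lemma meas_ofReal' : Measurable fun r : ℝ => (r : ℂ) :=
  Complex.measurable_ofReal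

@[fun_prop] lemma meas_re' : Measurable fun z : ℂ => z.re := Complex.measurable_re

@[fun_prop] lemma meas_im' : Measurable fun z : ℂ => z.im := Complex.measurable_im


variable {d : ℕ}

lemma meas_col (hd : 0 < d) :
    Measurable (fun (M : Fin d → Fin d → ℂ) (i : Fin d) => M i ⟨0, hd⟩) :=
  measurable_pi_lambda _ fun i => (measurable_pi_apply (⟨0, hd⟩ : Fin d)).comp (measurable_pi_apply i)

variable {μU : Measure (Fin d → Fin d → ℂ)}

lemma nu_prob (hd : 0 < d) (hμU : IsHaarUnitary μU) :
    IsProbabilityMeasure (pureStateMeasure hd μU) := by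
  haveI := hμU.1
  exact Measure.isProbabilityMeasure_map (meas_col hd).aemeasurable

lemma sphere_meas : MeasurableSet {φ : Fin d → ℂ | ∑ i, ‖φ i‖ ^ 2 = 1} := by
  have h : Measurable fun (φ : Fin d → ℂ) => ∑ i, ‖φ i‖ ^ 2 := by
    apply Finset.measurable_sum
    intro i _
    exact ((measurable_pi_apply i).norm).pow_const 2
  exact h (measurableSet_singleton 1)

lemma sphere_ae (hd : 0 < d) (hμU : IsHaarUnitary μU) :
    ∀ᵐ φ ∂(pureStateMeasure hd μU), ∑ i, ‖φ i‖ ^ 2 = 1 := by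
  rw [pureStateMeasure, ae_map_iff (meas_col hd).aemeasurable sphere_meas]
  filter_upwards [hμU.2.1] with U hU
  have h1 : (star (Matrix.of U) * Matrix.of U) = 1 := (Matrix.mem_unitaryGroup_iff'.mp hU)
  have h2 := congrArg (fun M => M (⟨0, hd⟩ : Fin d) (⟨0, hd⟩ : Fin d)) h1
  simp only [Matrix.mul_apply, Matrix.star_apply, Matrix.one_apply_eq] at h2
  have h3 := congrArg Complex.re h2
  rw [Complex.re_sum] at h3
  simp only [Matrix.of_apply] at h3
  rw [Complex.one_re] at h3
  rw [← h3]
  apply Finset.sum_congr rfl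
  intro i _
  rw [RCLike.star_def, ← Complex.normSq_eq_conj_mul_self]
  simp [Complex.normSq_eq_norm_sq, ← Complex.ofReal_pow]


/-- the action of a matrix on a vector, written explicitly -/
noncomputable def act (V : Fin d → Fin d → ℂ) (φ : Fin d → ℂ) : Fin d → ℂ :=
  fun i => ∑ k, V i k * φ k

lemma meas_act (V : Fin d → Fin d → ℂ) : Measurable (act V) := by
  apply measurable_pi_lambda
  intro i
  apply Finset.measurable_sum
  intro k _
  exact (measurable_pi_apply k).const_mul _

lemma map_act (hd : 0 < d) (hμU : IsHaarUnitary μU) (V : Fin d → Fin d → ℂ)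
    (hV : Matrix.of V ∈ Matrix.unitaryGroup (Fin d) ℂ) :
    (pureStateMeasure hd μU).map (act V) = pureStateMeasure hd μU := by
  have hg : Measurable (fun U => Matrix.of.symm (Matrix.of V * Matrix.of U)) := by
    have heq : (fun U => Matrix.of.symm (Matrix.of V * Matrix.of U))
        = fun (U : Fin d → Fin d → ℂ) (i j : Fin d) => ∑ k, V i k * U k j := by
      funext U i j
      rw [show Matrix.of.symm (Matrix.of V * Matrix.of U) i j
          = (Matrix.of V * Matrix.of U) i j from rfl, Matrix.mul_apply]
      rfl
    rw [heq]
    apply measurable_pi_lambda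
    intro i
    apply measurable_pi_lambda
    intro j
    apply Finset.measurable_sum
    intro k _
    have h1 : Measurable fun (U : Fin d → Fin d → ℂ) => U k j :=
      (measurable_pi_apply j).comp (measurable_pi_apply k)
    exact h1.const_mul (V i k)
  rw [pureStateMeasure, Measure.map_map (meas_act V) (meas_col hd)]
  have hcomp : (act V ∘ fun U i => U i ⟨0, hd⟩)
      = (fun (U : Fin d → Fin d → ℂ) (i : Fin d) => U i ⟨0, hd⟩) ∘
        (fun U => Matrix.of.symm (Matrix.of V * Matrix.of U)) := by
    funext U
    show act V (fun i => U i ⟨0, hd⟩) = fun i => (Matrix.of V * Matrix.of U) i ⟨0, hd⟩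
    funext i
    rw [Matrix.mul_apply]
    rfl
  rw [hcomp, ← Measure.map_map (meas_col hd) hg, hμU.2.2 (Matrix.of V) hV]

lemma transfer {E : Type} [NormedAddCommGroup E] [NormedSpace ℝ E]
    (hd : 0 < d) (hμU : IsHaarUnitary μU) (V : Fin d → Fin d → ℂ)
    (hV : Matrix.of V ∈ Matrix.unitaryGroup (Fin d) ℂ)
    (f : (Fin d → ℂ) → E) (hf : AEStronglyMeasurable f (pureStateMeasure hd μU)) :
    ∫ φ, f (act V φ) ∂(pureStateMeasure hd μU) = ∫ φ, f φ ∂(pureStateMeasure hd μU) := by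
  conv_rhs => rw [← map_act hd hμU V hV]
  rw [integral_map (meas_act V).aemeasurable]
  rw [map_act hd hμU V hV]
  exact hf


/-! ### permutation matrices -/

noncomputable def permM (σ : Equiv.Perm (Fin d)) : Fin d → Fin d → ℂ :=
  fun i j => if σ j = i then 1 else 0

lemma permM_unitary (σ : Equiv.Perm (Fin d)) :
    Matrix.of (permM σ) ∈ Matrix.unitaryGroup (Fin d) ℂ := by
  rw [Matrix.mem_unitaryGroup_iff']
  ext j k
  simp only [Matrix.mul_apply, Matrix.star_apply, Matrix.of_apply, Matrix.one_apply, permM]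
  have : ∀ i : Fin d, star (if σ j = i then (1:ℂ) else 0) * (if σ k = i then 1 else 0)
      = if i = σ j then (if σ k = i then (1:ℂ) else 0) else 0 := by
    intro i
    by_cases h : σ j = i <;> by_cases h' : i = σ j <;> simp_all
  simp only [this, Finset.sum_ite_eq, Finset.mem_univ, if_true]
  by_cases h : j = k
  · simp [h]
  · have : σ k ≠ σ j := fun hc => h (σ.injective hc).symm
    simp [h, this]

lemma permM_act (σ : Equiv.Perm (Fin d)) (φ : Fin d → ℂ) :
    act (permM σ) φ = fun i => φ (σ.symm i) := by
  funext i
  show (∑ k, (if σ k = i then (1:ℂ) else 0) * φ k) = φ (σ.symm i)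
  have : ∀ k : Fin d, (if σ k = i then (1:ℂ) else 0) * φ k
      = if k = σ.symm i then φ k else 0 := by
    intro k
    have hiff : σ k = i ↔ k = σ.symm i := by
      constructor
      · intro h; rw [← h]; simp
      · intro h; rw [h]; simp
    by_cases h : σ k = i
    · simp [h, hiff.mp h]
    · rw [if_neg h, if_neg (fun hc => h (hiff.mpr hc)), zero_mul]
  simp only [this, Finset.sum_ite_eq', Finset.mem_univ, if_true]

/-! ### diagonal phase matrices -/

noncomputable def diagM (p : Fin d) (c : ℂ) : Fin d → Fin d → ℂ :=
  fun i j => if i = j then (if i = p then c else 1) else 0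

lemma diagM_unitary (p : Fin d) (c : ℂ) (hc : (starRingEnd ℂ) c * c = 1) :
    Matrix.of (diagM p c) ∈ Matrix.unitaryGroup (Fin d) ℂ := by
  rw [Matrix.mem_unitaryGroup_iff']
  ext j k
  simp only [Matrix.mul_apply, Matrix.star_apply, Matrix.of_apply, Matrix.one_apply, diagM]
  have : ∀ i : Fin d, star (if i = j then (if i = p then c else 1) else 0)
        * (if i = k then (if i = p then c else 1) else 0)
      = if i = j then (if i = k then (starRingEnd ℂ) (if i = p then c else 1)
          * (if i = p then c else 1) else 0) else 0 := by
    intro i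
    by_cases h : i = j <;> by_cases h' : i = k <;> simp_all [RCLike.star_def]
  simp only [this, Finset.sum_ite_eq', Finset.mem_univ, if_true]
  by_cases h : j = k
  · subst h
    simp only [if_pos rfl]
    by_cases hp : j = p <;> simp [hp, hc]
  · simp [h]

lemma diagM_act (p : Fin d) (c : ℂ) (φ : Fin d → ℂ) :
    act (diagM p c) φ = fun i => if i = p then c * φ i else φ i := by
  funext i
  show (∑ k, (if i = k then (if i = p then c else 1) else 0) * φ k) = _
  have : ∀ k : Fin d, (if i = k then (if i = p then c else 1) else 0) * φ k
      = if k = i then (if i = p then c else 1) * φ k else 0 := by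
    intro k
    by_cases h : i = k <;> simp_all [eq_comm]
  rw [Finset.sum_congr rfl (fun k _ => this k)]
  simp only [Finset.sum_ite_eq', Finset.mem_univ, if_true]
  by_cases hp : i = p <;> simp [hp]


/-! ### Hadamard-type rotation in coordinates p, q -/

noncomputable def rc : ℂ := ((Real.sqrt 2)⁻¹ : ℝ)

lemma rc_conj : (starRingEnd ℂ) rc = rc := Complex.conj_ofReal _

lemma rc_sq : rc * rc = 1 / 2 := by
  rw [rc, ← Complex.ofReal_mul]
  have h2 : Real.sqrt 2 * Real.sqrt 2 = 2 := Real.mul_self_sqrt (by norm_num)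
  have : (Real.sqrt 2)⁻¹ * (Real.sqrt 2)⁻¹ = 1 / 2 := by
    rw [← mul_inv, h2]
    norm_num
  rw [this]
  norm_num

noncomputable def hadM (p q : Fin d) : Fin d → Fin d → ℂ :=
  fun i j =>
    if i = p then (if j = p then rc else if j = q then rc else 0)
    else if i = q then (if j = p then rc else if j = q then -rc else 0)
    else if i = j then 1 else 0

section Had
variable {p q : Fin d}

lemma hadM_real (i j : Fin d) : (starRingEnd ℂ) (hadM p q i j) = hadM p q i j := by
  simp only [hadM]
  split_ifs <;> simp [rc_conj]

lemma hsplit (hpq : p ≠ q) (f : Fin d → ℂ) :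
    (∑ i, f i) = (∑ i ∈ Finset.univ \ {p, q}, f i) + (f p + f q) := by
  rw [← Finset.sum_pair hpq, Finset.sum_sdiff (Finset.subset_univ _)]

lemma hadM_pp : hadM p q p p = rc := by simp [hadM]
lemma hadM_pq (hpq : p ≠ q) : hadM p q p q = rc := by simp [hadM, hpq.symm]
lemma hadM_qp (hpq : p ≠ q) : hadM p q q p = rc := by simp [hadM, hpq.symm]
lemma hadM_qq (hpq : p ≠ q) : hadM p q q q = -rc := by simp [hadM, hpq.symm]
lemma hadM_pr {r : Fin d} (h1 : r ≠ p) (h2 : r ≠ q) : hadM p q p r = 0 := by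
  simp [hadM, h1, h2]
lemma hadM_qr (hpq : p ≠ q) {r : Fin d} (h1 : r ≠ p) (h2 : r ≠ q) : hadM p q q r = 0 := by
  simp [hadM, h1, h2, hpq.symm]
lemma hadM_rr {r j : Fin d} (h1 : r ≠ p) (h2 : r ≠ q) :
    hadM p q r j = if r = j then 1 else 0 := by
  simp [hadM, h1, h2]

lemma hadM_unitary (hpq : p ≠ q) : Matrix.of (hadM p q) ∈ Matrix.unitaryGroup (Fin d) ℂ := by
  rw [Matrix.mem_unitaryGroup_iff']
  ext j k
  have hm : (star (Matrix.of (hadM p q)) * Matrix.of (hadM p q)) j k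
      = ∑ i, hadM p q i j * hadM p q i k := by
    rw [Matrix.mul_apply]
    apply Finset.sum_congr rfl
    intro i _
    rw [Matrix.star_apply, Matrix.of_apply, Matrix.of_apply, RCLike.star_def, hadM_real]
  rw [hm, hsplit hpq, Matrix.one_apply]
  have htail : (∑ i ∈ Finset.univ \ {p, q}, hadM p q i j * hadM p q i k)
      = if j ∈ Finset.univ \ ({p, q} : Finset (Fin d)) then (if j = k then (1:ℂ) else 0) else 0 := by
    rw [← Finset.sum_ite_eq' (Finset.univ \ {p, q}) j (fun i => if i = k then (1:ℂ) else 0)]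
    apply Finset.sum_congr rfl
    intro i hi
    simp only [Finset.mem_sdiff, Finset.mem_insert, Finset.mem_singleton] at hi
    push_neg at hi
    rw [hadM_rr hi.2.1 hi.2.2, hadM_rr hi.2.1 hi.2.2]
    by_cases h1 : i = j <;> by_cases h2 : i = k <;> simp_all
  rw [htail]
  have hmp : (p : Fin d) ∉ Finset.univ \ ({p, q} : Finset (Fin d)) := by simp
  have hmq : (q : Fin d) ∉ Finset.univ \ ({p, q} : Finset (Fin d)) := by simp
  by_cases hj1 : j = p
  · rw [hj1]
    by_cases hk1 : k = p
    · rw [hk1, if_neg hmp, zero_add, hadM_pp, hadM_qp hpq, if_pos rfl]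
      linear_combination 2 * rc_sq
    · by_cases hk2 : k = q
      · rw [hk2, if_neg hmp, zero_add, hadM_pp, hadM_pq hpq, hadM_qp hpq, hadM_qq hpq,
          if_neg hpq]
        ring
      · rw [if_neg hmp, zero_add, hadM_pr hk1 hk2, hadM_qr hpq hk1 hk2,
          if_neg (fun h : p = k => hk1 h.symm)]
        ring
  · by_cases hj2 : j = q
    · rw [hj2]
      by_cases hk1 : k = p
      · rw [hk1, if_neg hmq, zero_add, hadM_pq hpq, hadM_pp, hadM_qq hpq, hadM_qp hpq,
          if_neg hpq.symm]
        ring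
      · by_cases hk2 : k = q
        · rw [hk2, if_neg hmq, zero_add, hadM_pq hpq, hadM_qq hpq, if_pos rfl]
          linear_combination 2 * rc_sq
        · rw [if_neg hmq, zero_add, hadM_pr hk1 hk2, hadM_qr hpq hk1 hk2,
            if_neg (fun h : q = k => hk2 h.symm)]
          ring
    · have hmj : (j : Fin d) ∈ Finset.univ \ ({p, q} : Finset (Fin d)) := by
        simp [hj1, hj2]
      rw [if_pos hmj, hadM_pr hj1 hj2, hadM_qr hpq hj1 hj2]
      ring

lemma hadM_act (hpq : p ≠ q) (φ : Fin d → ℂ) :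
    act (hadM p q) φ = fun i =>
      if i = p then rc * (φ p + φ q)
      else if i = q then rc * (φ p - φ q) else φ i := by
  funext i
  show (∑ k, hadM p q i k * φ k) = _
  have htail0 : ∀ (_ : i = p ∨ i = q),
      (∑ k ∈ Finset.univ \ {p, q}, hadM p q i k * φ k) = 0 := by
    intro hi1
    apply Finset.sum_eq_zero
    intro k hk
    simp only [Finset.mem_sdiff, Finset.mem_insert, Finset.mem_singleton] at hk
    push_neg at hk
    rcases hi1 with h | h <;> subst h
    · rw [hadM_pr hk.2.1 hk.2.2, zero_mul]
    · rw [hadM_qr hpq hk.2.1 hk.2.2, zero_mul]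
  by_cases hip : i = p
  · subst hip
    rw [if_pos rfl, hsplit hpq, htail0 (Or.inl rfl), hadM_pp, hadM_pq hpq]
    ring
  · by_cases hiq : i = q
    · subst hiq
      rw [if_neg hip, if_pos rfl, hsplit hpq, htail0 (Or.inr rfl), hadM_qp hpq, hadM_qq hpq]
      ring
    · rw [if_neg hip, if_neg hiq]
      have hterm : ∀ k : Fin d, hadM p q i k * φ k = if k = i then φ k else 0 := by
        intro k
        rw [hadM_rr hip hiq]
        by_cases h : i = k
        · subst h; simp
        · rw [if_neg h, if_neg (fun hc : k = i => h hc.symm), zero_mul]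
      rw [Finset.sum_congr rfl (fun k _ => hterm k), Finset.sum_ite_eq',
        if_pos (Finset.mem_univ i)]

end Had

/-! ### integrability and moments -/

lemma coord_le {φ : Fin d → ℂ} (h : ∑ i, ‖φ i‖ ^ 2 = 1) (i : Fin d) : ‖φ i‖ ≤ 1 := by
  have h1 : ‖φ i‖ ^ 2 ≤ 1 := by
    rw [← h]
    exact Finset.single_le_sum (f := fun j => ‖φ j‖ ^ 2) (fun j _ => sq_nonneg _)
      (Finset.mem_univ i)
  nlinarith [norm_nonneg (φ i)]

lemma integrable_bdd {E : Type} [NormedAddCommGroup E] [NormedSpace ℝ E]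
    (hd : 0 < d) (hμU : IsHaarUnitary μU)
    (f : (Fin d → ℂ) → E) (hf : AEStronglyMeasurable f (pureStateMeasure hd μU)) (C : ℝ)
    (hb : ∀ φ, (∑ i, ‖φ i‖ ^ 2 = 1) → ‖f φ‖ ≤ C) :
    Integrable f (pureStateMeasure hd μU) := by
  haveI := nu_prob hd hμU
  refine ⟨hf, HasFiniteIntegral.of_bounded (C := C) ?_⟩
  filter_upwards [sphere_ae hd hμU] with φ h using hb φ h

/-- the second-moment matrix `A x i = ∫ ‖φ x‖² ‖φ i‖² dν` -/
noncomputable def Am (hd : 0 < d) (μU : Measure (Fin d → Fin d → ℂ)) (x i : Fin d) : ℝ :=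
  ∫ φ, ‖φ x‖ ^ 2 * ‖φ i‖ ^ 2 ∂(pureStateMeasure hd μU)

lemma Am_integrable (hd : 0 < d) (hμU : IsHaarUnitary μU) (x i : Fin d) :
    Integrable (fun φ => ‖φ x‖ ^ 2 * ‖φ i‖ ^ 2) (pureStateMeasure hd μU) := by
  apply integrable_bdd hd hμU _ (by fun_prop : Measurable _).aestronglyMeasurable 1
  intro φ h
  have h1 := coord_le h x
  have h2 := coord_le h i
  have h3 := norm_nonneg (φ x)
  have h4 := norm_nonneg (φ i)
  rw [Real.norm_eq_abs, abs_of_nonneg (by positivity)]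
  have e1 : ‖φ x‖ ^ 2 ≤ 1 := by nlinarith
  have e2 : ‖φ i‖ ^ 2 ≤ 1 := by nlinarith
  nlinarith

lemma Am_perm (hd : 0 < d) (hμU : IsHaarUnitary μU) (σ : Equiv.Perm (Fin d)) (x i : Fin d) :
    Am hd μU x i = Am hd μU (σ x) (σ i) := by
  have ht := transfer hd hμU (permM σ) (permM_unitary σ)
    (fun φ => ‖φ (σ x)‖ ^ 2 * ‖φ (σ i)‖ ^ 2)
    (by fun_prop : Measurable _).aestronglyMeasurable
  simp only [permM_act, Equiv.symm_apply_apply] at ht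
  unfold Am
  exact ht

lemma Am_diag (hd : 0 < d) (hμU : IsHaarUnitary μU) (x y : Fin d) :
    Am hd μU x x = Am hd μU y y := by
  have := Am_perm hd hμU (Equiv.swap x y) x x
  rwa [Equiv.swap_apply_left] at this

lemma Am_off (hd : 0 < d) (hμU : IsHaarUnitary μU) {x i y j : Fin d}
    (hxi : x ≠ i) (hyj : y ≠ j) : Am hd μU x i = Am hd μU y j := by
  set t := Equiv.swap x y i with ht
  have hyt : y ≠ t := by
    intro h
    apply hxi
    apply (Equiv.swap x y).injective
    rw [Equiv.swap_apply_left, ← ht]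
    exact h
  set σ := (Equiv.swap x y).trans (Equiv.swap t j) with hσ
  have hσx : σ x = y := by
    simp only [hσ, Equiv.trans_apply, Equiv.swap_apply_left]
    exact Equiv.swap_apply_of_ne_of_ne hyt hyj
  have hσi : σ i = j := by
    simp only [hσ, Equiv.trans_apply, ← ht, Equiv.swap_apply_left]
  have := Am_perm hd hμU σ x i
  rwa [hσx, hσi] at this

lemma Am_sum (hd : 0 < d) (hμU : IsHaarUnitary μU) :
    ∑ x : Fin d, ∑ i : Fin d, Am hd μU x i = 1 := by
  haveI := nu_prob hd hμU
  have h1 : ∀ x : Fin d, ∑ i : Fin d, Am hd μU x i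
      = ∫ φ, ∑ i : Fin d, ‖φ x‖ ^ 2 * ‖φ i‖ ^ 2 ∂(pureStateMeasure hd μU) :=
    fun x => (integral_finset_sum _ (fun i _ => Am_integrable hd hμU x i)).symm
  rw [Finset.sum_congr rfl (fun x _ => h1 x),
    ← integral_finset_sum _ (fun x _ =>
      integrable_finset_sum _ (fun i _ => Am_integrable hd hμU x i))]
  have h2 : (1 : ℝ) = ∫ _, (1 : ℝ) ∂(pureStateMeasure hd μU) := by simp
  rw [h2]
  apply integral_congr_ae
  filter_upwards [sphere_ae hd hμU] with φ h
  have : ∀ x : Fin d, ∑ i : Fin d, ‖φ x‖ ^ 2 * ‖φ i‖ ^ 2 = ‖φ x‖ ^ 2 := by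
    intro x
    rw [← Finset.mul_sum, h, mul_one]
  rw [Finset.sum_congr rfl (fun x _ => this x), h]


lemma nsq (z : ℂ) : ‖z‖ ^ 2 = Complex.normSq z := by
  rw [Complex.sq_norm]

lemma norm_add_sq' (z w : ℂ) : ‖z + w‖ ^ 2
    = ‖z‖ ^ 2 + ‖w‖ ^ 2 + 2 * (z * (starRingEnd ℂ) w).re := by
  rw [nsq, nsq, nsq, Complex.normSq_add]

lemma flip_integral {E : Type} [NormedAddCommGroup E] [NormedSpace ℝ E]
    (hd : 0 < d) (hμU : IsHaarUnitary μU) (p : Fin d)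
    (f : (Fin d → ℂ) → E) (hf : AEStronglyMeasurable f (pureStateMeasure hd μU))
    (hodd : ∀ φ, f (fun k => if k = p then -φ k else φ k) = - f φ) :
    ∫ φ, f φ ∂(pureStateMeasure hd μU) = 0 := by
  have hu : Matrix.of (diagM p (-1)) ∈ Matrix.unitaryGroup (Fin d) ℂ :=
    diagM_unitary p (-1 : ℂ) (show (starRingEnd ℂ) (-1 : ℂ) * (-1 : ℂ) = 1 by simp)
  have ht := transfer hd hμU (diagM p (-1)) hu f hf
  have hpt : ∀ φ : Fin d → ℂ, f (act (diagM p (-1)) φ) = - f φ := by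
    intro φ
    rw [diagM_act]
    have : (fun i => if i = p then (-1 : ℂ) * φ i else φ i)
        = (fun k => if k = p then -φ k else φ k) := by
      funext k
      by_cases h : k = p <;> simp [h]
    rw [this, hodd]
  simp only [hpt, integral_neg] at ht
  have h2 : (2 : ℝ) • ∫ φ, f φ ∂(pureStateMeasure hd μU) = 0 := by
    rw [two_smul]
    nth_rewrite 1 [← ht]
    exact neg_add_cancel _
  exact (smul_eq_zero.mp h2).resolve_left (by norm_num)

lemma rc_normsq : ‖rc‖ ^ 2 = 1 / 2 := by
  rw [rc, Complex.norm_real, Real.norm_eq_abs, sq_abs, inv_pow,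
    Real.sq_sqrt (by norm_num : (0:ℝ) ≤ 2)]
  norm_num

lemma Am_two (hd : 0 < d) (hμU : IsHaarUnitary μU) {p q : Fin d} (hpq : p ≠ q) :
    Am hd μU p p = 2 * Am hd μU p q := by
  haveI := nu_prob hd hμU
  have hqp : q ≠ p := fun h => hpq h.symm
  set ν := pureStateMeasure hd μU with hν
  set r : (Fin d → ℂ) → ℝ := fun φ => (φ p * (starRingEnd ℂ) (φ q)).re with hr
  set sI : (Fin d → ℂ) → ℝ := fun φ => (φ p * (starRingEnd ℂ) (φ q)).im with hsI
  -- integrability facts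
  have hrle : ∀ φ : Fin d → ℂ, (∑ i, ‖φ i‖ ^ 2 = 1) → |r φ| ≤ 1 := by
    intro φ h
    have h1 : |r φ| ≤ ‖φ p * (starRingEnd ℂ) (φ q)‖ := by
      exact Complex.abs_re_le_norm _
    have h2 : ‖φ p * (starRingEnd ℂ) (φ q)‖ = ‖φ p‖ * ‖φ q‖ := by
      rw [norm_mul, RCLike.norm_conj]
    have := coord_le h p
    have := coord_le h q
    have := norm_nonneg (φ p)
    have := norm_nonneg (φ q)
    nlinarith
  have hsle : ∀ φ : Fin d → ℂ, (∑ i, ‖φ i‖ ^ 2 = 1) → |sI φ| ≤ 1 := by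
    intro φ h
    have h1 : |sI φ| ≤ ‖φ p * (starRingEnd ℂ) (φ q)‖ := by
      exact Complex.abs_im_le_norm _
    have h2 : ‖φ p * (starRingEnd ℂ) (φ q)‖ = ‖φ p‖ * ‖φ q‖ := by
      rw [norm_mul, RCLike.norm_conj]
    have := coord_le h p
    have := coord_le h q
    have := norm_nonneg (φ p)
    have := norm_nonneg (φ q)
    nlinarith
  have I4 : Integrable (fun φ => r φ * (‖φ p‖ ^ 2 + ‖φ q‖ ^ 2)) ν := by
    apply integrable_bdd hd hμU _ (by fun_prop : Measurable _).aestronglyMeasurable 2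
    intro φ h
    have h1 := hrle φ h
    have h2 := coord_le h p
    have h3 := coord_le h q
    have h4 := norm_nonneg (φ p)
    have h5 := norm_nonneg (φ q)
    rw [Real.norm_eq_abs, abs_mul, abs_of_nonneg (by positivity : (0:ℝ) ≤ ‖φ p‖ ^ 2 + ‖φ q‖ ^ 2)]
    have h6 : ‖φ p‖ ^ 2 + ‖φ q‖ ^ 2 ≤ 2 := by nlinarith
    have h7 : (0:ℝ) ≤ |r φ| := abs_nonneg _
    nlinarith
  have I5 : Integrable (fun φ => r φ ^ 2) ν := by
    apply integrable_bdd hd hμU _ (by fun_prop : Measurable _).aestronglyMeasurable 1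
    intro φ h
    have h1 := hrle φ h
    have h7 : (0:ℝ) ≤ |r φ| := abs_nonneg _
    rw [Real.norm_eq_abs, abs_of_nonneg (sq_nonneg _), ← sq_abs]
    nlinarith
  have I6 : Integrable (fun φ => sI φ ^ 2) ν := by
    apply integrable_bdd hd hμU _ (by fun_prop : Measurable _).aestronglyMeasurable 1
    intro φ h
    have h1 := hsle φ h
    have h7 : (0:ℝ) ≤ |sI φ| := abs_nonneg _
    rw [Real.norm_eq_abs, abs_of_nonneg (sq_nonneg _), ← sq_abs]
    nlinarith
  -- step 1 : ∫ r (‖φp‖² + ‖φq‖²) = 0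
  have hJ4 : ∫ φ, r φ * (‖φ p‖ ^ 2 + ‖φ q‖ ^ 2) ∂ν = 0 := by
    apply flip_integral hd hμU p _ I4.1
    intro φ
    simp only [hr, eq_self_iff_true, if_true, if_neg hqp, if_false]
    rw [norm_neg, neg_mul, Complex.neg_re]
    ring
  -- step 2 : ∫ r² = ∫ s²
  have hJ5 : ∫ φ, sI φ ^ 2 ∂ν = ∫ φ, r φ ^ 2 ∂ν := by
    have hu : Matrix.of (diagM p Complex.I) ∈ Matrix.unitaryGroup (Fin d) ℂ := by
      apply diagM_unitary
      rw [Complex.conj_I, neg_mul, Complex.I_mul_I, neg_neg]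
    have ht := transfer hd hμU (diagM p Complex.I) hu (fun φ => r φ ^ 2) I5.1
    have hpt : ∀ φ : Fin d → ℂ, r (act (diagM p Complex.I) φ) ^ 2 = sI φ ^ 2 := by
      intro φ
      rw [diagM_act]
      simp only [hr, eq_self_iff_true, if_true, if_neg hqp, if_false]
      rw [show Complex.I * φ p * (starRingEnd ℂ) (φ q)
          = Complex.I * (φ p * (starRingEnd ℂ) (φ q)) from by ring]
      rw [Complex.I_mul_re]
      rw [hsI]
      ring
    simp only [hpt] at ht
    exact ht
  -- step 3 : ∫ r² + ∫ s² = Am p q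
  have hJ6 : (∫ φ, r φ ^ 2 ∂ν) + ∫ φ, sI φ ^ 2 ∂ν = Am hd μU p q := by
    rw [← integral_add I5 I6]
    apply integral_congr_ae
    apply Filter.Eventually.of_forall
    intro φ
    show r φ ^ 2 + sI φ ^ 2 = ‖φ p‖ ^ 2 * ‖φ q‖ ^ 2
    rw [hr, hsI]
    have : (φ p * (starRingEnd ℂ) (φ q)).re ^ 2 + (φ p * (starRingEnd ℂ) (φ q)).im ^ 2
        = Complex.normSq (φ p * (starRingEnd ℂ) (φ q)) := by
      rw [Complex.normSq_apply]
      ring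
    rw [this, Complex.normSq_mul, Complex.normSq_conj, nsq, nsq]
  have hr2 : ∫ φ, r φ ^ 2 ∂ν = Am hd μU p q / 2 := by
    rw [hJ5] at hJ6
    linarith
  -- main transfer with the Hadamard matrix
  have ht := transfer hd hμU (hadM p q) (hadM_unitary hpq)
    (fun φ => ‖φ p‖ ^ 2 * ‖φ p‖ ^ 2) (by fun_prop : Measurable _).aestronglyMeasurable
  simp only [hadM_act hpq, eq_self_iff_true, if_true] at ht
  have hpt : ∀ φ : Fin d → ℂ, ‖rc * (φ p + φ q)‖ ^ 2 * ‖rc * (φ p + φ q)‖ ^ 2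
      = (1/4) * (‖φ p‖ ^ 2 * ‖φ p‖ ^ 2 + ‖φ q‖ ^ 2 * ‖φ q‖ ^ 2
          + 2 * (‖φ p‖ ^ 2 * ‖φ q‖ ^ 2)
          + 4 * (r φ * (‖φ p‖ ^ 2 + ‖φ q‖ ^ 2)) + 4 * r φ ^ 2) := by
    intro φ
    have hn : ‖rc * (φ p + φ q)‖ ^ 2 = (1/2) * ‖φ p + φ q‖ ^ 2 := by
      rw [norm_mul, mul_pow, rc_normsq]
    rw [hn, norm_add_sq']
    rw [hr]
    ring
  simp only [hpt] at ht
  rw [integral_const_mul] at ht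
  have Ipp := Am_integrable hd hμU p p
  have Iqq := Am_integrable hd hμU q q
  have Ipq2 : Integrable (fun φ => 2 * (‖φ p‖ ^ 2 * ‖φ q‖ ^ 2)) ν :=
    (Am_integrable hd hμU p q).const_mul 2
  have I4c : Integrable (fun φ => 4 * (r φ * (‖φ p‖ ^ 2 + ‖φ q‖ ^ 2))) ν := I4.const_mul 4
  have I5c : Integrable (fun φ => 4 * r φ ^ 2) ν := I5.const_mul 4
  have S2 : Integrable (fun φ => ‖φ p‖ ^ 2 * ‖φ p‖ ^ 2 + ‖φ q‖ ^ 2 * ‖φ q‖ ^ 2) ν := by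
    exact Ipp.add Iqq
  have S3 : Integrable (fun φ => ‖φ p‖ ^ 2 * ‖φ p‖ ^ 2 + ‖φ q‖ ^ 2 * ‖φ q‖ ^ 2
      + 2 * (‖φ p‖ ^ 2 * ‖φ q‖ ^ 2)) ν := by exact S2.add Ipq2
  have S4 : Integrable (fun φ => ‖φ p‖ ^ 2 * ‖φ p‖ ^ 2 + ‖φ q‖ ^ 2 * ‖φ q‖ ^ 2
      + 2 * (‖φ p‖ ^ 2 * ‖φ q‖ ^ 2) + 4 * (r φ * (‖φ p‖ ^ 2 + ‖φ q‖ ^ 2))) ν := by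
    exact S3.add I4c
  rw [integral_add S4 I5c, integral_add S3 I4c, integral_add S2 Ipq2, integral_add Ipp Iqq,
    integral_const_mul, integral_const_mul, integral_const_mul, hJ4, hr2] at ht
  have hb : Am hd μU q q = Am hd μU p p := Am_diag hd hμU q p
  have hAmdef : ∫ φ, ‖φ p‖ ^ 2 * ‖φ p‖ ^ 2 ∂ν = Am hd μU p p := rfl
  have hAmdef2 : ∫ φ, ‖φ q‖ ^ 2 * ‖φ q‖ ^ 2 ∂ν = Am hd μU q q := rfl
  have hAmdef3 : ∫ φ, ‖φ p‖ ^ 2 * ‖φ q‖ ^ 2 ∂ν = Am hd μU p q := rfl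
  rw [hAmdef, hAmdef2, hAmdef3, hb] at ht
  linarith


lemma sum_struct (hd : 0 < d) (f : Fin d → Fin d → ℝ) (vb va : ℝ)
    (hdg : ∀ x, f x x = vb) (hoff : ∀ x i, x ≠ i → f x i = va) :
    ∑ x : Fin d, ∑ i : Fin d, f x i = d * (vb + ((d : ℝ) - 1) * va) := by
  have hx : ∀ x : Fin d, ∑ i, f x i = vb + ((d : ℝ) - 1) * va := by
    intro x
    rw [← Finset.add_sum_erase _ _ (Finset.mem_univ x), hdg x]
    congr 1
    rw [Finset.sum_congr rfl (fun i hi => hoff x i (fun h => (Finset.mem_erase.mp hi).1 h.symm)),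
      Finset.sum_const, nsmul_eq_mul, Finset.card_erase_of_mem (Finset.mem_univ x),
      Finset.card_univ, Fintype.card_fin, Nat.cast_sub hd, Nat.cast_one]
  rw [Finset.sum_congr rfl (fun x _ => hx x), Finset.sum_const, nsmul_eq_mul,
    Finset.card_univ, Fintype.card_fin]

lemma Am_sq_sum (hd : 0 < d) (hμU : IsHaarUnitary μU) :
    (d : ℝ) * ∑ x : Fin d, ∑ i : Fin d, (Am hd μU x i) ^ 2 = (d + 3) / (d + 1) ^ 2 := by
  set x₀ : Fin d := ⟨0, hd⟩ with hx₀
  set b : ℝ := Am hd μU x₀ x₀ with hbdef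
  by_cases hd1 : d = 1
  · subst hd1
    have h1 := Am_sum hd hμU
    rw [show (∑ x : Fin 1, ∑ i : Fin 1, Am hd μU x i) = Am hd μU 0 0 from by
      simp [Fin.sum_univ_one]] at h1
    rw [show (∑ x : Fin 1, ∑ i : Fin 1, (Am hd μU x i) ^ 2) = (Am hd μU 0 0) ^ 2 from by
      simp [Fin.sum_univ_one]]
    rw [h1]
    norm_num
  · have hd2 : 2 ≤ d := by omega
    set x₁ : Fin d := ⟨1, by omega⟩ with hx₁
    have hne : x₀ ≠ x₁ := by
      simp [hx₀, hx₁, Fin.ext_iff]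
    set a : ℝ := Am hd μU x₀ x₁ with hadef
    have hb2 : b = 2 * a := Am_two hd hμU hne
    have hdg : ∀ x, Am hd μU x x = b := fun x => Am_diag hd hμU x x₀
    have hoff : ∀ x i, x ≠ i → Am hd μU x i = a := fun x i h => Am_off hd hμU h hne
    have hsum := Am_sum hd hμU
    rw [sum_struct hd _ b a hdg hoff] at hsum
    rw [sum_struct hd (fun x i => (Am hd μU x i) ^ 2) (b ^ 2) (a ^ 2)
      (fun x => by rw [hdg x]) (fun x i h => by rw [hoff x i h])]
    have hd0 : (0 : ℝ) < d := by exact_mod_cast hd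
    have ha : a * ((d : ℝ) * ((d : ℝ) + 1)) = 1 := by
      rw [hb2] at hsum
      nlinarith
    have ha' : a = 1 / ((d : ℝ) * ((d : ℝ) + 1)) := by
      field_simp
      linarith [ha]
    rw [hb2, ha']
    have h1 : (d : ℝ) + 1 ≠ 0 := by positivity
    field_simp
    ring


lemma IC_integrable (hd : 0 < d) (hμU : IsHaarUnitary μU) (x i j : Fin d) :
    Integrable (fun φ => ((‖φ x‖ ^ 2 : ℝ) : ℂ) * (φ i * (starRingEnd ℂ) (φ j)))
      (pureStateMeasure hd μU) := by
  apply integrable_bdd hd hμU _ (by fun_prop : Measurable _).aestronglyMeasurable 1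
  intro φ h
  rw [norm_mul, norm_mul, Complex.norm_real, RCLike.norm_conj, Real.norm_eq_abs,
    abs_of_nonneg (sq_nonneg _)]
  have h1 := coord_le h x
  have h2 := coord_le h i
  have h3 := coord_le h j
  have h4 := norm_nonneg (φ x)
  have h5 := norm_nonneg (φ i)
  have h6 := norm_nonneg (φ j)
  have h7 : ‖φ i‖ * ‖φ j‖ ≤ 1 := by nlinarith
  have h8 : ‖φ x‖ ^ 2 ≤ 1 := by nlinarith
  nlinarith [mul_nonneg h5 h6]

lemma third_vanish (hd : 0 < d) (hμU : IsHaarUnitary μU) (x i j : Fin d) (hij : i ≠ j) :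
    ∫ φ, ((‖φ x‖ ^ 2 : ℝ) : ℂ) * (φ i * (starRingEnd ℂ) (φ j)) ∂(pureStateMeasure hd μU)
      = 0 := by
  have hji : j ≠ i := fun h => hij h.symm
  apply flip_integral hd hμU i _ (IC_integrable hd hμU x i j).1
  intro φ
  by_cases hx : x = i
  · simp [hx, if_neg hji, norm_neg]
  · simp [if_neg hx, if_neg hji, norm_neg]

lemma third_diag (hd : 0 < d) (hμU : IsHaarUnitary μU) (x i : Fin d) :
    ∫ φ, ((‖φ x‖ ^ 2 : ℝ) : ℂ) * (φ i * (starRingEnd ℂ) (φ i)) ∂(pureStateMeasure hd μU)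
      = ((Am hd μU x i : ℝ) : ℂ) := by
  have hpt : ∀ φ : Fin d → ℂ, ((‖φ x‖ ^ 2 : ℝ) : ℂ) * (φ i * (starRingEnd ℂ) (φ i))
      = ((‖φ x‖ ^ 2 * ‖φ i‖ ^ 2 : ℝ) : ℂ) := by
    intro φ
    rw [Complex.mul_conj, nsq (φ i), ← Complex.ofReal_mul]
  simp only [hpt]
  exact integral_ofReal

lemma inner_moment (hd : 0 < d) (hμU : IsHaarUnitary μU) (x : Fin d) (ψ : Fin d → ℂ) :
    ∫ φ, ‖φ x‖ ^ 2 * ‖cInner ψ φ‖ ^ 2 ∂(pureStateMeasure hd μU)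
      = ∑ i, ‖ψ i‖ ^ 2 * Am hd μU x i := by
  haveI := nu_prob hd hμU
  set ν := pureStateMeasure hd μU with hν
  set F : (Fin d → ℂ) → ℂ :=
    fun φ => ((‖φ x‖ ^ 2 : ℝ) : ℂ) * (cInner ψ φ * (starRingEnd ℂ) (cInner ψ φ)) with hF
  have hcb : ∀ φ : Fin d → ℂ, (∑ i, ‖φ i‖ ^ 2 = 1) → ‖cInner ψ φ‖ ≤ ∑ i, ‖ψ i‖ := by
    intro φ h
    refine le_trans (norm_sum_le _ _) (Finset.sum_le_sum fun i _ => ?_)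
    rw [norm_mul, RCLike.norm_conj]
    have := coord_le h i
    have := norm_nonneg (ψ i)
    nlinarith
  have hFint : Integrable F ν := by
    apply integrable_bdd hd hμU _ (by unfold F; unfold cInner; fun_prop :
      Measurable F).aestronglyMeasurable ((∑ i, ‖ψ i‖) ^ 2)
    intro φ h
    rw [hF]
    simp only []
    rw [norm_mul, norm_mul, Complex.norm_real, RCLike.norm_conj, Real.norm_eq_abs,
      abs_of_nonneg (sq_nonneg _)]
    have h1 := coord_le h x
    have h2 := hcb φ h
    have h3 := norm_nonneg (φ x)
    have h4 := norm_nonneg (cInner ψ φ)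
    have h5 : (0:ℝ) ≤ ∑ i, ‖ψ i‖ := le_trans h4 h2
    have h8 : ‖cInner ψ φ‖ * ‖cInner ψ φ‖ ≤ (∑ i, ‖ψ i‖) ^ 2 := by nlinarith
    have h9 : ‖φ x‖ ^ 2 ≤ 1 := by nlinarith
    nlinarith [mul_nonneg h4 h4]
  have hpt : ∀ φ : Fin d → ℂ, ‖φ x‖ ^ 2 * ‖cInner ψ φ‖ ^ 2 = (F φ).re := by
    intro φ
    rw [hF]
    simp only []
    rw [Complex.mul_conj, ← Complex.ofReal_mul, Complex.ofReal_re, nsq (cInner ψ φ)]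
  simp only [hpt]
  have hre := integral_re hFint
  rw [RCLike.re_to_complex] at hre
  have hre' : (∫ φ, (F φ).re ∂ν) = (∫ φ, F φ ∂ν).re := by
    rw [← hre]
    apply integral_congr_ae
    apply Filter.Eventually.of_forall
    intro φ
    rfl
  rw [hre']
  have hFeq : ∀ φ : Fin d → ℂ, F φ = ∑ i, ∑ j,
      ((starRingEnd ℂ) (ψ i) * ψ j) * (((‖φ x‖ ^ 2 : ℝ) : ℂ) * (φ i * (starRingEnd ℂ) (φ j))) := by
    intro φ
    rw [hF]
    simp only []
    rw [cInner, map_sum, Finset.sum_mul_sum, Finset.mul_sum]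
    refine Finset.sum_congr rfl fun i _ => ?_
    rw [Finset.mul_sum]
    refine Finset.sum_congr rfl fun j _ => ?_
    rw [_root_.map_mul, Complex.conj_conj]
    ring
  simp only [hFeq]
  rw [integral_finset_sum _ (fun i _ => integrable_finset_sum _
    (fun j _ => (IC_integrable hd hμU x i j).const_mul _))]
  rw [Finset.sum_congr rfl (fun i (_ : i ∈ Finset.univ) => integral_finset_sum _
    (fun j _ => (IC_integrable hd hμU x i j).const_mul _))]
  rw [Finset.sum_congr rfl (fun i (_ : i ∈ Finset.univ) => Finset.sum_congr rfl
    (fun j (_ : j ∈ Finset.univ) => integral_const_mul _ _))]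
  rw [Finset.sum_congr rfl (fun i (_ : i ∈ Finset.univ) => Finset.sum_eq_single i
    (fun j _ hji => by rw [third_vanish hd hμU x i j (fun h => hji h.symm), mul_zero])
    (fun h => absurd (Finset.mem_univ i) h))]
  rw [Finset.sum_congr rfl (fun i (_ : i ∈ Finset.univ) => by
    rw [third_diag hd hμU x i])]
  rw [Complex.re_sum]
  refine Finset.sum_congr rfl fun i _ => ?_
  rw [← Complex.normSq_eq_conj_mul_self, ← Complex.ofReal_mul, Complex.ofReal_re, nsq (ψ i)]


lemma double_moment (hd : 0 < d) (hμU : IsHaarUnitary μU) (x : Fin d) :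
    ∫ ψ, ∫ φ, ‖ψ x‖ ^ 2 * ‖φ x‖ ^ 2 * ‖cInner ψ φ‖ ^ 2
        ∂(pureStateMeasure hd μU) ∂(pureStateMeasure hd μU)
      = ∑ i, (Am hd μU x i) ^ 2 := by
  haveI := nu_prob hd hμU
  have h1 : ∀ ψ : Fin d → ℂ, ∫ φ, ‖ψ x‖ ^ 2 * ‖φ x‖ ^ 2 * ‖cInner ψ φ‖ ^ 2
      ∂(pureStateMeasure hd μU) = ∑ i, Am hd μU x i * (‖ψ x‖ ^ 2 * ‖ψ i‖ ^ 2) := by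
    intro ψ
    rw [show (fun φ => ‖ψ x‖ ^ 2 * ‖φ x‖ ^ 2 * ‖cInner ψ φ‖ ^ 2)
        = fun φ => ‖ψ x‖ ^ 2 * (‖φ x‖ ^ 2 * ‖cInner ψ φ‖ ^ 2) from
      funext fun φ => by ring]
    rw [integral_const_mul, inner_moment hd hμU x ψ, Finset.mul_sum]
    refine Finset.sum_congr rfl fun i _ => ?_
    ring
  simp only [h1]
  rw [integral_finset_sum _ (fun i _ => (Am_integrable hd hμU x i).const_mul _)]
  refine Finset.sum_congr rfl fun i _ => ?_
  rw [integral_const_mul]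
  rw [show (∫ ψ, ‖ψ x‖ ^ 2 * ‖ψ i‖ ^ 2 ∂(pureStateMeasure hd μU)) = Am hd μU x i from rfl]
  rw [sq]

lemma born_reduce (hd : 0 < d) (hμU : IsHaarUnitary μU) (U : Fin d → Fin d → ℂ)
    (hU : Matrix.of U ∈ Matrix.unitaryGroup (Fin d) ℂ) (x : Fin d) :
    ∫ ψ, ∫ φ, bornP U x ψ * bornP U x φ * ‖cInner ψ φ‖ ^ 2
        ∂(pureStateMeasure hd μU) ∂(pureStateMeasure hd μU)
      = ∫ ψ, ∫ φ, ‖ψ x‖ ^ 2 * ‖φ x‖ ^ 2 * ‖cInner ψ φ‖ ^ 2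
        ∂(pureStateMeasure hd μU) ∂(pureStateMeasure hd μU) := by
  haveI := nu_prob hd hμU
  set ν := pureStateMeasure hd μU with hν
  have hcol : ∀ k l : Fin d, ∑ i, (starRingEnd ℂ) (U i k) * U i l
      = if k = l then 1 else 0 := by
    intro k l
    have h1 : (star (Matrix.of U) * Matrix.of U) = 1 := Matrix.mem_unitaryGroup_iff'.mp hU
    have h2 := congrArg (fun M => M k l) h1
    simp only [Matrix.mul_apply, Matrix.star_apply, Matrix.of_apply, Matrix.one_apply,
      RCLike.star_def] at h2
    exact h2
  have hborn : ∀ ψ : Fin d → ℂ, bornP U x (act U ψ) = ‖ψ x‖ ^ 2 := by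
    intro ψ
    rw [bornP]
    congr 1
    have h1 : ∀ i : Fin d, (starRingEnd ℂ) (U i x) * act U ψ i
        = ∑ k, ((starRingEnd ℂ) (U i x) * U i k) * ψ k := by
      intro i
      rw [act, Finset.mul_sum]
      refine Finset.sum_congr rfl fun k _ => ?_
      ring
    rw [Finset.sum_congr rfl (fun i _ => h1 i), Finset.sum_comm]
    have h2 : ∀ k : Fin d, ∑ i, ((starRingEnd ℂ) (U i x) * U i k) * ψ k
        = (if k = x then (1:ℂ) else 0) * ψ k := by
      intro k
      rw [← Finset.sum_mul, hcol x k]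
      by_cases h : x = k
      · rw [if_pos h, if_pos h.symm]
      · rw [if_neg h, if_neg (fun hc => h hc.symm)]
    rw [Finset.sum_congr rfl (fun k _ => h2 k)]
    simp only [ite_mul, one_mul, zero_mul]
    rw [Finset.sum_ite_eq' Finset.univ x ψ, if_pos (Finset.mem_univ x)]
  have hcin : ∀ ψ φ : Fin d → ℂ, cInner (act U ψ) (act U φ) = cInner ψ φ := by
    intro ψ φ
    rw [cInner, cInner]
    have h1 : ∀ i : Fin d, (starRingEnd ℂ) (act U ψ i) * act U φ i
        = ∑ k, ∑ l, ((starRingEnd ℂ) (ψ k) * φ l) * ((starRingEnd ℂ) (U i k) * U i l) := by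
      intro i
      simp only [act]
      rw [map_sum, Finset.sum_mul_sum]
      refine Finset.sum_congr rfl fun k _ => ?_
      refine Finset.sum_congr rfl fun l _ => ?_
      rw [_root_.map_mul]
      ring
    rw [Finset.sum_congr rfl (fun i _ => h1 i), Finset.sum_comm]
    have h2 : ∀ k : Fin d, ∑ i, ∑ l, ((starRingEnd ℂ) (ψ k) * φ l)
        * ((starRingEnd ℂ) (U i k) * U i l)
        = ∑ l, ((starRingEnd ℂ) (ψ k) * φ l) * (if k = l then 1 else 0) := by
      intro k
      rw [Finset.sum_comm]
      refine Finset.sum_congr rfl fun l _ => ?_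
      rw [← Finset.mul_sum, hcol k l]
    rw [Finset.sum_congr rfl (fun k _ => h2 k)]
    refine Finset.sum_congr rfl fun k _ => ?_
    simp only [mul_ite, mul_one, mul_zero]
    rw [Finset.sum_ite_eq Finset.univ k (fun l => (starRingEnd ℂ) (ψ k) * φ l),
      if_pos (Finset.mem_univ k)]
  -- measurability of the two-variable integrand
  have hGmeas : Measurable (fun p : (Fin d → ℂ) × (Fin d → ℂ) =>
      bornP U x p.1 * bornP U x p.2 * ‖cInner p.1 p.2‖ ^ 2) := by
    unfold bornP cInner
    fun_prop
  -- Step A : transform the inner variable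
  have hA : ∀ ψ : Fin d → ℂ, ∫ φ, bornP U x ψ * bornP U x φ * ‖cInner ψ φ‖ ^ 2 ∂ν
      = ∫ φ, bornP U x ψ * bornP U x (act U φ) * ‖cInner ψ (act U φ)‖ ^ 2 ∂ν := by
    intro ψ
    exact (transfer hd hμU U hU (fun φ => bornP U x ψ * bornP U x φ * ‖cInner ψ φ‖ ^ 2)
      (by unfold bornP cInner; fun_prop : Measurable _).aestronglyMeasurable).symm
  simp only [hA]
  -- Step B : transform the outer variable
  set H : (Fin d → ℂ) → ℝ :=
    fun ψ => ∫ φ, bornP U x ψ * bornP U x (act U φ) * ‖cInner ψ (act U φ)‖ ^ 2 ∂ν with hH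
  have hHmeas : AEStronglyMeasurable H ν := by
    have hGm : StronglyMeasurable (fun p : (Fin d → ℂ) × (Fin d → ℂ) =>
        bornP U x p.1 * bornP U x (act U p.2) * ‖cInner p.1 (act U p.2)‖ ^ 2) := by
      apply Measurable.stronglyMeasurable
      exact hGmeas.comp (measurable_fst.prodMk ((meas_act U).comp measurable_snd))
    exact (hGm.integral_prod_right').aestronglyMeasurable
  have hB := transfer hd hμU U hU H hHmeas
  rw [← hB]
  have hptH : ∀ ψ : Fin d → ℂ, H (act U ψ)
      = ∫ φ, ‖ψ x‖ ^ 2 * ‖φ x‖ ^ 2 * ‖cInner ψ φ‖ ^ 2 ∂ν := by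
    intro ψ
    show ∫ φ, bornP U x (act U ψ) * bornP U x (act U φ)
        * ‖cInner (act U ψ) (act U φ)‖ ^ 2 ∂ν = _
    apply integral_congr_ae
    apply Filter.Eventually.of_forall
    intro φ
    simp only [hborn, hcin]
  simp only [hptH]
  rfl

end AFSS

/-- For a single measurement in the orthonormal basis given by the columns of a
unitary `U`, the Haar-averaged posterior-mean fidelity of the Bayesian mean
estimator over the Haar ensemble of pure states equals `(d + 3) / (d + 1)²`
independently of `U`:
`d · ∑ₓ ∫∫ |⟨U eₓ, ψ⟩|² |⟨U eₓ, φ⟩|² |⟨ψ, φ⟩|² dμ_d(φ) dμ_d(ψ) = (d+3)/(d+1)²`,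
i.e. the average risk (infidelity) equals exactly `1 − (d+3)/(d+1)²`. -/
theorem average_fidelity_single_shot_haar_basis {d : ℕ} (hd : 0 < d)
    (μU : Measure (Fin d → Fin d → ℂ)) (hμU : IsHaarUnitary μU)
    (U : Fin d → Fin d → ℂ) (hU : Matrix.of U ∈ Matrix.unitaryGroup (Fin d) ℂ) :
    (d : ℝ) *
        ∑ x : Fin d,
          ∫ ψ, ∫ φ, bornP U x ψ * bornP U x φ * ‖cInner ψ φ‖ ^ 2
              ∂(pureStateMeasure hd μU) ∂(pureStateMeasure hd μU)
      = (d + 3) / (d + 1) ^ 2 := by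
  have h1 : ∀ x : Fin d,
      (∫ ψ, ∫ φ, bornP U x ψ * bornP U x φ * ‖cInner ψ φ‖ ^ 2
          ∂(pureStateMeasure hd μU) ∂(pureStateMeasure hd μU))
        = ∑ i, (AFSS.Am hd μU x i) ^ 2 :=
    fun x => (AFSS.born_reduce hd hμU U hU x).trans (AFSS.double_moment hd hμU x)
  rw [Finset.sum_congr rfl (fun x _ => h1 x)]
  exact AFSS.Am_sq_sum hd hμU
end

section
/- For an ensemble (p, ρ) on a finite alphabet Γ with ρ_out positive definite, the Bayesian mean estimator under the pretty good measurement has the closed form: for every outcome x ∈ Γ, ρ̂_B(x) := Σ_{a ∈ Γ} (p_a Tr(E_x ρ_a) / Σ_{b} p_b Tr(E_x ρ_b)) · ρ_a = Σ_{a ∈ Γ} Tr(E_a ρ_x) · ρ_a. -/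
open Matrix
open scoped ComplexOrder

/-- The positive semidefinite square root of a positive semidefinite matrix
(removed from Mathlib; restored here with its former definition). -/
noncomputable def Matrix.PosSemidef.sqrt {n : Type*} {𝕜 : Type*} [Fintype n] [RCLike 𝕜]
    [DecidableEq n] {A : Matrix n n 𝕜} (hA : A.PosSemidef) : Matrix n n 𝕜 :=
  (hA.1.eigenvectorUnitary : Matrix n n 𝕜) *
    diagonal ((RCLike.ofReal : ℝ → 𝕜) ∘ Real.sqrt ∘ hA.1.eigenvalues) *
  (star hA.1.eigenvectorUnitary : Matrix n n 𝕜)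

/-- The `x`-th element `E_x = ρ_out^{-1/2} (p_x ρ_x) ρ_out^{-1/2}` of the pretty
good measurement associated with the ensemble `(p, ρ)`, where
`ρ_out = ∑ₐ pₐ ρₐ` and `ρ_out^{-1/2}` is the inverse of the positive
semidefinite square root of `ρ_out`. -/
noncomputable def pgm {n : ℕ} {Γ : Type*} [Fintype Γ]
    (p : Γ → ℝ) (ρ : Γ → Matrix (Fin n) (Fin n) ℂ)
    (hout : (∑ a, (p a : ℂ) • ρ a).PosSemidef) (x : Γ) :
    Matrix (Fin n) (Fin n) ℂ :=
  hout.sqrt⁻¹ * ((p x : ℂ) • ρ x) * hout.sqrt⁻¹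

/-- The Bayesian mean estimator under the pretty good measurement has the closed
form: for every outcome `x`,
`ρ̂_B(x) = ∑ₐ (pₐ Tr(E_x ρₐ) / ∑_b p_b Tr(E_x ρ_b)) ρₐ = ∑ₐ Tr(Eₐ ρ_x) ρₐ`. -/
theorem pgm_bayes_estimator_closed_form {n : ℕ} {Γ : Type*} [Fintype Γ]
    (p : Γ → ℝ) (hp : ∀ a, 0 < p a) (hsum : ∑ a, p a = 1)
    (ρ : Γ → Matrix (Fin n) (Fin n) ℂ)
    (hρ : ∀ a, (ρ a).PosSemidef) (htr : ∀ a, (ρ a).trace = 1)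
    (hpd : (∑ a, (p a : ℂ) • ρ a).PosDef) (x : Γ) :
    ∑ a, ((p a : ℂ) * (pgm p ρ hpd.posSemidef x * ρ a).trace /
          ∑ b, (p b : ℂ) * (pgm p ρ hpd.posSemidef x * ρ b).trace) • ρ a
      = ∑ a, (pgm p ρ hpd.posSemidef a * ρ x).trace • ρ a := by
  set S := hpd.posSemidef.sqrt with hS
  have hQ2 : S * S = ∑ a, (p a : ℂ) • ρ a := by
    conv_rhs => rw [hpd.posSemidef.1.spectral_theorem, Unitary.conjStarAlgAut_apply]
    rw [hS, Matrix.PosSemidef.sqrt]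
    simp only [Matrix.mul_assoc]
    rw [← Matrix.mul_assoc (star (↑hpd.posSemidef.1.eigenvectorUnitary : Matrix (Fin n) (Fin n) ℂ)),
      Unitary.star_mul_self_of_mem hpd.posSemidef.1.eigenvectorUnitary.2, Matrix.one_mul, ← Matrix.mul_assoc (diagonal _),
      diagonal_mul_diagonal]
    congr 3
    funext i
    simp only [Function.comp_apply, ← RCLike.ofReal_mul]
    rw [Real.mul_self_sqrt (hpd.posSemidef.eigenvalues_nonneg i)]
  have hdet : IsUnit S.det := by
    have h1 : IsUnit (∑ a, (p a : ℂ) • ρ a).det := hpd.isUnit.map (Matrix.detMonoidHom)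
    rw [← hQ2, Matrix.det_mul] at h1
    exact isUnit_of_mul_isUnit_left h1
  have hSQ : S⁻¹ * S = 1 := Matrix.nonsing_inv_mul S hdet
  have hQS : S * S⁻¹ = 1 := Matrix.mul_nonsing_inv S hdet
  -- the denominator equals p x
  have hden : ∑ b, (p b : ℂ) * (pgm p ρ hpd.posSemidef x * ρ b).trace = (p x : ℂ) := by
    have : ∑ b, (p b : ℂ) * (pgm p ρ hpd.posSemidef x * ρ b).trace
        = (pgm p ρ hpd.posSemidef x * ∑ b, (p b : ℂ) • ρ b).trace := by
      rw [Matrix.mul_sum, Matrix.trace_sum]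
      exact Finset.sum_congr rfl fun b _ => by
        rw [Matrix.mul_smul, Matrix.trace_smul, smul_eq_mul]
    have h2 : pgm p ρ hpd.posSemidef x * (∑ b, (p b : ℂ) • ρ b)
        = pgm p ρ hpd.posSemidef x * (S * S) := by rw [hQ2]
    rw [this, h2]
    unfold pgm
    rw [show S⁻¹ * ((p x : ℂ) • ρ x) * S⁻¹ * (S * S)
          = S⁻¹ * ((p x : ℂ) • ρ x) * (S⁻¹ * S * S) by noncomm_ring,
      hSQ, one_mul, Matrix.trace_mul_cycle, hQS, one_mul,
      Matrix.trace_smul, htr x, smul_eq_mul, mul_one]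
  rw [hden]
  refine Finset.sum_congr rfl fun a _ => ?_
  congr 1
  have hx : (p x : ℂ) ≠ 0 := by exact_mod_cast (hp x).ne'
  have htx : (pgm p ρ hpd.posSemidef x * ρ a).trace
      = (p x : ℂ) * (S⁻¹ * ρ x * S⁻¹ * ρ a).trace := by
    unfold pgm
    rw [show S⁻¹ * ((p x : ℂ) • ρ x) * S⁻¹ * ρ a
          = (p x : ℂ) • (S⁻¹ * ρ x * S⁻¹ * ρ a) by
        simp [Matrix.smul_mul, Matrix.mul_smul],
      Matrix.trace_smul, smul_eq_mul]
  have hta : (pgm p ρ hpd.posSemidef a * ρ x).trace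
      = (p a : ℂ) * (S⁻¹ * ρ a * S⁻¹ * ρ x).trace := by
    unfold pgm
    rw [show S⁻¹ * ((p a : ℂ) • ρ a) * S⁻¹ * ρ x
          = (p a : ℂ) • (S⁻¹ * ρ a * S⁻¹ * ρ x) by
        simp [Matrix.smul_mul, Matrix.mul_smul],
      Matrix.trace_smul, smul_eq_mul]
  have hcyc : (S⁻¹ * ρ x * S⁻¹ * ρ a).trace = (S⁻¹ * ρ a * S⁻¹ * ρ x).trace := by
    rw [show S⁻¹ * ρ x * S⁻¹ * ρ a = (S⁻¹ * ρ x) * (S⁻¹ * ρ a) by noncomm_ring,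
      Matrix.trace_mul_comm, ← Matrix.mul_assoc]
  rw [htx, hta, hcyc]
  field_simp
end

section
/- Fix an integer d ≥ 1 and unit vectors u, v ∈ ℂ^d. Then ∫ |⟨u, φ⟩|² · |⟨v, φ⟩|² dμ_d(φ) = (1 + |⟨u, v⟩|²) / (d(d+1)). -/
open MeasureTheory Matrix
open ComplexConjugate

namespace HaarSM

variable {d : ℕ}

noncomputable def M (ν : Measure (Fin d → ℂ)) (i j k l : Fin d) : ℂ :=
  ∫ φ, φ i * conj (φ j) * (φ k * conj (φ l)) ∂ν

structure Nice (ν : Measure (Fin d → ℂ)) : Prop where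
  prob : IsProbabilityMeasure ν
  nrm : ∀ᵐ φ ∂ν, ∑ i, ‖φ i‖ ^ 2 = 1
  inv : ∀ V ∈ Matrix.unitaryGroup (Fin d) ℂ,
    ν.map (fun φ i => ∑ j, V i j * φ j) = ν

lemma measConj : Measurable (starRingEnd ℂ) := RCLike.continuous_conj.measurable

lemma meas4 (i j k l : Fin d) :
    Measurable (fun φ : Fin d → ℂ => φ i * conj (φ j) * (φ k * conj (φ l))) :=
  ((measurable_pi_apply i).mul (measConj.comp (measurable_pi_apply j))).mul
    ((measurable_pi_apply k).mul (measConj.comp (measurable_pi_apply l)))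

lemma meas2 (i j : Fin d) :
    Measurable (fun φ : Fin d → ℂ => φ i * conj (φ j)) :=
  (measurable_pi_apply i).mul (measConj.comp (measurable_pi_apply j))

lemma measL (V : Matrix (Fin d) (Fin d) ℂ) :
    Measurable (fun (φ : Fin d → ℂ) i => ∑ j, V i j * φ j) := by fun_prop

variable {ν : Measure (Fin d → ℂ)}

lemma bdd (hν : Nice ν) : ∀ᵐ φ ∂ν, ∀ x, ‖φ x‖ ≤ 1 := by
  filter_upwards [hν.nrm] with φ h x
  have h1 : ‖φ x‖ ^ 2 ≤ 1 := by
    rw [← h]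
    exact Finset.single_le_sum (f := fun i => ‖φ i‖ ^ 2)
      (fun i _ => by positivity) (Finset.mem_univ x)
  nlinarith [norm_nonneg (φ x)]

lemma integrable4 (hν : Nice ν) (i j k l : Fin d) :
    Integrable (fun φ : Fin d → ℂ => φ i * conj (φ j) * (φ k * conj (φ l))) ν := by
  have := hν.prob
  refine Integrable.mono' (integrable_const 1) (meas4 i j k l).aestronglyMeasurable ?_
  filter_upwards [bdd hν] with φ h
  calc ‖φ i * conj (φ j) * (φ k * conj (φ l))‖
      = ‖φ i‖ * ‖φ j‖ * (‖φ k‖ * ‖φ l‖) := by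
        simp [norm_mul]
    _ ≤ 1 * 1 * (1 * 1) := by
        gcongr <;> first | exact h _ | positivity
    _ = 1 := by norm_num

lemma integrable2 (hν : Nice ν) (i j : Fin d) :
    Integrable (fun φ : Fin d → ℂ => φ i * conj (φ j)) ν := by
  have := hν.prob
  refine Integrable.mono' (integrable_const 1) (meas2 i j).aestronglyMeasurable ?_
  filter_upwards [bdd hν] with φ h
  calc ‖φ i * conj (φ j)‖ = ‖φ i‖ * ‖φ j‖ := by simp [norm_mul]
    _ ≤ 1 * 1 := by gcongr <;> first | exact h _ | positivity
    _ = 1 := by norm_num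

lemma cov (hν : Nice ν) {V : Matrix (Fin d) (Fin d) ℂ}
    (hV : V ∈ Matrix.unitaryGroup (Fin d) ℂ) {g : (Fin d → ℂ) → ℂ}
    (hg : AEStronglyMeasurable g ν) :
    ∫ φ, g φ ∂ν = ∫ φ, g (fun i => ∑ j, V i j * φ j) ∂ν := by
  conv_lhs => rw [← hν.inv V hV]
  rw [integral_map (measL V).aemeasurable]
  rw [hν.inv V hV]; exact hg

lemma covPerm (hν : Nice ν) (σ : Equiv.Perm (Fin d)) {g : (Fin d → ℂ) → ℂ}
    (hg : AEStronglyMeasurable g ν) :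
    ∫ φ, g φ ∂ν = ∫ φ, g (fun x => φ (σ x)) ∂ν := by
  set P : Matrix (Fin d) (Fin d) ℂ := Matrix.of fun i j => if j = σ i then 1 else 0 with hP
  have hPU : P ∈ Matrix.unitaryGroup (Fin d) ℂ := by
    rw [Matrix.mem_unitaryGroup_iff']
    ext j k
    simp only [Matrix.mul_apply, Matrix.conjTranspose_apply, hP, Matrix.of_apply,
      Matrix.one_apply]
    rw [Finset.sum_eq_single (σ.symm j)]
    · simp [eq_comm]
    · intro b _ hb
      have : j ≠ σ b := fun hc => hb (by simp [hc])
      simp [this]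
    · simp
  have h := cov hν hPU hg
  rw [h]
  congr 1
  ext φ
  congr 1
  ext x
  simp [hP, ite_mul, Finset.sum_ite_eq']

lemma permM (hν : Nice ν) (σ : Equiv.Perm (Fin d)) (i j k l : Fin d) :
    M ν i j k l = M ν (σ i) (σ j) (σ k) (σ l) := by
  have h := covPerm hν σ (g := fun φ => φ i * conj (φ j) * (φ k * conj (φ l)))
    (meas4 i j k l).aestronglyMeasurable
  simpa [M] using h

lemma cancel {c z : ℂ} (hc : c ≠ 1) (h : z = c * z) : z = 0 := by
  have h0 : (1 - c) * z = 0 := by linear_combination h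
  rcases mul_eq_zero.mp h0 with h' | h'
  · exact absurd (by linear_combination -h' : c = 1) hc
  · exact h'

lemma phase_ne_one {α : Type*} [DecidableEq α] {i j k l a : α}
    (h : ((if i = a then 1 else 0) + (if k = a then 1 else 0) : ℕ)
       ≠ (if j = a then 1 else 0) + (if l = a then 1 else 0)) :
    (if i = a then Complex.I else 1) * conj (if j = a then Complex.I else 1) *
      ((if k = a then Complex.I else 1) * conj (if l = a then Complex.I else 1)) ≠ 1 := by
  by_cases h1 : i = a <;> by_cases h2 : j = a <;> by_cases h3 : k = a <;> by_cases h4 : l = a <;>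
    simp only [h1, h2, h3, h4, eq_self_iff_true, if_true, if_false, ite_true, ite_false,
      _root_.map_one, Complex.conj_I, one_mul, mul_one] at h ⊢ <;>
    first
      | omega
      | norm_num [Complex.ext_iff]

lemma phaseM (hν : Nice ν) {i j k l a : Fin d}
    (h : ((if i = a then 1 else 0) + (if k = a then 1 else 0) : ℕ)
       ≠ (if j = a then 1 else 0) + (if l = a then 1 else 0)) :
    M ν i j k l = 0 := by
  set e : Fin d → ℂ := fun x => if x = a then Complex.I else 1 with he
  have heu : (fun x => star e x * e x) = fun _ => (1 : ℂ) := by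
    funext x
    show star (e x) * e x = 1
    by_cases hx : x = a <;> simp [he, hx, Complex.conj_I]
  set D : Matrix (Fin d) (Fin d) ℂ := Matrix.diagonal e with hD
  have hDU : D ∈ Matrix.unitaryGroup (Fin d) ℂ := by
    rw [Matrix.mem_unitaryGroup_iff']
    rw [hD, Matrix.star_eq_conjTranspose, Matrix.diagonal_conjTranspose,
      Matrix.diagonal_mul_diagonal]
    rw [heu, Matrix.diagonal_one]
  have happ : ∀ (φ : Fin d → ℂ) (x : Fin d), (∑ y, D x y * φ y) = e x * φ x := by
    intro φ x
    simp [hD, Matrix.diagonal, ite_mul, Finset.sum_ite_eq]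
  have hcov := cov hν hDU (g := fun φ => φ i * conj (φ j) * (φ k * conj (φ l)))
    (meas4 i j k l).aestronglyMeasurable
  have key : M ν i j k l = (e i * conj (e j) * (e k * conj (e l))) * M ν i j k l := by
    conv_lhs => rw [M, hcov]
    have h2 : ∀ φ : Fin d → ℂ,
        ((fun i' => ∑ j', D i' j' * φ j') i * conj ((fun i' => ∑ j', D i' j' * φ j') j) *
          ((fun i' => ∑ j', D i' j' * φ j') k * conj ((fun i' => ∑ j', D i' j' * φ j') l)))
        = (e i * conj (e j) * (e k * conj (e l))) *
            (φ i * conj (φ j) * (φ k * conj (φ l))) := by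
      intro φ
      simp only [happ, _root_.map_mul]
      ring
    rw [integral_congr_ae (Filter.Eventually.of_forall h2), integral_const_mul, M]
  refine cancel ?_ key
  simp only [he]
  exact phase_ne_one h

lemma mul_conj_eq (z : ℂ) : z * conj z = ((‖z‖ ^ 2 : ℝ) : ℂ) := by
  rw [Complex.mul_conj, Complex.normSq_eq_norm_sq]

lemma sum_sq_one (hν : Nice ν) : ∀ᵐ φ ∂ν, ∑ x, φ x * conj (φ x) = 1 := by
  filter_upwards [hν.nrm] with φ h
  simp only [mul_conj_eq, ← Complex.ofReal_sum, h, Complex.ofReal_one]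

lemma T_eq (hν : Nice ν) (i : Fin d) :
    ∫ φ, φ i * conj (φ i) ∂ν = 1 / d := by
  have hTeq : ∀ x : Fin d, ∫ φ, φ x * conj (φ x) ∂ν = ∫ φ, φ i * conj (φ i) ∂ν := by
    intro x
    have h := covPerm hν (Equiv.swap i x) (g := fun φ => φ x * conj (φ x))
      (meas2 x x).aestronglyMeasurable
    simpa [Equiv.swap_apply_right] using h
  have hsum : ∑ x : Fin d, ∫ φ, φ x * conj (φ x) ∂ν = 1 := by
    rw [← integral_finset_sum _ (fun x _ => integrable2 hν x x)]
    have := hν.prob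
    rw [integral_congr_ae (sum_sq_one hν), integral_const]
    simp
  rw [Finset.sum_congr rfl (fun x _ => hTeq x), Finset.sum_const, Finset.card_univ,
    Fintype.card_fin, nsmul_eq_mul] at hsum
  have hd0 : (d : ℂ) ≠ 0 := Nat.cast_ne_zero.mpr i.pos.ne'
  field_simp
  linear_combination hsum

lemma sumk (hν : Nice ν) (i : Fin d) : ∑ k, M ν i i k k = 1 / d := by
  calc ∑ k, M ν i i k k
      = ∫ φ, ∑ k, φ i * conj (φ i) * (φ k * conj (φ k)) ∂ν :=
        (integral_finset_sum _ (fun k _ => integrable4 hν i i k k)).symm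
    _ = ∫ φ, φ i * conj (φ i) ∂ν := by
        apply integral_congr_ae
        filter_upwards [sum_sq_one hν] with φ h
        rw [← Finset.mul_sum, h, mul_one]
    _ = 1 / d := T_eq hν i

lemma pair_perm {i k i' k' : Fin d} (h : i ≠ k) (h' : i' ≠ k') :
    ∃ σ : Equiv.Perm (Fin d), σ i = i' ∧ σ k = k' := by
  set s := Equiv.swap i i' with hs
  have hsk : s k ≠ i' := by
    intro hc
    have h2 := congrArg s hc
    rw [Equiv.swap_apply_self, Equiv.swap_apply_right] at h2
    exact h h2.symm
  refine ⟨s.trans (Equiv.swap (s k) k'), ?_, ?_⟩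
  · show Equiv.swap (s k) k' (s i) = i'
    rw [show s i = i' from Equiv.swap_apply_left i i']
    exact Equiv.swap_apply_of_ne_of_ne (Ne.symm hsk) h'
  · show Equiv.swap (s k) k' (s k) = k'
    exact Equiv.swap_apply_left _ _

lemma sum_split {β : Type*} [AddCommMonoid β] {e0 e1 : Fin d} (hne : e0 ≠ e1) (f : Fin d → β) :
    ∑ i, f i = f e0 + (f e1 + ∑ i ∈ (Finset.univ.erase e0).erase e1, f i) := by
  rw [Finset.add_sum_erase _ f (Finset.mem_erase.mpr ⟨hne.symm, Finset.mem_univ e1⟩),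
    Finset.add_sum_erase _ f (Finset.mem_univ e0)]

lemma mem_s {e0 e1 i : Fin d} (h : i ∈ (Finset.univ.erase e0).erase e1) :
    i ≠ e0 ∧ i ≠ e1 := by
  rw [Finset.mem_erase, Finset.mem_erase] at h
  exact ⟨h.2.1, h.1⟩

noncomputable def rc : ℂ := ((Real.sqrt 2)⁻¹ : ℝ)

lemma rc_conj : conj rc = rc := Complex.conj_ofReal _

lemma rc_sq : rc * rc = 1 / 2 := by
  rw [rc, ← Complex.ofReal_mul]
  have h : ((Real.sqrt 2)⁻¹ * (Real.sqrt 2)⁻¹ : ℝ) = 1 / 2 := by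
    rw [← mul_inv, Real.mul_self_sqrt (by norm_num : (0:ℝ) ≤ 2)]
    norm_num
  rw [h]
  norm_num

noncomputable def Hmat (e0 e1 : Fin d) : Matrix (Fin d) (Fin d) ℂ :=
  Matrix.of fun i j =>
    if i = e0 then (if j = e0 then rc else if j = e1 then rc else 0)
    else if i = e1 then (if j = e0 then rc else if j = e1 then -rc else 0)
    else (if j = i then 1 else 0)

lemma Hmat_apply_other {e0 e1 i j : Fin d} (h0 : i ≠ e0) (h1 : i ≠ e1) :
    Hmat e0 e1 i j = if j = i then 1 else 0 := by
  simp [Hmat, h0, h1]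

lemma sum_diag {s : Finset (Fin d)} (j k : Fin d) :
    (∑ i ∈ s, star (if j = i then (1:ℂ) else 0) * (if k = i then 1 else 0))
      = if j = k ∧ j ∈ s then 1 else 0 := by
  simp only [apply_ite (star : ℂ → ℂ), star_one, star_zero, ite_mul, one_mul, zero_mul,
    Finset.sum_ite_eq]
  by_cases h1 : j ∈ s <;> by_cases h2 : j = k <;> simp [h1, h2] <;> simp [eq_comm, h2]

lemma Hmat_unitary {e0 e1 : Fin d} (hne : e0 ≠ e1) :
    Hmat e0 e1 ∈ Matrix.unitaryGroup (Fin d) ℂ := by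
  rw [Matrix.mem_unitaryGroup_iff']
  ext j k
  rw [Matrix.mul_apply]
  simp only [Matrix.star_apply, Matrix.one_apply]
  rw [sum_split hne]
  have hres : ∑ i ∈ (Finset.univ.erase e0).erase e1, star (Hmat e0 e1 i j) * Hmat e0 e1 i k
      = if j = k ∧ j ∈ (Finset.univ.erase e0).erase e1 then 1 else 0 := by
    rw [← sum_diag j k]
    refine Finset.sum_congr rfl fun i hi => ?_
    rw [Hmat_apply_other (mem_s hi).1 (mem_s hi).2,
      Hmat_apply_other (mem_s hi).1 (mem_s hi).2]
  rw [hres]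
  by_cases hj0 : j = e0 <;> by_cases hj1 : j = e1 <;> by_cases hk0 : k = e0 <;>
    by_cases hk1 : k = e1
  all_goals
    first
      | exact absurd (hj0.symm.trans hj1) hne
      | exact absurd (hk0.symm.trans hk1) hne
      | (simp [Hmat, hne, Ne.symm hne, hj0, hj1, hk0, hk1, Complex.star_def, rc_conj,
           Finset.mem_erase, eq_comm] <;>
         first
           | linear_combination 2 * rc_sq
           | linear_combination rc_sq
           | ring1
           | simp [Ne.symm hk0, Ne.symm hk1]
           | simp [Ne.symm hj0, Ne.symm hj1]
           | simp [Ne.symm hj0, Ne.symm hj1, Ne.symm hk0, Ne.symm hk1]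
           | skip)

lemma Hmat_row0 {e0 e1 : Fin d} (hne : e0 ≠ e1) (φ : Fin d → ℂ) :
    (∑ j, Hmat e0 e1 e0 j * φ j) = rc * (φ e0 + φ e1) := by
  rw [sum_split hne]
  have h0 : Hmat e0 e1 e0 e0 = rc := by simp [Hmat]
  have h1 : Hmat e0 e1 e0 e1 = rc := by simp [Hmat, Ne.symm hne]
  have hz : ∀ i ∈ (Finset.univ.erase e0).erase e1, Hmat e0 e1 e0 i * φ i = 0 := by
    intro i hi
    simp [Hmat, (mem_s hi).1, (mem_s hi).2]
  rw [Finset.sum_congr rfl hz, Finset.sum_const, smul_zero, h0, h1]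
  ring

lemma Hmat_row1 {e0 e1 : Fin d} (hne : e0 ≠ e1) (φ : Fin d → ℂ) :
    (∑ j, Hmat e0 e1 e1 j * φ j) = rc * (φ e0 - φ e1) := by
  rw [sum_split hne]
  have h0 : Hmat e0 e1 e1 e0 = rc := by simp [Hmat, Ne.symm hne]
  have h1 : Hmat e0 e1 e1 e1 = -rc := by simp [Hmat, Ne.symm hne]
  have hz : ∀ i ∈ (Finset.univ.erase e0).erase e1, Hmat e0 e1 e1 i * φ i = 0 := by
    intro i hi
    simp [Hmat, (mem_s hi).1, (mem_s hi).2, Ne.symm hne]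
  rw [Finset.sum_congr rfl hz, Finset.sum_const, smul_zero, h0, h1]
  ring

lemma had (hν : Nice ν) {e0 e1 : Fin d} (hne : e0 ≠ e1) :
    M ν e0 e0 e0 e0 = 2 * M ν e0 e0 e1 e1 := by
  have hcov := cov hν (Hmat_unitary hne)
    (g := fun φ => φ e0 * conj (φ e0) * (φ e1 * conj (φ e1)))
    (meas4 e0 e0 e1 e1).aestronglyMeasurable
  have hpt : ∀ φ : Fin d → ℂ,
      (fun i => ∑ j, Hmat e0 e1 i j * φ j) e0 * conj ((fun i => ∑ j, Hmat e0 e1 i j * φ j) e0) *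
        ((fun i => ∑ j, Hmat e0 e1 i j * φ j) e1 * conj ((fun i => ∑ j, Hmat e0 e1 i j * φ j) e1))
      = (rc * rc * (rc * rc)) *
        (φ e0 * conj (φ e0) * (φ e0 * conj (φ e0))
          - φ e0 * conj (φ e1) * (φ e0 * conj (φ e1))
          - φ e1 * conj (φ e0) * (φ e1 * conj (φ e0))
          + φ e1 * conj (φ e1) * (φ e1 * conj (φ e1))) := by
    intro φ
    simp only [Hmat_row0 hne, Hmat_row1 hne, _root_.map_mul, map_add, map_sub, rc_conj]
    ring
  have h2 : M ν e0 e0 e1 e1 = (rc * rc * (rc * rc)) *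
      (M ν e0 e0 e0 e0 - M ν e0 e1 e0 e1 - M ν e1 e0 e1 e0 + M ν e1 e1 e1 e1) := by
    conv_lhs => rw [M, hcov]
    rw [integral_congr_ae (Filter.Eventually.of_forall hpt), integral_const_mul]
    congr 1
    rw [integral_add ?h1 ?h2, integral_sub ?h3 ?h4, integral_sub ?h5 ?h6]
    case h2 => exact integrable4 hν e1 e1 e1 e1
    case h4 => exact integrable4 hν e1 e0 e1 e0
    case h6 => exact integrable4 hν e0 e1 e0 e1
    case h5 => exact integrable4 hν e0 e0 e0 e0
    case h3 => refine Integrable.sub ?_ ?_ <;> apply integrable4 hν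
    case h1 => refine Integrable.sub (Integrable.sub ?_ ?_) ?_ <;> apply integrable4 hν
    rfl
  have hz1 : M ν e0 e1 e0 e1 = 0 := phaseM hν (a := e0) (by simp [Ne.symm hne])
  have hz2 : M ν e1 e0 e1 e0 = 0 := phaseM hν (a := e0) (by simp [Ne.symm hne])
  have hA' : M ν e1 e1 e1 e1 = M ν e0 e0 e0 e0 := by
    have h := permM hν (Equiv.swap e0 e1) e0 e0 e0 e0
    rw [Equiv.swap_apply_left] at h
    exact h.symm
  rw [hz1, hz2, hA'] at h2
  have hq : rc * rc * (rc * rc) = 1 / 4 := by rw [rc_sq]; norm_num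
  rw [hq] at h2
  linear_combination -2 * h2

lemma Bval (hν : Nice ν) {i k : Fin d} (h : i ≠ k) :
    M ν i i k k = 1 / (d * (d + 1)) := by
  have hBeq : ∀ x : Fin d, x ≠ i → M ν i i x x = M ν i i k k := by
    intro x hx
    obtain ⟨σ, h1, h2⟩ := pair_perm (Ne.symm hx) h
    rw [permM hν σ i i x x, h1, h2]
  have hsum := sumk hν i
  have herase : ∑ x ∈ Finset.univ.erase i, M ν i i x x = ((d - 1 : ℕ) : ℂ) * M ν i i k k := by
    rw [Finset.sum_congr rfl (fun x hx => hBeq x (Finset.mem_erase.mp hx).1), Finset.sum_const,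
      Finset.card_erase_of_mem (Finset.mem_univ i), Finset.card_univ, Fintype.card_fin,
      nsmul_eq_mul]
  rw [← Finset.add_sum_erase _ _ (Finset.mem_univ i), herase, had hν h] at hsum
  have hd2 : 2 ≤ d := by
    have := Fintype.one_lt_card_iff.mpr ⟨i, k, h⟩
    simp at this; omega
  have hd0 : (d : ℂ) ≠ 0 := Nat.cast_ne_zero.mpr (by omega)
  have hd1 : ((d : ℂ) + 1) ≠ 0 := by
    have : ((d + 1 : ℕ) : ℂ) ≠ 0 := Nat.cast_ne_zero.mpr (by omega)
    push_cast at this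
    exact this
  have hcast : ((d - 1 : ℕ) : ℂ) = (d : ℂ) - 1 := by
    rw [Nat.cast_sub (by omega)]
    simp
  rw [hcast] at hsum
  rw [eq_div_iff (mul_ne_zero hd0 hd1)]
  field_simp at hsum
  linear_combination hsum

lemma Aval (hν : Nice ν) (i : Fin d) : M ν i i i i = 2 / (d * (d + 1)) := by
  by_cases hd1 : ∀ k : Fin d, k = i
  · have huniv : (Finset.univ : Finset (Fin d)) = {i} := by
      ext x; simp [hd1 x]
    have hde : d = 1 := by
      have h2 := congrArg Finset.card huniv
      simpa using h2
    have hs := sumk hν i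
    rw [huniv, Finset.sum_singleton] at hs
    rw [hs]
    subst hde
    norm_num
  · push_neg at hd1
    obtain ⟨k, hk⟩ := hd1
    rw [had hν (Ne.symm hk), Bval hν (Ne.symm hk)]
    ring

lemma moment (hν : Nice ν) (i j k l : Fin d) :
    M ν i j k l = ((if i = j then 1 else 0) * (if k = l then 1 else 0)
      + (if i = l then 1 else 0) * (if k = j then 1 else 0)) / (d * (d + 1)) := by
  by_cases h1 : i = j ∧ k = l <;> by_cases h2 : i = l ∧ k = j
  · obtain ⟨rfl, rfl⟩ := h1
    obtain ⟨rfl, -⟩ := h2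
    rw [Aval hν]
    norm_num
  · obtain ⟨rfl, rfl⟩ := h1
    have hik : i ≠ k := fun hc => h2 ⟨hc, hc.symm⟩
    rw [Bval hν hik]
    simp [hik, Ne.symm hik]
  · obtain ⟨rfl, rfl⟩ := h2
    have hik : i ≠ k := fun hc => h1 ⟨hc, hc.symm⟩
    have hsw : M ν i k k i = M ν i i k k := by
      rw [M, M]
      exact integral_congr_ae (Filter.Eventually.of_forall fun φ => by ring)
    rw [hsw, Bval hν hik]
    simp [hik, Ne.symm hik]
  · have h0 : M ν i j k l = 0 := by
      by_cases hji : j = i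
      · have hkl : k ≠ l := fun hc => h1 ⟨hji.symm, hc⟩
        apply phaseM hν (a := k)
        by_cases hik : i = k <;> simp [hji, hik, Ne.symm hkl]
      · by_cases hli : l = i
        · have hkj : k ≠ j := fun hc => h2 ⟨hli.symm, hc⟩
          apply phaseM hν (a := k)
          by_cases hik : i = k <;> simp [hli, hik, Ne.symm hkj]
        · apply phaseM hν (a := i)
          by_cases hki : k = i <;> simp [hki, hji, hli]
    rw [h0]
    rcases not_and_or.mp h1 with h | h <;> rcases not_and_or.mp h2 with h' | h' <;>
      simp [h, h']

end HaarSM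

open HaarSM

lemma cInner_def {d : ℕ} (u φ : Fin d → ℂ) : cInner u φ = ∑ i, conj (u i) * φ i := rfl

lemma prod_sum_expand {d : ℕ} (P Q : Fin d → Fin d → ℂ) :
    (∑ i, ∑ j, P i j) * (∑ k, ∑ l, Q k l)
      = ∑ i, ∑ j, ∑ k, ∑ l, P i j * Q k l := by
  rw [Finset.sum_mul_sum]
  refine Finset.sum_congr rfl fun i _ => ?_
  rw [Finset.sum_congr rfl fun k (_ : k ∈ Finset.univ) =>
    Finset.sum_mul_sum Finset.univ Finset.univ (P i) (Q k)]
  exact Finset.sum_comm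

lemma measC {d : ℕ} (hd : 0 < d) :
    Measurable (fun (U : Fin d → Fin d → ℂ) i => U i ⟨0, hd⟩) :=
  measurable_pi_lambda _ fun i => (measurable_pi_apply _).comp (measurable_pi_apply i)

lemma nice_pureState {d : ℕ} (hd : 0 < d) (μU : Measure (Fin d → Fin d → ℂ))
    (hμU : IsHaarUnitary μU) : Nice (pureStateMeasure hd μU) := by
  obtain ⟨hprob, hsupp, hinv⟩ := hμU
  set x0 : Fin d := ⟨0, hd⟩
  constructor
  · exact Measure.isProbabilityMeasure_map (measC hd).aemeasurable
  · rw [pureStateMeasure, MeasureTheory.ae_map_iff (measC hd).aemeasurable]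
    · filter_upwards [hsupp] with U hU
      have h := Matrix.mem_unitaryGroup_iff'.mp hU
      have h2 : (star (Matrix.of U) * Matrix.of U) x0 x0 = 1 := by rw [h]; simp
      rw [Matrix.mul_apply] at h2
      simp only [Matrix.star_apply, Matrix.of_apply] at h2
      have h3 : ((∑ i, ‖U i x0‖ ^ 2 : ℝ) : ℂ) = 1 := by
        push_cast
        rw [← h2]
        refine Finset.sum_congr rfl fun i _ => ?_
        have hm : star (U i x0) * U i x0 = ((‖U i x0‖ ^ 2 : ℝ) : ℂ) := by
          rw [mul_comm]
          exact mul_conj_eq _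
        rw [hm]
        norm_cast
      exact_mod_cast h3
    · have hgm : Measurable fun φ : Fin d → ℂ => ∑ i, ‖φ i‖ ^ 2 :=
        Finset.measurable_sum _ fun i _ => ((measurable_pi_apply i).norm).pow_const 2
      exact hgm (measurableSet_singleton 1)
  · intro V hV
    have hmul : (fun U : Fin d → Fin d → ℂ => Matrix.of.symm (V * Matrix.of U))
        = fun U i j => ∑ k, V i k * U k j := by
      funext U i j
      show (V * Matrix.of U) i j = _
      rw [Matrix.mul_apply]
      rfl
    have hT : Measurable (fun U : Fin d → Fin d → ℂ => Matrix.of.symm (V * Matrix.of U)) := by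
      rw [hmul]
      exact measurable_pi_lambda _ fun i => measurable_pi_lambda _ fun j =>
        Finset.measurable_sum _ fun k _ =>
          (measurable_const.mul ((measurable_pi_apply j).comp (measurable_pi_apply k)))
    rw [pureStateMeasure, Measure.map_map (measL V) (measC hd)]
    have hcomp : ((fun (φ : Fin d → ℂ) i => ∑ j, V i j * φ j) ∘ (fun U i => U i x0))
        = (fun U i => U i x0) ∘ (fun U : Fin d → Fin d → ℂ => Matrix.of.symm (V * Matrix.of U)) := by
      rw [hmul]
      funext U
      rfl
    rw [hcomp, ← Measure.map_map (measC hd) hT, hinv V hV]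


/-- For unit vectors `u, v ∈ ℂ^d`,
`∫ |⟨u, φ⟩|² |⟨v, φ⟩|² dμ_d(φ) = (1 + |⟨u, v⟩|²) / (d (d + 1))`. -/
theorem haar_second_moment_overlap {d : ℕ} (hd : 0 < d)
    (μU : Measure (Fin d → Fin d → ℂ)) (hμU : IsHaarUnitary μU)
    (u v : Fin d → ℂ) (hu : ∑ i, ‖u i‖ ^ 2 = 1) (hv : ∑ i, ‖v i‖ ^ 2 = 1) :
    ∫ φ, ‖cInner u φ‖ ^ 2 * ‖cInner v φ‖ ^ 2 ∂(pureStateMeasure hd μU)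
      = (1 + ‖cInner u v‖ ^ 2) / (d * (d + 1)) := by

  have hν : Nice (pureStateMeasure hd μU) := nice_pureState hd μU hμU
  set ν := pureStateMeasure hd μU with hνdef
  set co : Fin d → Fin d → Fin d → Fin d → ℂ :=
    fun i j k l => conj (u i) * u j * (conj (v k) * v l) with hco
  have hconj : ∀ (w φ : Fin d → ℂ), conj (cInner w φ) = ∑ j, w j * conj (φ j) := by
    intro w φ
    rw [cInner_def, map_sum]
    exact Finset.sum_congr rfl fun j _ => by rw [_root_.map_mul, Complex.conj_conj]
  have hexp : ∀ φ : Fin d → ℂ,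
      cInner u φ * conj (cInner u φ) * (cInner v φ * conj (cInner v φ))
        = ∑ i, ∑ j, ∑ k, ∑ l, co i j k l * (φ i * conj (φ j) * (φ k * conj (φ l))) := by
    intro φ
    rw [hconj, hconj, cInner_def, cInner_def]
    rw [Finset.sum_mul_sum Finset.univ Finset.univ (fun i => conj (u i) * φ i)
      (fun j => u j * conj (φ j)),
      Finset.sum_mul_sum Finset.univ Finset.univ (fun k => conj (v k) * φ k)
      (fun l => v l * conj (φ l)),
      prod_sum_expand]
    refine Finset.sum_congr rfl fun i _ => Finset.sum_congr rfl fun j _ =>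
      Finset.sum_congr rfl fun k _ => Finset.sum_congr rfl fun l _ => ?_
    simp only [hco]
    ring
  have hFint : Integrable
      (fun φ => cInner u φ * conj (cInner u φ) * (cInner v φ * conj (cInner v φ))) ν := by
    rw [show (fun φ => cInner u φ * conj (cInner u φ) * (cInner v φ * conj (cInner v φ)))
        = fun φ => ∑ i, ∑ j, ∑ k, ∑ l, co i j k l * (φ i * conj (φ j) * (φ k * conj (φ l)))
      from funext hexp]
    exact integrable_finset_sum _ fun i _ => integrable_finset_sum _ fun j _ =>
      integrable_finset_sum _ fun k _ => integrable_finset_sum _ fun l _ =>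
        (integrable4 hν i j k l).const_mul _
  have hkey : ∫ φ, cInner u φ * conj (cInner u φ) * (cInner v φ * conj (cInner v φ)) ∂ν
      = ∑ i, ∑ j, ∑ k, ∑ l, co i j k l * M ν i j k l := by
    rw [integral_congr_ae (Filter.Eventually.of_forall hexp)]
    rw [integral_finset_sum _ (fun i _ => integrable_finset_sum _ fun j _ =>
      integrable_finset_sum _ fun k _ => integrable_finset_sum _ fun l _ =>
        (integrable4 hν i j k l).const_mul _)]
    refine Finset.sum_congr rfl fun i _ => ?_
    rw [integral_finset_sum _ (fun j _ => integrable_finset_sum _ fun k _ =>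
      integrable_finset_sum _ fun l _ => (integrable4 hν i j k l).const_mul _)]
    refine Finset.sum_congr rfl fun j _ => ?_
    rw [integral_finset_sum _ (fun k _ => integrable_finset_sum _ fun l _ =>
      (integrable4 hν i j k l).const_mul _)]
    refine Finset.sum_congr rfl fun k _ => ?_
    rw [integral_finset_sum _ (fun l _ => (integrable4 hν i j k l).const_mul _)]
    refine Finset.sum_congr rfl fun l _ => ?_
    rw [integral_const_mul]
    rfl
  have hone : ∀ (w : Fin d → ℂ), (∑ i, ‖w i‖ ^ 2 = 1) → ∑ i, conj (w i) * w i = 1 := by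
    intro w hw
    have hterm : ∀ i, conj (w i) * w i = ((‖w i‖ ^ 2 : ℝ) : ℂ) := fun i => by
      rw [mul_comm, mul_conj_eq]
    rw [Finset.sum_congr rfl fun i _ => hterm i, ← Complex.ofReal_sum, hw, Complex.ofReal_one]
  have hS1 : ∑ i, ∑ j, ∑ k, ∑ l,
      co i j k l * ((if i = j then (1:ℂ) else 0) * (if k = l then 1 else 0)) = 1 := by
    have h1 : ∀ i j k l : Fin d,
        co i j k l * ((if i = j then (1:ℂ) else 0) * (if k = l then 1 else 0))
          = (if i = j then conj (u i) * u j else 0) * (if k = l then conj (v k) * v l else 0) := by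
      intro i j k l
      simp only [hco]
      split_ifs <;> ring
    simp only [h1]
    have h2 : ∑ i, ∑ j, ∑ k, ∑ l,
        (if i = j then conj (u i) * u j else 0) * (if k = l then conj (v k) * v l else 0)
        = (∑ i, ∑ j, if i = j then conj (u i) * u j else 0)
          * (∑ k, ∑ l, if k = l then conj (v k) * v l else 0) :=
      (prod_sum_expand _ _).symm
    rw [h2]
    have hcol : ∀ (w : Fin d → ℂ), (∑ k, ∑ l, if k = l then conj (w k) * w l else 0)
        = ∑ k, conj (w k) * w k := by
      intro w
      refine Finset.sum_congr rfl fun k _ => ?_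
      rw [Finset.sum_ite_eq]
      simp
    rw [hcol, hcol, hone u hu, hone v hv, one_mul]
  have hS2 : ∑ i, ∑ j, ∑ k, ∑ l,
      co i j k l * ((if i = l then (1:ℂ) else 0) * (if k = j then 1 else 0))
        = ((‖cInner u v‖ ^ 2 : ℝ) : ℂ) := by
    have h1 : ∀ i j k l : Fin d,
        co i j k l * ((if i = l then (1:ℂ) else 0) * (if k = j then 1 else 0))
          = (if i = l then conj (u i) * v l else 0) * (if k = j then u j * conj (v k) else 0) := by
      intro i j k l
      simp only [hco]
      split_ifs <;> ring
    simp only [h1]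
    have h2 : ∑ i, ∑ j, ∑ k, ∑ l,
        (if i = l then conj (u i) * v l else 0) * (if k = j then u j * conj (v k) else 0)
        = ∑ i, ∑ j, (conj (u i) * v i) * (u j * conj (v j)) := by
      refine Finset.sum_congr rfl fun i _ => Finset.sum_congr rfl fun j _ => ?_
      rw [Finset.sum_comm]
      have hk : ∀ l : Fin d,
          (∑ k, (if i = l then conj (u i) * v l else 0) * (if k = j then u j * conj (v k) else 0))
            = (if i = l then conj (u i) * v l else 0) * (u j * conj (v j)) := by
        intro l
        rw [← Finset.mul_sum]
        congr 1
        rw [Finset.sum_ite_eq']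
        simp
      rw [Finset.sum_congr rfl fun l _ => hk l, ← Finset.sum_mul, Finset.sum_ite_eq]
      simp
    rw [h2, ← Finset.sum_mul_sum]
    rw [show (∑ i, conj (u i) * v i) = cInner u v from rfl, ← hconj u v, mul_conj_eq]
  have hpt : ∀ φ : Fin d → ℂ, ‖cInner u φ‖ ^ 2 * ‖cInner v φ‖ ^ 2
      = (cInner u φ * conj (cInner u φ) * (cInner v φ * conj (cInner v φ))).re := by
    intro φ
    rw [mul_conj_eq, mul_conj_eq, ← Complex.ofReal_mul, Complex.ofReal_re]
  rw [integral_congr_ae (Filter.Eventually.of_forall hpt)]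
  have hre := integral_re (μ := ν) hFint
  simp only [RCLike.re_to_complex] at hre
  rw [hre, hkey]
  have hsplit : ∀ i j k l : Fin d, co i j k l * M ν i j k l
      = (co i j k l * ((if i = j then (1:ℂ) else 0) * (if k = l then 1 else 0)))
          / ((d:ℂ) * ((d:ℂ) + 1))
        + (co i j k l * ((if i = l then (1:ℂ) else 0) * (if k = j then 1 else 0)))
          / ((d:ℂ) * ((d:ℂ) + 1)) := by
    intro i j k l
    rw [moment hν i j k l]
    ring
  simp only [hsplit, Finset.sum_add_distrib, ← Finset.sum_div]
  rw [hS1, hS2]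
  rw [show (1:ℂ) / ((d:ℂ) * ((d:ℂ) + 1)) + ((‖cInner u v‖ ^ 2 : ℝ) : ℂ) / ((d:ℂ) * ((d:ℂ) + 1))
      = (((1 + ‖cInner u v‖ ^ 2) / (d * (d + 1)) : ℝ) : ℂ) from by push_cast; ring]
  exact Complex.ofReal_re _
end

section
/- Fix integers d ≥ 1 and N ≥ 1. The N-th moment of the Haar pure-state measure is the normalized symmetrizer: ∫ P_φ^{⊗N} dμ_d(φ) = ((d−1)! / (N+d−1)!) · Σ_{σ ∈ S_N} P_σ, entrywise as matrices indexed by functions f, g : Fin N → Fin d, where P_φ^{⊗N} has entries (P_φ^{⊗N})_{f,g} = ∏_{i=1}^N φ(f i) · conj(φ(g i)), and P_σ is the permutation operator with entries (P_σ)_{f,g} = 1 if f = g ∘ σ and 0 otherwise. Equivalently, ∫ P_φ^{⊗N} dμ_d(φ) = Π₊ / C(N+d−1, N) where Π₊ = (1/N!) Σ_{σ ∈ S_N} P_σ is the orthogonal projector onto the symmetric subspace of (ℂ^d)^{⊗N}. -/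
open MeasureTheory Matrix

namespace HPS

variable {d : ℕ}

/-- count of value x among values of f -/
def cnt {n : ℕ} (f : Fin n → Fin d) (x : Fin d) : ℕ :=
  (Finset.univ.filter fun i => f i = x).card

noncomputable def hfun {n : ℕ} (f g : Fin n → Fin d) (φ : Fin d → ℂ) : ℂ :=
  ∏ i, φ (f i) * (starRingEnd ℂ) (φ (g i))

lemma continuous_hfun {n : ℕ} (f g : Fin n → Fin d) : Continuous (hfun f g) := by
  unfold hfun
  exact continuous_finset_prod _ fun i _ =>
    ((continuous_apply (f i)).mul ((Complex.continuous_conj).comp (continuous_apply (g i))))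

variable (hd : 0 < d) {μU : Measure (Fin d → Fin d → ℂ)}

lemma measurable_col : Measurable (fun U : Fin d → Fin d → ℂ => fun i => U i ⟨0, hd⟩) :=
  measurable_pi_lambda _ fun i => (measurable_pi_apply _).comp (measurable_pi_apply i)

lemma isProb (hμU : IsHaarUnitary μU) : IsProbabilityMeasure (pureStateMeasure hd μU) := by
  have := hμU.1
  exact Measure.isProbabilityMeasure_map (measurable_col hd).aemeasurable

lemma ae_sum_one (hμU : IsHaarUnitary μU) : ∀ᵐ φ ∂(pureStateMeasure hd μU), ∑ x, Complex.normSq (φ x) = 1 := by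
  rw [pureStateMeasure, ae_map_iff (measurable_col hd).aemeasurable]
  · refine hμU.2.1.mono fun U hU => ?_
    have h1 : (star (Matrix.of U) * Matrix.of U) ⟨0, hd⟩ ⟨0, hd⟩ = (1 : Matrix (Fin d) (Fin d) ℂ) ⟨0, hd⟩ ⟨0, hd⟩ := by
      rw [(Matrix.mem_unitaryGroup_iff').mp hU]
    rw [Matrix.mul_apply, Matrix.one_apply_eq] at h1
    have h2 : ∀ j, (star (Matrix.of U)) ⟨0, hd⟩ j * (Matrix.of U) j ⟨0, hd⟩
        = (Complex.normSq (U j ⟨0, hd⟩) : ℂ) := by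
      intro j
      rw [Matrix.star_apply, mul_comm]
      exact Complex.mul_conj _
    simp only [h2] at h1
    have := congrArg Complex.re h1
    push_cast at this
    simpa using this
  · have : MeasurableSet {φ : Fin d → ℂ | (fun ψ => ∑ x, Complex.normSq (ψ x)) φ = 1} :=
      measurableSet_eq_fun (by exact Continuous.measurable (by continuity)) measurable_const
    exact this

lemma ae_norm_le (hμU : IsHaarUnitary μU) : ∀ᵐ φ ∂(pureStateMeasure hd μU), ∀ x, ‖φ x‖ ≤ 1 := by
  refine (ae_sum_one hd hμU).mono fun φ hφ x => ?_
  have h1 : Complex.normSq (φ x) ≤ 1 := by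
    rw [← hφ]
    exact Finset.single_le_sum (fun y _ => Complex.normSq_nonneg _) (Finset.mem_univ x)
  have h2 : Complex.normSq (φ x) = ‖φ x‖ * ‖φ x‖ := by
    rw [Complex.normSq_eq_norm_sq, sq]
  nlinarith [norm_nonneg (φ x)]

lemma integrable_hfun (hμU : IsHaarUnitary μU) {n : ℕ} (f g : Fin n → Fin d) :
    Integrable (hfun f g) (pureStateMeasure hd μU) := by
  have : IsProbabilityMeasure (pureStateMeasure hd μU) := isProb hd hμU
  refine (integrable_const (1 : ℝ)).mono'
    (continuous_hfun f g).aestronglyMeasurable ?_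
  refine (ae_norm_le hd hμU).mono fun φ hφ => ?_
  unfold hfun
  calc ‖∏ i, φ (f i) * (starRingEnd ℂ) (φ (g i))‖
      = ∏ i, ‖φ (f i) * (starRingEnd ℂ) (φ (g i))‖ := by rw [norm_prod]
    _ ≤ 1 := Finset.prod_le_one (fun i _ => norm_nonneg _) (fun i _ => by
        rw [norm_mul, RCLike.norm_conj]
        exact mul_le_one₀ (hφ _) (norm_nonneg _) (hφ _))


lemma measurable_mulVec (V : Matrix (Fin d) (Fin d) ℂ) :
    Measurable (fun φ : Fin d → ℂ => V *ᵥ φ) := by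
  refine measurable_pi_lambda _ fun i => ?_
  simp only [Matrix.mulVec, dotProduct]
  exact Finset.measurable_sum _ fun j _ => (measurable_pi_apply j).const_mul _

lemma map_mulVec (hμU : IsHaarUnitary μU) {V : Matrix (Fin d) (Fin d) ℂ}
    (hV : V ∈ Matrix.unitaryGroup (Fin d) ℂ) :
    (pureStateMeasure hd μU).map (fun φ => V *ᵥ φ) = pureStateMeasure hd μU := by
  unfold pureStateMeasure
  rw [Measure.map_map (measurable_mulVec V) (measurable_col hd)]
  have hL : Measurable (fun U : Fin d → Fin d → ℂ => Matrix.of.symm (V * Matrix.of U)) := by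
    have e : (fun U : Fin d → Fin d → ℂ => Matrix.of.symm (V * Matrix.of U))
        = fun U : Fin d → Fin d → ℂ => fun i j => ∑ k, V i k * U k j := by
      funext U i j
      show (V * Matrix.of U) i j = _
      exact Matrix.mul_apply
    rw [e]
    exact measurable_pi_lambda _ fun i => measurable_pi_lambda _ fun j =>
      Finset.measurable_sum _ fun k _ =>
        (((measurable_pi_apply j).comp (measurable_pi_apply k) :
          Measurable fun U : Fin d → Fin d → ℂ => U k j)).const_mul _
  have hcomp : ((fun φ : Fin d → ℂ => V *ᵥ φ) ∘ fun U : Fin d → Fin d → ℂ => fun i => U i ⟨0, hd⟩)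
      = (fun U : Fin d → Fin d → ℂ => fun i => U i ⟨0, hd⟩) ∘
        (fun U : Fin d → Fin d → ℂ => Matrix.of.symm (V * Matrix.of U)) := by
    funext U
    funext i
    simp only [Function.comp_apply]
    rw [Matrix.mulVec, dotProduct]
    rfl
  rw [hcomp, ← Measure.map_map (measurable_col hd) hL, hμU.2.2 V hV]

lemma integral_mulVec_eq (hμU : IsHaarUnitary μU) {V : Matrix (Fin d) (Fin d) ℂ}
    (hV : V ∈ Matrix.unitaryGroup (Fin d) ℂ) (F : (Fin d → ℂ) → ℂ) (hF : Continuous F) :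
    ∫ φ, F φ ∂(pureStateMeasure hd μU) = ∫ φ, F (V *ᵥ φ) ∂(pureStateMeasure hd μU) := by
  conv_lhs => rw [← map_mulVec hd hμU hV]
  rw [integral_map (measurable_mulVec V).aemeasurable]
  rw [map_mulVec hd hμU hV]
  exact hF.aestronglyMeasurable

/-- the moment matrix entry -/
noncomputable def M (hd : 0 < d) (μU : Measure (Fin d → Fin d → ℂ)) {n : ℕ}
    (f g : Fin n → Fin d) : ℂ :=
  ∫ φ, hfun f g φ ∂(pureStateMeasure hd μU)

lemma prod_comp_cnt {n : ℕ} (f : Fin n → Fin d) (ρ : Fin d → ℂ) :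
    ∏ i, ρ (f i) = ∏ x, ρ x ^ cnt f x := by
  rw [← Finset.prod_fiberwise_of_maps_to (fun i (_ : i ∈ Finset.univ) => Finset.mem_univ (f i))
    (fun i => ρ (f i))]
  refine Finset.prod_congr rfl fun x _ => ?_
  rw [Finset.prod_congr rfl (fun i hi => by rw [(Finset.mem_filter.mp hi).2]),
    Finset.prod_const]
  rfl

lemma M_zero_of_cnt_ne (hμU : IsHaarUnitary μU) {n : ℕ} {f g : Fin n → Fin d}
    (hfg : cnt f ≠ cnt g) : M hd μU f g = 0 := by
  obtain ⟨x, hx⟩ : ∃ x, cnt f x ≠ cnt g x := by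
    by_contra h
    push_neg at h
    exact hfg (funext h)
  set a : ℕ := cnt f x
  set b : ℕ := cnt g x
  have hk : (a : ℝ) - b ≠ 0 := by
    intro h
    apply hx
    have : (a : ℝ) = b := by linarith
    exact_mod_cast this
  set θ : ℝ := Real.pi / ((a : ℝ) - b) with hθ
  set c : ℂ := Complex.exp (θ * Complex.I) with hc
  set w : Fin d → ℂ := fun y => if y = x then c else 1 with hw
  have hcnorm : (starRingEnd ℂ) c * c = 1 := by
    rw [mul_comm, Complex.mul_conj, hc, Complex.normSq_eq_norm_sq, Complex.norm_exp_ofReal_mul_I]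
    norm_num
  have hV : Matrix.diagonal w ∈ Matrix.unitaryGroup (Fin d) ℂ := by
    rw [Matrix.mem_unitaryGroup_iff']
    rw [Matrix.star_eq_conjTranspose, Matrix.diagonal_conjTranspose,
      Matrix.diagonal_mul_diagonal]
    have h2 : (fun y => star w y * w y) = fun _ : Fin d => (1 : ℂ) := by
      funext y
      show (starRingEnd ℂ) (w y) * w y = 1
      by_cases hy : y = x <;> simp [hw, hy, hcnorm]
    rw [h2]
    simp
  have key : M hd μU f g = (c ^ a * ((starRingEnd ℂ) c) ^ b) * M hd μU f g := by
    conv_lhs => rw [M, integral_mulVec_eq hd hμU hV _ (continuous_hfun f g)]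
    have hpt : ∀ φ : Fin d → ℂ, hfun f g (Matrix.diagonal w *ᵥ φ)
        = (c ^ a * ((starRingEnd ℂ) c) ^ b) * hfun f g φ := by
      intro φ
      unfold hfun
      have h1 : ∀ y, (Matrix.diagonal w *ᵥ φ) y = w y * φ y := fun y =>
        Matrix.mulVec_diagonal w φ y
      calc ∏ i, (Matrix.diagonal w *ᵥ φ) (f i) * (starRingEnd ℂ) ((Matrix.diagonal w *ᵥ φ) (g i))
          = ∏ i, (w (f i) * (starRingEnd ℂ) (w (g i))) * (φ (f i) * (starRingEnd ℂ) (φ (g i))) := by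
            refine Finset.prod_congr rfl fun i _ => ?_
            rw [h1, h1, RingHom.map_mul]
            ring
        _ = (∏ i, w (f i) * (starRingEnd ℂ) (w (g i)))
              * ∏ i, φ (f i) * (starRingEnd ℂ) (φ (g i)) := Finset.prod_mul_distrib
        _ = ((∏ i, w (f i)) * ∏ i, (starRingEnd ℂ) (w (g i)))
              * ∏ i, φ (f i) * (starRingEnd ℂ) (φ (g i)) := by rw [Finset.prod_mul_distrib]
        _ = (c ^ a * ((starRingEnd ℂ) c) ^ b) * ∏ i, φ (f i) * (starRingEnd ℂ) (φ (g i)) := by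
            congr 2
            · show (∏ i, if f i = x then c else 1) = c ^ a
              rw [Finset.prod_ite, Finset.prod_const, Finset.prod_const_one, mul_one]
              rfl
            · show (∏ i, (starRingEnd ℂ) (if g i = x then c else 1)) = ((starRingEnd ℂ) c) ^ b
              have : ∀ i, (starRingEnd ℂ) (if g i = x then c else 1)
                  = if g i = x then (starRingEnd ℂ) c else 1 := by
                intro i; split <;> simp
              rw [Finset.prod_congr rfl fun i _ => this i, Finset.prod_ite, Finset.prod_const,
                Finset.prod_const_one, mul_one]
              rfl
    rw [MeasureTheory.integral_congr_ae (Filter.Eventually.of_forall hpt),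
      MeasureTheory.integral_const_mul]
    rfl
  have hfactor : c ^ a * ((starRingEnd ℂ) c) ^ b = -1 := by
    have h1 : (starRingEnd ℂ) c = Complex.exp (-(θ * Complex.I)) := by
      rw [hc, ← Complex.exp_conj]
      congr 1
      simp [Complex.ext_iff]
    rw [hc, h1, ← Complex.exp_nat_mul, ← Complex.exp_nat_mul, ← Complex.exp_add]
    have : (a : ℂ) * (θ * Complex.I) + (b : ℂ) * -(θ * Complex.I)
        = (((a : ℝ) - b) * θ : ℝ) * Complex.I := by
      push_cast
      ring
    rw [this]
    have hθval : ((a : ℝ) - b) * θ = Real.pi := by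
      rw [hθ]
      field_simp
    rw [hθval, Complex.exp_pi_mul_I]
  rw [hfactor] at key
  linear_combination key * (1/2 : ℂ)


lemma hfun_eq_of_cnt {n : ℕ} {f g : Fin n → Fin d} (h : cnt f = cnt g) (φ : Fin d → ℂ) :
    hfun f g φ = ((∏ x, Complex.normSq (φ x) ^ cnt f x : ℝ) : ℂ) := by
  unfold hfun
  rw [Finset.prod_mul_distrib, prod_comp_cnt f φ,
    prod_comp_cnt g (fun y => (starRingEnd ℂ) (φ y)), ← h, ← Finset.prod_mul_distrib]
  push_cast
  refine Finset.prod_congr rfl fun x _ => ?_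
  rw [← mul_pow, Complex.mul_conj]

/-- real moment of a count vector -/
noncomputable def Areal (hd : 0 < d) (μU : Measure (Fin d → Fin d → ℂ)) (α : Fin d → ℕ) : ℝ :=
  ∫ φ, ∏ x, Complex.normSq (φ x) ^ α x ∂(pureStateMeasure hd μU)

lemma M_eq_A {n : ℕ} {f g : Fin n → Fin d} (h : cnt f = cnt g) :
    M hd μU f g = ((Areal hd μU (cnt f) : ℝ) : ℂ) := by
  rw [M, MeasureTheory.integral_congr_ae
    (Filter.Eventually.of_forall (hfun_eq_of_cnt h)), Areal]
  exact integral_ofReal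

/-- the diagonal pure moment -/
noncomputable def cR (hd : 0 < d) (μU : Measure (Fin d → Fin d → ℂ)) (n : ℕ) : ℝ :=
  ∫ φ, Complex.normSq (φ ⟨0, hd⟩) ^ n ∂(pureStateMeasure hd μU)

lemma cR_eq_M (n : ℕ) :
    M hd μU (fun _ : Fin n => ⟨0, hd⟩) (fun _ : Fin n => ⟨0, hd⟩) = ((cR hd μU n : ℝ) : ℂ) := by
  have hpt : ∀ φ : Fin d → ℂ, hfun (fun _ : Fin n => (⟨0, hd⟩ : Fin d)) (fun _ => ⟨0, hd⟩) φ
      = ((Complex.normSq (φ ⟨0, hd⟩) ^ n : ℝ) : ℂ) := by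
    intro φ
    unfold hfun
    rw [Finset.prod_const, Complex.mul_conj, Finset.card_univ, Fintype.card_fin]
    push_cast
    ring
  rw [M, MeasureTheory.integral_congr_ae (Filter.Eventually.of_forall hpt), cR]
  exact integral_ofReal

lemma cR_zero (hμU : IsHaarUnitary μU) : cR hd μU 0 = 1 := by
  have : IsProbabilityMeasure (pureStateMeasure hd μU) := isProb hd hμU
  simp [cR]

lemma exists_unitary_row (q : Fin d → ℝ) (hq : ∑ x, q x ^ 2 = 1) :
    ∃ V ∈ Matrix.unitaryGroup (Fin d) ℂ, ∀ j, V ⟨0, hd⟩ j = (q j : ℂ) := by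
  classical
  set z : Fin d := ⟨0, hd⟩
  set v0 : EuclideanSpace ℂ (Fin d) := WithLp.toLp 2 (fun j => (q j : ℂ)) with hv0
  have hcard : Module.finrank ℂ (EuclideanSpace ℂ (Fin d)) = Fintype.card (Fin d) := by
    simp
  have horth : Orthonormal ℂ (({z} : Set (Fin d)).restrict (fun _ : Fin d => v0)) := by
    rw [orthonormal_iff_ite]
    rintro ⟨i, hi⟩ ⟨j, hj⟩
    simp only [Set.mem_singleton_iff] at hi hj
    subst hi; subst hj
    simp only [if_pos rfl, Set.restrict_apply]
    show (inner ℂ v0 v0 : ℂ) = 1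
    rw [PiLp.inner_apply]
    have : ∀ x, (inner ℂ (v0 x) (v0 x) : ℂ) = ((q x ^ 2 : ℝ) : ℂ) := by
      intro x
      rw [hv0]
      simp [RCLike.inner_apply, Complex.conj_ofReal, ← Complex.ofReal_mul, sq]
    rw [Finset.sum_congr rfl fun x _ => this x, ← Complex.ofReal_sum, hq, Complex.ofReal_one]
  obtain ⟨b, hb⟩ := Orthonormal.exists_orthonormalBasis_extension_of_card_eq hcard horth
  refine ⟨Matrix.of fun i j => (starRingEnd ℂ) (b i j), ?_, ?_⟩
  · rw [Matrix.mem_unitaryGroup_iff]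
    funext i k
    rw [Matrix.mul_apply, Matrix.one_apply]
    have h1 : ∀ j : Fin d, (Matrix.of fun i j => (starRingEnd ℂ) (b i j)) i j
        * (star (Matrix.of fun i j => (starRingEnd ℂ) (b i j))) j k
        = (starRingEnd ℂ) (b i j) * b k j := by
      intro j
      rw [Matrix.star_apply]
      simp [Matrix.of_apply]
    rw [Finset.sum_congr rfl fun j _ => h1 j]
    have h2 : (inner ℂ (b i) (b k) : ℂ) = ∑ j, (starRingEnd ℂ) (b i j) * b k j := by
      rw [PiLp.inner_apply]
      refine Finset.sum_congr rfl fun j _ => ?_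
      exact RCLike.inner_apply' _ _
    rw [← h2, orthonormal_iff_ite.mp b.orthonormal i k]
  · intro j
    have hbz : b z = v0 := hb z rfl
    show (starRingEnd ℂ) (b z j) = (q j : ℂ)
    rw [hbz, hv0]
    exact Complex.conj_ofReal _


lemma key_unit (hμU : IsHaarUnitary μU) {N : ℕ} (q : Fin d → ℝ) (hq : ∑ x, q x ^ 2 = 1) :
    ∑ f : Fin N → Fin d, ∑ g : Fin N → Fin d,
      (∏ i, (q (f i) : ℂ)) * (∏ i, (q (g i) : ℂ)) * M hd μU f g
      = ((cR hd μU N : ℝ) : ℂ) := by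
  obtain ⟨V, hV, hrow⟩ := exists_unitary_row hd q hq
  have hSq : ∀ φ : Fin d → ℂ, (V *ᵥ φ) ⟨0, hd⟩ = ∑ j, (q j : ℂ) * φ j := by
    intro φ
    show ∑ j : Fin d, V ⟨0, hd⟩ j * φ j = ∑ j, (q j : ℂ) * φ j
    exact Finset.sum_congr rfl fun j _ => by rw [hrow]
  have hpt : ∀ φ : Fin d → ℂ,
      hfun (fun _ : Fin N => (⟨0, hd⟩ : Fin d)) (fun _ => ⟨0, hd⟩) (V *ᵥ φ)
      = ∑ f : Fin N → Fin d, ∑ g : Fin N → Fin d,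
          (∏ i, (q (f i) : ℂ)) * (∏ i, (q (g i) : ℂ)) * hfun f g φ := by
    intro φ
    unfold hfun
    rw [Finset.prod_const, Finset.card_univ, Fintype.card_fin, hSq]
    have hconj : (starRingEnd ℂ) (∑ j, (q j : ℂ) * φ j)
        = ∑ j, (q j : ℂ) * (starRingEnd ℂ) (φ j) := by
      rw [map_sum (starRingEnd ℂ) (fun j => (q j : ℂ) * φ j) Finset.univ]
      exact Finset.sum_congr rfl fun j _ => by rw [RingHom.map_mul, Complex.conj_ofReal]
    rw [hconj, mul_pow, Fintype.sum_pow, Fintype.sum_pow, Finset.sum_mul_sum]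
    refine Finset.sum_congr rfl fun f _ => Finset.sum_congr rfl fun g _ => ?_
    have e1 : (∏ i, (q (f i) : ℂ) * φ (f i))
        = (∏ i, (q (f i) : ℂ)) * ∏ i, φ (f i) := Finset.prod_mul_distrib
    have e2 : (∏ i, (q (g i) : ℂ) * (starRingEnd ℂ) (φ (g i)))
        = (∏ i, (q (g i) : ℂ)) * ∏ i, (starRingEnd ℂ) (φ (g i)) := Finset.prod_mul_distrib
    have e3 : (∏ i, φ (f i) * (starRingEnd ℂ) (φ (g i)))
        = (∏ i, φ (f i)) * ∏ i, (starRingEnd ℂ) (φ (g i)) := Finset.prod_mul_distrib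
    rw [e1, e2, e3]
    ring
  have h0 : ((cR hd μU N : ℝ) : ℂ)
      = ∫ φ, ∑ f : Fin N → Fin d, ∑ g : Fin N → Fin d,
          (∏ i, (q (f i) : ℂ)) * (∏ i, (q (g i) : ℂ)) * hfun f g φ
          ∂(pureStateMeasure hd μU) := by
    rw [← cR_eq_M hd, M, integral_mulVec_eq hd hμU hV _ (continuous_hfun _ _)]
    exact MeasureTheory.integral_congr_ae (Filter.Eventually.of_forall hpt)
  rw [h0, MeasureTheory.integral_finset_sum _ (fun f _ => MeasureTheory.integrable_finset_sum _
    (fun g _ => ((integrable_hfun hd hμU f g).const_mul _)))]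
  refine Finset.sum_congr rfl fun f _ => ?_
  rw [MeasureTheory.integral_finset_sum _ fun g _ => (integrable_hfun hd hμU f g).const_mul _]
  exact Finset.sum_congr rfl fun g _ => (MeasureTheory.integral_const_mul _ _).symm

lemma key_all (hμU : IsHaarUnitary μU) {N : ℕ} (hN : 0 < N) (q : Fin d → ℝ) :
    ∑ f : Fin N → Fin d, ∑ g : Fin N → Fin d,
      (∏ i, (q (f i) : ℂ)) * (∏ i, (q (g i) : ℂ)) * M hd μU f g
      = ((cR hd μU N : ℝ) : ℂ) * ((∑ x, q x ^ 2 : ℝ) : ℂ) ^ N := by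
  by_cases h0 : ∑ x, q x ^ 2 = 0
  · have hz : ∀ x, q x = 0 := by
      intro x
      have h1 := (Finset.sum_eq_zero_iff_of_nonneg
        (fun x _ => sq_nonneg (q x))).mp h0 x (Finset.mem_univ x)
      exact (pow_eq_zero_iff two_ne_zero).mp h1
    have hterm : ∀ f : Fin N → Fin d, (∏ i, (q (f i) : ℂ)) = 0 := fun f =>
      Finset.prod_eq_zero (Finset.mem_univ (⟨0, hN⟩ : Fin N)) (by rw [hz]; norm_num)
    rw [h0]
    rw [Finset.sum_eq_zero fun f _ => Finset.sum_eq_zero fun g _ => by rw [hterm f]; ring]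
    rw [Complex.ofReal_zero, zero_pow hN.ne', mul_zero]
  · have hs_nonneg : 0 ≤ ∑ x, q x ^ 2 :=
      Finset.sum_nonneg fun x _ => sq_nonneg (q x)
    set t := Real.sqrt (∑ x, q x ^ 2) with htdef
    have ht : 0 < t := Real.sqrt_pos.mpr (lt_of_le_of_ne hs_nonneg (Ne.symm h0))
    have ht2 : t ^ 2 = ∑ x, q x ^ 2 := Real.sq_sqrt hs_nonneg
    set q' : Fin d → ℝ := fun x => q x / t with hq'def
    have hq' : ∑ x, q' x ^ 2 = 1 := by
      have : ∀ x, q' x ^ 2 = q x ^ 2 / t ^ 2 := fun x => by rw [hq'def]; rw [div_pow]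
      rw [Finset.sum_congr rfl fun x _ => this x, ← Finset.sum_div, ← ht2]
      field_simp
    have hq : ∀ x, (q x : ℂ) = (t : ℂ) * (q' x : ℂ) := by
      intro x
      have htC : (t : ℂ) ≠ 0 := by exact_mod_cast ht.ne'
      rw [hq'def]
      push_cast
      field_simp
    have hk := key_unit hd hμU (N := N) q' hq'
    have hsum : ∑ f : Fin N → Fin d, ∑ g : Fin N → Fin d,
        (∏ i, (q (f i) : ℂ)) * (∏ i, (q (g i) : ℂ)) * M hd μU f g
        = ((t : ℂ) ^ N * (t : ℂ) ^ N) * ∑ f : Fin N → Fin d, ∑ g : Fin N → Fin d,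
            (∏ i, (q' (f i) : ℂ)) * (∏ i, (q' (g i) : ℂ)) * M hd μU f g := by
      rw [Finset.mul_sum]
      refine Finset.sum_congr rfl fun f _ => ?_
      rw [Finset.mul_sum]
      refine Finset.sum_congr rfl fun g _ => ?_
      have e1 : (∏ i, (q (f i) : ℂ)) = (t : ℂ) ^ N * ∏ i, (q' (f i) : ℂ) := by
        rw [Finset.prod_congr rfl fun i (_ : i ∈ Finset.univ) => hq (f i),
          Finset.prod_mul_distrib, Finset.prod_const, Finset.card_univ, Fintype.card_fin]
      have e2 : (∏ i, (q (g i) : ℂ)) = (t : ℂ) ^ N * ∏ i, (q' (g i) : ℂ) := by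
        rw [Finset.prod_congr rfl fun i (_ : i ∈ Finset.univ) => hq (g i),
          Finset.prod_mul_distrib, Finset.prod_const, Finset.card_univ, Fintype.card_fin]
      rw [e1, e2]
      ring
    rw [hsum, hk, ← ht2]
    push_cast
    ring


noncomputable def coefR (hd : 0 < d) (μU : Measure (Fin d → Fin d → ℂ)) {n : ℕ}
    (f g : Fin n → Fin d) : ℝ :=
  if cnt f = cnt g then Areal hd μU (cnt f) else 0

lemma M_eq_coefR (hμU : IsHaarUnitary μU) {n : ℕ} (f g : Fin n → Fin d) :
    M hd μU f g = ((coefR hd μU f g : ℝ) : ℂ) := by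
  by_cases h : cnt f = cnt g
  · rw [M_eq_A hd h, coefR, if_pos h]
  · rw [M_zero_of_cnt_ne hd hμU h, coefR, if_neg h]
    norm_num

lemma real_ident (hμU : IsHaarUnitary μU) {N : ℕ} (hN : 0 < N) (q : Fin d → ℝ) :
    ∑ f : Fin N → Fin d, ∑ g : Fin N → Fin d,
      (∏ i, q (f i)) * (∏ i, q (g i)) * coefR hd μU f g
      = cR hd μU N * (∑ x, q x ^ 2) ^ N := by
  apply Complex.ofReal_injective
  push_cast
  calc ∑ f : Fin N → Fin d, ∑ g : Fin N → Fin d,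
      (∏ i, (q (f i) : ℂ)) * (∏ i, (q (g i) : ℂ)) * ((coefR hd μU f g : ℝ) : ℂ)
      = ∑ f : Fin N → Fin d, ∑ g : Fin N → Fin d,
        (∏ i, (q (f i) : ℂ)) * (∏ i, (q (g i) : ℂ)) * M hd μU f g := by
        refine Finset.sum_congr rfl fun f _ => Finset.sum_congr rfl fun g _ => ?_
        rw [M_eq_coefR hd hμU f g]
    _ = ((cR hd μU N : ℝ) : ℂ) * ((∑ x, q x ^ 2 : ℝ) : ℂ) ^ N := key_all hd hμU hN q
    _ = ((cR hd μU N : ℝ) : ℂ) * ((∑ x, (q x : ℂ) ^ 2)) ^ N := by push_cast; ring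

/-- exponent multiset of a function -/
noncomputable def mono {n : ℕ} (f : Fin n → Fin d) : Fin d →₀ ℕ :=
  ∑ i, Finsupp.single (f i) 1

lemma mono_apply {n : ℕ} (f : Fin n → Fin d) (x : Fin d) : mono f x = cnt f x := by
  classical
  rw [mono, Finset.sum_apply']
  rw [Finset.sum_congr rfl fun i (_ : i ∈ Finset.univ) =>
    (Finsupp.single_apply : (Finsupp.single (f i) 1) x = if f i = x then 1 else 0)]
  rw [Finset.sum_boole, Nat.cast_id]
  rfl

lemma mono_eq_iff {n : ℕ} {f g : Fin n → Fin d} : mono f = mono g ↔ cnt f = cnt g := by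
  constructor
  · intro h
    funext x
    rw [← mono_apply, ← mono_apply, h]
  · intro h
    ext x
    rw [mono_apply, mono_apply, h]

lemma finsupp_add_self_inj {a b : Fin d →₀ ℕ} (h : a + a = b + b) : a = b := by
  ext x
  have := DFunLike.congr_fun h x
  rw [Finsupp.add_apply, Finsupp.add_apply] at this
  omega

lemma prod_X_eq_monomial {n : ℕ} (f : Fin n → Fin d) :
    (∏ i, (MvPolynomial.X (f i) : MvPolynomial (Fin d) ℝ))
      = MvPolynomial.monomial (mono f) 1 := by
  classical
  have key : ∀ s : Finset (Fin n), (∏ i ∈ s, (MvPolynomial.X (f i) : MvPolynomial (Fin d) ℝ))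
      = MvPolynomial.monomial (∑ i ∈ s, Finsupp.single (f i) 1) 1 := by
    intro s
    induction s using Finset.cons_induction with
    | empty => simp
    | cons a s ha ih =>
      rw [Finset.prod_cons, Finset.sum_cons, ih, ← pow_one (MvPolynomial.X (f a)),
        MvPolynomial.X_pow_eq_monomial, MvPolynomial.monomial_mul, mul_one]
  exact key Finset.univ

lemma A_mul_K (hμU : IsHaarUnitary μU) {N : ℕ} (hN : 0 < N) (f0 : Fin N → Fin d) :
    Areal hd μU (cnt f0)
        * ((Finset.univ.filter fun h : Fin N → Fin d => cnt h = cnt f0).card : ℝ)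
      = cR hd μU N := by
  classical
  set K : ℕ := (Finset.univ.filter fun h : Fin N → Fin d => cnt h = cnt f0).card with hK
  set t : Fin d →₀ ℕ := mono f0 + mono f0 with ht
  set P : MvPolynomial (Fin d) ℝ := ∑ f : Fin N → Fin d, ∑ g : Fin N → Fin d,
    MvPolynomial.C (coefR hd μU f g) * ((∏ i, MvPolynomial.X (f i)) * ∏ i, MvPolynomial.X (g i))
    with hP
  set Q : MvPolynomial (Fin d) ℝ :=
    MvPolynomial.C (cR hd μU N) * (∑ x, MvPolynomial.X x ^ 2) ^ N with hQ
  have hPQ : P = Q := by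
    apply MvPolynomial.funext
    intro q
    rw [hP, hQ]
    rw [map_sum]
    calc ∑ f : Fin N → Fin d, MvPolynomial.eval q (∑ g : Fin N → Fin d,
          MvPolynomial.C (coefR hd μU f g) * ((∏ i, MvPolynomial.X (f i)) * ∏ i, MvPolynomial.X (g i)))
        = ∑ f : Fin N → Fin d, ∑ g : Fin N → Fin d,
            (∏ i, q (f i)) * (∏ i, q (g i)) * coefR hd μU f g := by
          refine Finset.sum_congr rfl fun f _ => ?_
          rw [map_sum]
          refine Finset.sum_congr rfl fun g _ => ?_
          simp only [_root_.map_mul, MvPolynomial.eval_C, map_prod, MvPolynomial.eval_X]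
          ring
      _ = cR hd μU N * (∑ x, q x ^ 2) ^ N := real_ident hd hμU hN q
      _ = MvPolynomial.eval q (MvPolynomial.C (cR hd μU N) * (∑ x, MvPolynomial.X x ^ 2) ^ N) := by
          simp only [_root_.map_mul, MvPolynomial.eval_C, map_pow, map_sum,
            MvPolynomial.eval_X]
  have hmonform : ∀ f g : Fin N → Fin d,
      MvPolynomial.C (coefR hd μU f g) * ((∏ i, MvPolynomial.X (f i)) * ∏ i, MvPolynomial.X (g i))
      = MvPolynomial.monomial (mono f + mono g) (coefR hd μU f g) := by
    intro f g
    rw [prod_X_eq_monomial, prod_X_eq_monomial, MvPolynomial.monomial_mul, mul_one,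
      MvPolynomial.C_mul_monomial, mul_one]
  have hcoeffP : MvPolynomial.coeff t P = Areal hd μU (cnt f0) * (K : ℝ) * (K : ℝ) := by
    rw [hP]
    rw [Finset.sum_congr rfl fun f _ => Finset.sum_congr rfl fun g _ => hmonform f g]
    rw [MvPolynomial.coeff_sum]
    rw [Finset.sum_congr rfl fun f (_ : f ∈ Finset.univ) => MvPolynomial.coeff_sum _ _ t]
    rw [Finset.sum_congr rfl fun f (_ : f ∈ Finset.univ) => Finset.sum_congr rfl
      fun g (_ : g ∈ Finset.univ) => MvPolynomial.coeff_monomial t (mono f + mono g) _]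
    have hpt : ∀ f g : Fin N → Fin d,
        (if mono f + mono g = t then coefR hd μU f g else 0)
        = if cnt f = cnt f0 then (if cnt g = cnt f0 then Areal hd μU (cnt f0) else 0) else 0 := by
      intro f g
      by_cases h2 : cnt f = cnt f0 <;> by_cases h3 : cnt g = cnt f0
      · have hmf : mono f = mono f0 := mono_eq_iff.mpr h2
        have hmg : mono g = mono f0 := mono_eq_iff.mpr h3
        rw [if_pos (by rw [hmf, hmg]), if_pos h2, if_pos h3, coefR,
          if_pos (h2.trans h3.symm), h2]
      · rw [if_pos h2, if_neg h3]
        by_cases hm : mono f + mono g = t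
        · have hmf : mono f = mono f0 := mono_eq_iff.mpr h2
          rw [hmf] at hm
          have : mono g = mono f0 := by
            ext x
            have := DFunLike.congr_fun hm x
            rw [Finsupp.add_apply, Finsupp.add_apply] at this
            omega
          exact absurd (mono_eq_iff.mp this) h3
        · rw [if_neg hm]
      · rw [if_neg h2]
        by_cases hm : mono f + mono g = t
        · have hmg : mono g = mono f0 := mono_eq_iff.mpr h3
          rw [hmg] at hm
          have : mono f = mono f0 := by
            ext x
            have := DFunLike.congr_fun hm x
            rw [Finsupp.add_apply, Finsupp.add_apply] at this
            omega
          exact absurd (mono_eq_iff.mp this) h2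
        · rw [if_neg hm]
      · rw [if_neg h2]
        by_cases hm : mono f + mono g = t
        · rw [if_pos hm, coefR]
          by_cases hfg : cnt f = cnt g
          · have hmfg : mono f = mono g := mono_eq_iff.mpr hfg
            rw [hmfg] at hm
            have : mono g = mono f0 := finsupp_add_self_inj hm
            exact absurd (hfg.trans (mono_eq_iff.mp this)) h2
          · rw [if_neg hfg]
        · rw [if_neg hm]
    rw [Finset.sum_congr rfl fun f (_ : f ∈ Finset.univ) => Finset.sum_congr rfl
      fun g (_ : g ∈ Finset.univ) => hpt f g]
    have hinner : ∀ f : Fin N → Fin d,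
        (∑ g : Fin N → Fin d, if cnt f = cnt f0 then
          (if cnt g = cnt f0 then Areal hd μU (cnt f0) else 0) else 0)
        = if cnt f = cnt f0 then (K : ℝ) * Areal hd μU (cnt f0) else 0 := by
      intro f
      by_cases h2 : cnt f = cnt f0
      · simp only [if_pos h2]
        rw [Finset.sum_ite, Finset.sum_const, Finset.sum_const_zero, add_zero,
          nsmul_eq_mul, hK]
      · simp only [if_neg h2, Finset.sum_const_zero]
    rw [Finset.sum_congr rfl fun f (_ : f ∈ Finset.univ) => hinner f]
    rw [Finset.sum_ite, Finset.sum_const, Finset.sum_const_zero, add_zero, nsmul_eq_mul, hK]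
    ring
  have hcoeffQ : MvPolynomial.coeff t Q = cR hd μU N * (K : ℝ) := by
    rw [hQ, MvPolynomial.coeff_C_mul]
    rw [Fintype.sum_pow]
    have hterm : ∀ h : Fin N → Fin d,
        (∏ i, (MvPolynomial.X (h i) : MvPolynomial (Fin d) ℝ) ^ 2)
        = MvPolynomial.monomial (mono h + mono h) 1 := by
      intro h
      rw [Finset.prod_pow, prod_X_eq_monomial, sq, MvPolynomial.monomial_mul, mul_one]
    rw [Finset.sum_congr rfl fun h (_ : h ∈ Finset.univ) => hterm h]
    rw [MvPolynomial.coeff_sum]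
    rw [Finset.sum_congr rfl fun h (_ : h ∈ Finset.univ) =>
      MvPolynomial.coeff_monomial t (mono h + mono h) 1]
    have hpt : ∀ h : Fin N → Fin d,
        (if mono h + mono h = t then (1 : ℝ) else 0) = if cnt h = cnt f0 then 1 else 0 := by
      intro h
      by_cases hc : cnt h = cnt f0
      · rw [if_pos (by rw [mono_eq_iff.mpr hc]), if_pos hc]
      · rw [if_neg hc]
        by_cases hm : mono h + mono h = t
        · exact absurd (mono_eq_iff.mp (finsupp_add_self_inj hm)) hc
        · rw [if_neg hm]
    rw [Finset.sum_congr rfl fun h (_ : h ∈ Finset.univ) => hpt h, Finset.sum_boole, hK]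
  have hKpos : (0 : ℝ) < (K : ℝ) := by
    have : f0 ∈ Finset.univ.filter fun h : Fin N → Fin d => cnt h = cnt f0 :=
      Finset.mem_filter.mpr ⟨Finset.mem_univ f0, rfl⟩
    have : 0 < K := Finset.card_pos.mpr ⟨f0, this⟩
    exact_mod_cast this
  have := hcoeffP.symm.trans ((congrArg (MvPolynomial.coeff t) hPQ).trans hcoeffQ)
  -- this : Areal * K * K = cR * K
  have hcancel := mul_right_cancel₀ hKpos.ne' this
  exact hcancel


lemma cnt_comp_perm {n : ℕ} (g : Fin n → Fin d) (σ : Equiv.Perm (Fin n)) :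
    cnt (g ∘ σ) = cnt g := by
  funext x
  unfold cnt
  rw [← Fintype.card_subtype, ← Fintype.card_subtype]
  exact Fintype.card_congr (Equiv.subtypeEquiv σ (fun i => Iff.rfl))

lemma exists_perm_of_cnt_eq {n : ℕ} {f g : Fin n → Fin d} (h : cnt f = cnt g) :
    ∃ σ : Equiv.Perm (Fin n), f = g ∘ σ := by
  classical
  have hcard : ∀ x, Fintype.card {i // f i = x} = Fintype.card {j // g j = x} := by
    intro x
    rw [Fintype.card_subtype, Fintype.card_subtype]
    exact congrFun h x
  have e : ∀ x, {i // f i = x} ≃ {j // g j = x} := fun x => Fintype.equivOfCardEq (hcard x)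
  set σ : Equiv.Perm (Fin n) := (Equiv.sigmaFiberEquiv f).symm.trans
    ((Equiv.sigmaCongrRight e).trans (Equiv.sigmaFiberEquiv g)) with hσ
  refine ⟨σ, funext fun i => ?_⟩
  show f i = g (σ i)
  have hσi : σ i = (e (f i) ⟨i, rfl⟩).1 := rfl
  rw [hσi]
  exact ((e (f i) ⟨i, rfl⟩).2).symm

lemma card_fiber_const {n : ℕ} (g f1 f2 : Fin n → Fin d)
    (h1 : cnt f1 = cnt g) (h2 : cnt f2 = cnt g) :
    (Finset.univ.filter fun σ : Equiv.Perm (Fin n) => g ∘ σ = f1).card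
      = (Finset.univ.filter fun σ : Equiv.Perm (Fin n) => g ∘ σ = f2).card := by
  classical
  obtain ⟨τ1, hτ1⟩ := exists_perm_of_cnt_eq h1
  obtain ⟨τ2, hτ2⟩ := exists_perm_of_cnt_eq h2
  refine Finset.card_bij' (fun σ _ => τ2.trans (τ1.symm.trans σ))
    (fun σ _ => τ1.trans (τ2.symm.trans σ)) ?_ ?_ ?_ ?_
  · intro σ hσ
    rw [Finset.mem_filter] at hσ ⊢
    refine ⟨Finset.mem_univ _, funext fun i => ?_⟩
    show g (σ (τ1.symm (τ2 i))) = f2 i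
    have e1 : g (σ (τ1.symm (τ2 i))) = f1 (τ1.symm (τ2 i)) := congrFun hσ.2 _
    rw [e1, hτ1]
    show g (τ1 (τ1.symm (τ2 i))) = f2 i
    rw [Equiv.apply_symm_apply, hτ2]
    rfl
  · intro σ hσ
    rw [Finset.mem_filter] at hσ ⊢
    refine ⟨Finset.mem_univ _, funext fun i => ?_⟩
    show g (σ (τ2.symm (τ1 i))) = f1 i
    have e1 : g (σ (τ2.symm (τ1 i))) = f2 (τ2.symm (τ1 i)) := congrFun hσ.2 _
    rw [e1, hτ2]
    show g (τ2 (τ2.symm (τ1 i))) = f1 i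
    rw [Equiv.apply_symm_apply, hτ1]
    rfl
  · intro σ _
    ext i
    simp
  · intro σ _
    ext i
    simp

lemma K_mul_S {n : ℕ} (f g : Fin n → Fin d) (h : cnt f = cnt g) :
    (Finset.univ.filter fun h' : Fin n → Fin d => cnt h' = cnt f).card
      * (Finset.univ.filter fun σ : Equiv.Perm (Fin n) => f = g ∘ σ).card
    = n.factorial := by
  classical
  have hcard : (Finset.univ : Finset (Equiv.Perm (Fin n))).card = n.factorial := by
    rw [Finset.card_univ, Fintype.card_perm, Fintype.card_fin]
  have hmaps : ∀ σ : Equiv.Perm (Fin n), σ ∈ (Finset.univ : Finset (Equiv.Perm (Fin n))) →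
      (g ∘ σ) ∈ (Finset.univ.filter fun h' : Fin n → Fin d => cnt h' = cnt f) := by
    intro σ _
    exact Finset.mem_filter.mpr ⟨Finset.mem_univ _, by rw [cnt_comp_perm, h]⟩
  rw [← hcard, Finset.card_eq_sum_card_fiberwise hmaps]
  have hconst : ∀ f' ∈ (Finset.univ.filter fun h' : Fin n → Fin d => cnt h' = cnt f),
      (Finset.univ.filter fun σ : Equiv.Perm (Fin n) => g ∘ σ = f').card
      = (Finset.univ.filter fun σ : Equiv.Perm (Fin n) => f = g ∘ σ).card := by
    intro f' hf'
    have hcnt' : cnt f' = cnt g := by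
      rw [(Finset.mem_filter.mp hf').2, h]
    rw [card_fiber_const g f' f hcnt' h]
    congr 1
    exact Finset.filter_congr fun σ _ => eq_comm
  rw [Finset.sum_congr rfl hconst, Finset.sum_const, smul_eq_mul]

theorem M_structure (hμU : IsHaarUnitary μU) {N : ℕ} (hN : 0 < N) (f g : Fin N → Fin d) :
    M hd μU f g = (((cR hd μU N
        * ((Finset.univ.filter fun σ : Equiv.Perm (Fin N) => f = g ∘ σ).card : ℝ)
        / N.factorial : ℝ)) : ℂ) := by
  classical
  by_cases h : cnt f = cnt g
  · rw [M_eq_A hd h]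
    congr 1
    have hKS := K_mul_S f g h
    have hA := A_mul_K hd hμU hN f
    set K : ℕ := (Finset.univ.filter fun h' : Fin N → Fin d => cnt h' = cnt f).card with hKdef
    set S : ℕ := (Finset.univ.filter fun σ : Equiv.Perm (Fin N) => f = g ∘ σ).card with hSdef
    have hKpos : 0 < K := by
      refine Finset.card_pos.mpr ⟨f, Finset.mem_filter.mpr ⟨Finset.mem_univ f, rfl⟩⟩
    have hfac : (N.factorial : ℝ) ≠ 0 := by
      exact_mod_cast N.factorial_ne_zero
    have hKr : (K : ℝ) ≠ 0 := by
      exact_mod_cast hKpos.ne'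
    have hKS' : (K : ℝ) * (S : ℝ) = (N.factorial : ℝ) := by
      exact_mod_cast hKS
    rw [eq_div_iff hfac, ← hKS']
    calc Areal hd μU (cnt f) * ((K : ℝ) * (S : ℝ))
        = (Areal hd μU (cnt f) * (K : ℝ)) * (S : ℝ) := by ring
      _ = cR hd μU N * (S : ℝ) := by rw [hA]
  · rw [M_zero_of_cnt_ne hd hμU h]
    have hempty : (Finset.univ.filter fun σ : Equiv.Perm (Fin N) => f = g ∘ σ) = ∅ := by
      refine Finset.filter_false_of_mem fun σ _ => ?_
      intro hc
      exact h (by rw [hc, cnt_comp_perm])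
    rw [hempty]
    simp


lemma card_fix_zero (n : ℕ) :
    (Finset.univ.filter fun σ : Equiv.Perm (Fin (n + 1)) => σ 0 = 0).card = n.factorial := by
  classical
  rw [← Fintype.card_subtype]
  have E : Equiv.Perm (Fin n) ≃ {σ : Equiv.Perm (Fin (n + 1)) // σ 0 = 0} := by
    refine ⟨fun e => ⟨Equiv.Perm.decomposeFin.symm (0, e),
      Equiv.Perm.decomposeFin_symm_apply_zero 0 e⟩,
      fun σ => (Equiv.Perm.decomposeFin σ.1).2, ?_, ?_⟩
    · intro e
      simp
    · rintro ⟨σ, hσ⟩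
      have hp : (Equiv.Perm.decomposeFin σ).1 = 0 := by
        have h1 := Equiv.Perm.decomposeFin_symm_apply_zero
          (Equiv.Perm.decomposeFin σ).1 (Equiv.Perm.decomposeFin σ).2
        rw [Prod.mk.eta, Equiv.symm_apply_apply] at h1
        rw [← h1, hσ]
      ext i
      simp only
      conv_rhs => rw [← Equiv.symm_apply_apply Equiv.Perm.decomposeFin σ]
      rw [← Prod.mk.eta (p := Equiv.Perm.decomposeFin σ), hp]
  rw [← Fintype.card_congr E, Fintype.card_perm, Fintype.card_fin]

lemma integrable_real_aux (hμU : IsHaarUnitary μU) (x z : Fin d) (n : ℕ) :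
    Integrable (fun φ : Fin d → ℂ => Complex.normSq (φ x) * Complex.normSq (φ z) ^ n)
      (pureStateMeasure hd μU) := by
  have : IsProbabilityMeasure (pureStateMeasure hd μU) := isProb hd hμU
  refine (integrable_const (1 : ℝ)).mono' ?_ ?_
  · refine Continuous.aestronglyMeasurable ?_
    exact ((Complex.continuous_normSq.comp (continuous_apply x)).mul
      ((Complex.continuous_normSq.comp (continuous_apply z)).pow n))
  · refine (ae_norm_le hd hμU).mono fun φ hφ => ?_
    have hx : 0 ≤ Complex.normSq (φ x) := Complex.normSq_nonneg _
    have hz : 0 ≤ Complex.normSq (φ z) := Complex.normSq_nonneg _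
    have hx1 : Complex.normSq (φ x) ≤ 1 := by
      rw [Complex.normSq_eq_norm_sq]
      calc ‖φ x‖ ^ 2 ≤ 1 ^ 2 := pow_le_pow_left₀ (norm_nonneg _) (hφ x) 2
        _ = 1 := one_pow 2
    have hz1 : Complex.normSq (φ z) ≤ 1 := by
      rw [Complex.normSq_eq_norm_sq]
      calc ‖φ z‖ ^ 2 ≤ 1 ^ 2 := pow_le_pow_left₀ (norm_nonneg _) (hφ z) 2
        _ = 1 := one_pow 2
    rw [Real.norm_eq_abs, abs_of_nonneg (by positivity)]
    calc Complex.normSq (φ x) * Complex.normSq (φ z) ^ n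
        ≤ 1 * 1 ^ n := by
          exact mul_le_mul hx1 (pow_le_pow_left₀ hz (by exact hz1) n) (by positivity) one_pos.le
      _ = 1 := by norm_num
    
lemma cR_rec (hμU : IsHaarUnitary μU) (n : ℕ) :
    cR hd μU n * ((n : ℝ) + 1) = cR hd μU (n + 1) * ((n : ℝ) + d) := by
  classical
  set z : Fin d := ⟨0, hd⟩ with hz
  set F : Fin d → Fin (n + 1) → Fin d := fun x i => if i = 0 then x else z with hF
  -- pointwise identity
  have h1 : ∀ x (φ : Fin d → ℂ), hfun (F x) (F x) φ
      = ((Complex.normSq (φ x) * Complex.normSq (φ z) ^ n : ℝ) : ℂ) := by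
    intro x φ
    unfold hfun
    rw [Fin.prod_univ_succ]
    have hF0 : F x 0 = x := if_pos rfl
    have hFs : ∀ i : Fin n, F x i.succ = z := fun i => if_neg (Fin.succ_ne_zero i)
    rw [hF0]
    rw [Finset.prod_congr rfl fun i (_ : i ∈ Finset.univ) => by rw [hFs i]]
    rw [Finset.prod_const, Finset.card_univ, Fintype.card_fin, Complex.mul_conj,
      Complex.mul_conj]
    push_cast
    ring
  have h2 : ∀ x, M hd μU (F x) (F x)
      = ((∫ φ, Complex.normSq (φ x) * Complex.normSq (φ z) ^ n
          ∂(pureStateMeasure hd μU) : ℝ) : ℂ) := by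
    intro x
    rw [M, MeasureTheory.integral_congr_ae (Filter.Eventually.of_forall (h1 x))]
    exact integral_ofReal
  have h3 : ∑ x, (∫ φ, Complex.normSq (φ x) * Complex.normSq (φ z) ^ n
      ∂(pureStateMeasure hd μU)) = cR hd μU n := by
    rw [← MeasureTheory.integral_finset_sum _ fun x _ => integrable_real_aux hd hμU x z n]
    rw [cR]
    refine MeasureTheory.integral_congr_ae ((ae_sum_one hd hμU).mono fun φ hφ => ?_)
    show ∑ x, Complex.normSq (φ x) * Complex.normSq (φ z) ^ n
        = Complex.normSq (φ ⟨0, hd⟩) ^ n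
    rw [← Finset.sum_mul, hφ, one_mul]
  -- structure theorem at level n + 1
  have hS : ∀ x, M hd μU (F x) (F x)
      = (((cR hd μU (n+1)
        * ((Finset.univ.filter fun σ : Equiv.Perm (Fin (n+1)) => F x = F x ∘ σ).card : ℝ)
        / (n+1).factorial : ℝ)) : ℂ) := fun x =>
    M_structure hd hμU (Nat.succ_pos n) (F x) (F x)
  -- stabilizer cardinalities
  have hSz : (Finset.univ.filter fun σ : Equiv.Perm (Fin (n+1)) => F z = F z ∘ σ).card
      = (n+1).factorial := by
    have : ∀ σ : Equiv.Perm (Fin (n+1)), F z = F z ∘ σ := by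
      intro σ
      funext i
      show (if i = 0 then z else z) = (if σ i = 0 then z else z)
      split <;> split <;> rfl
    rw [Finset.filter_true_of_mem fun σ _ => this σ, Finset.card_univ, Fintype.card_perm,
      Fintype.card_fin]
  have hSx : ∀ x, x ≠ z →
      (Finset.univ.filter fun σ : Equiv.Perm (Fin (n+1)) => F x = F x ∘ σ).card
      = n.factorial := by
    intro x hx
    rw [← card_fix_zero n]
    congr 1
    refine Finset.filter_congr fun σ _ => ?_
    constructor
    · intro hc
      have h0 := congrFun hc 0
      show σ 0 = 0
      by_contra hne
      have : x = z := by
        have : (if (0 : Fin (n+1)) = 0 then x else z) = (if σ 0 = 0 then x else z) := h0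
        rwa [if_pos rfl, if_neg hne] at this
      exact hx this
    · intro hc
      funext i
      show (if i = 0 then x else z) = (if σ i = 0 then x else z)
      by_cases hi : i = 0
      · rw [if_pos hi, if_pos (by rw [hi, hc])]
      · rw [if_neg hi, if_neg (fun hcon => hi (by
          have := σ.injective (hcon.trans hc.symm)
          exact this))]
  -- combine
  have hsumS : ∑ x, ((Finset.univ.filter
      fun σ : Equiv.Perm (Fin (n+1)) => F x = F x ∘ σ).card : ℝ)
      = ((n+1).factorial : ℝ) + ((d : ℝ) - 1) * (n.factorial : ℝ) := by
    rw [← Finset.sum_erase_add _ _ (Finset.mem_univ z), hSz]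
    have : ∀ x ∈ Finset.univ.erase z, ((Finset.univ.filter
        fun σ : Equiv.Perm (Fin (n+1)) => F x = F x ∘ σ).card : ℝ) = (n.factorial : ℝ) := by
      intro x hx
      rw [hSx x (Finset.mem_erase.mp hx).1]
    rw [Finset.sum_congr rfl this, Finset.sum_const, nsmul_eq_mul, Finset.card_erase_of_mem
      (Finset.mem_univ z), Finset.card_univ, Fintype.card_fin]
    have hd1 : ((d - 1 : ℕ) : ℝ) = (d : ℝ) - 1 := by
      have : (1 : ℕ) ≤ d := hd
      push_cast [Nat.cast_sub this]
      ring
    rw [hd1]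
    ring
  have hmain : (cR hd μU n : ℝ)
      = cR hd μU (n+1) * (((n+1).factorial : ℝ) + ((d:ℝ)-1) * (n.factorial : ℝ))
        / ((n+1).factorial : ℝ) := by
    have hcast : ((cR hd μU n : ℝ) : ℂ)
        = ((cR hd μU (n+1) * (((n+1).factorial : ℝ) + ((d:ℝ)-1) * (n.factorial : ℝ))
          / ((n+1).factorial : ℝ) : ℝ) : ℂ) := by
      calc ((cR hd μU n : ℝ) : ℂ)
          = ((∑ x, ∫ φ, Complex.normSq (φ x) * Complex.normSq (φ z) ^ n
              ∂(pureStateMeasure hd μU) : ℝ) : ℂ) := by rw [h3]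
        _ = ∑ x, ((∫ φ, Complex.normSq (φ x) * Complex.normSq (φ z) ^ n
              ∂(pureStateMeasure hd μU) : ℝ) : ℂ) := by push_cast; rfl
        _ = ∑ x, M hd μU (F x) (F x) := by
            refine Finset.sum_congr rfl fun x _ => (h2 x).symm
        _ = ∑ x, (((cR hd μU (n+1)
            * ((Finset.univ.filter fun σ : Equiv.Perm (Fin (n+1)) => F x = F x ∘ σ).card : ℝ)
            / (n+1).factorial : ℝ)) : ℂ) := by
            refine Finset.sum_congr rfl fun x _ => hS x
        _ = ((∑ x, (cR hd μU (n+1)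
            * ((Finset.univ.filter fun σ : Equiv.Perm (Fin (n+1)) => F x = F x ∘ σ).card : ℝ)
            / (n+1).factorial) : ℝ) : ℂ) := by push_cast; rfl
        _ = ((cR hd μU (n+1) * (((n+1).factorial : ℝ) + ((d:ℝ)-1) * (n.factorial : ℝ))
          / ((n+1).factorial : ℝ) : ℝ) : ℂ) := by
            congr 1
            rw [← hsumS, Finset.mul_sum, Finset.sum_div]
    exact_mod_cast hcast
  have hfac1 : ((n+1).factorial : ℝ) ≠ 0 := by exact_mod_cast (n+1).factorial_ne_zero
  have hfacsucc : ((n+1).factorial : ℝ) = ((n:ℝ)+1) * (n.factorial : ℝ) := by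
    rw [Nat.factorial_succ]
    push_cast
    ring
  have hnz : (n.factorial : ℝ) ≠ 0 := by exact_mod_cast n.factorial_ne_zero
  rw [hfacsucc] at hmain
  field_simp at hmain
  refine mul_right_cancel₀ hnz ?_
  linear_combination (n.factorial : ℝ) * hmain

lemma cR_formula (hμU : IsHaarUnitary μU) (n : ℕ) :
    cR hd μU n * ((n + (d - 1)).factorial : ℝ)
      = (n.factorial : ℝ) * ((d - 1).factorial : ℝ) := by
  induction n with
  | zero =>
    rw [cR_zero hd hμU]
    norm_num
  | succ n ih =>
    have hrec := cR_rec hd hμU n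
    have hstep : (n + 1 + (d - 1)) = (n + (d - 1)) + 1 := by omega
    rw [hstep, Nat.factorial_succ, Nat.factorial_succ]
    have hnd : ((n + (d - 1) + 1 : ℕ) : ℝ) = (n : ℝ) + d := by
      have h' : n + (d - 1) + 1 = n + d := by omega
      rw [h']
      push_cast
      ring
    push_cast [hnd]
    have hndr : cR hd μU (n+1) * ((n:ℝ) + d) = cR hd μU n * ((n:ℝ)+1) := hrec.symm
    calc cR hd μU (n+1) * (((n:ℝ) + d) * ((n + (d-1)).factorial : ℝ))
        = (cR hd μU (n+1) * ((n:ℝ) + d)) * ((n + (d-1)).factorial : ℝ) := by ring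
      _ = (cR hd μU n * ((n:ℝ)+1)) * ((n + (d-1)).factorial : ℝ) := by rw [hndr]
      _ = ((n:ℝ)+1) * (cR hd μU n * ((n + (d-1)).factorial : ℝ)) := by ring
      _ = ((n:ℝ)+1) * ((n.factorial : ℝ) * ((d - 1).factorial : ℝ)) := by rw [ih]
      _ = ((n:ℝ)+1) * (n.factorial : ℝ) * ((d-1).factorial : ℝ) := by ring

end HPS


/-- The `N`-th moment of the Haar pure-state measure is the normalized
symmetrizer: entrywise, for functions `f g : Fin N → Fin d`,
`∫ ∏ i, φ (f i) conj (φ (g i)) dμ_d(φ)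
  = ((d − 1)! / (N + d − 1)!) · ∑_{σ ∈ S_N} (P_σ)_{f, g}`,
where `(P_σ)_{f, g} = 1` if `f = g ∘ σ` and `0` otherwise. -/
theorem haar_pure_state_Nth_moment {d N : ℕ} (hd : 0 < d) (hN : 0 < N)
    (μU : Measure (Fin d → Fin d → ℂ)) (hμU : IsHaarUnitary μU)
    (f g : Fin N → Fin d) :
    ∫ φ, ∏ i, φ (f i) * (starRingEnd ℂ) (φ (g i)) ∂(pureStateMeasure hd μU)
      = ((Nat.factorial (d - 1) : ℂ) / (Nat.factorial (N + d - 1))) *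
          ∑ σ : Equiv.Perm (Fin N), (if f = g ∘ σ then 1 else 0) := by
  classical
  have hM : (∫ φ, ∏ i, φ (f i) * (starRingEnd ℂ) (φ (g i)) ∂(pureStateMeasure hd μU))
      = HPS.M hd μU f g := rfl
  rw [hM, HPS.M_structure hd hμU hN f g, Finset.sum_boole]
  have heq : N + d - 1 = N + (d - 1) := by omega
  rw [heq]
  have hfacR : ((N + (d - 1)).factorial : ℝ) ≠ 0 := by
    exact_mod_cast (N + (d - 1)).factorial_ne_zero
  have hcR : HPS.cR hd μU N
      = (N.factorial : ℝ) * ((d - 1).factorial : ℝ) / ((N + (d - 1)).factorial : ℝ) := by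
    rw [eq_div_iff hfacR]
    exact HPS.cR_formula hd hμU N
  rw [hcR]
  have h1 : ((N + (d - 1)).factorial : ℂ) ≠ 0 := by
    exact_mod_cast (N + (d - 1)).factorial_ne_zero
  have h2 : ((N.factorial : ℂ)) ≠ 0 := by exact_mod_cast N.factorial_ne_zero
  push_cast
  field_simp
end

section
/- Fix integers d ≥ 1 and N ≥ 1 and unit vectors v_1, …, v_N ∈ ℂ^d. Then ∫ ∏_{i=1}^N |⟨v_i, φ⟩|² dμ_d(φ) ≤ N! (d−1)! / (N+d−1)!, i.e. the probability of any fixed outcome string under N independent single-copy measurements of a Haar-random pure state is at most the reciprocal of the dimension C(N+d−1, N) of the symmetric subspace of (ℂ^d)^{⊗N}. -/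
open MeasureTheory Matrix

open Finset

namespace HaarAux

variable {d : ℕ}

structure Nice (ν : Measure (Fin d → ℂ)) : Prop where
  prob : IsProbabilityMeasure ν
  sph : ∀ᵐ φ ∂ν, ∑ j, ‖φ j‖ ^ 2 = 1
  inv : ∀ V : Matrix (Fin d) (Fin d) ℂ, V ∈ Matrix.unitaryGroup (Fin d) ℂ →
    ν.map V.mulVec = ν

lemma measurable_mulVec (V : Matrix (Fin d) (Fin d) ℂ) : Measurable (V.mulVec) := by
  apply measurable_pi_lambda
  intro i
  have : (fun φ : Fin d → ℂ => V.mulVec φ i) = fun φ => ∑ k, V i k * φ k := by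
    funext φ; simp [Matrix.mulVec, dotProduct]
  rw [this]
  exact Finset.measurable_sum _ fun k _ => (measurable_const.mul (measurable_pi_apply k))

lemma continuous_cInner (u : Fin d → ℂ) : Continuous fun φ : Fin d → ℂ => cInner u φ := by
  unfold cInner
  exact continuous_finset_sum _ fun i _ => continuous_const.mul (continuous_apply i)

variable {ν : Measure (Fin d → ℂ)}

lemma Nice.integral_comp_mulVec (h : Nice ν) {V : Matrix (Fin d) (Fin d) ℂ}
    (hV : V ∈ Matrix.unitaryGroup (Fin d) ℂ) {G : Type*} [NormedAddCommGroup G]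
    [NormedSpace ℝ G] {f : (Fin d → ℂ) → G}
    (hf : AEStronglyMeasurable f ν) :
    ∫ φ, f (V.mulVec φ) ∂ν = ∫ φ, f φ ∂ν := by
  conv_rhs => rw [← h.inv V hV]
  rw [integral_map (measurable_mulVec V).aemeasurable]
  rwa [h.inv V hV]

lemma Nice.bound_ae (h : Nice ν) : ∀ᵐ φ ∂ν, ∀ i, ‖φ i‖ ≤ 1 := by
  filter_upwards [h.sph] with φ hφ i
  have h1 : ‖φ i‖ ^ 2 ≤ 1 := by
    rw [← hφ]
    exact Finset.single_le_sum (f := fun j => ‖φ j‖ ^ 2)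
      (fun j _ => by positivity) (Finset.mem_univ i)
  nlinarith [norm_nonneg (φ i)]

lemma Nice.integrable_of_bound (h : Nice ν) {G : Type*} [NormedAddCommGroup G]
    {f : (Fin d → ℂ) → G} (hf : AEStronglyMeasurable f ν) (C : ℝ)
    (hb : ∀ᵐ φ ∂ν, ‖f φ‖ ≤ C) : Integrable f ν := by
  haveI := h.prob
  exact (integrable_const C).mono' hf hb

/-- Build a unitary matrix whose "columns" at `i0, i1` realize a given orthonormal
pair, in the sense that `cInner u (V.mulVec φ) = φ i0` and similarly for `w`. -/
lemma exists_unitary_pair {i0 i1 : Fin d} (hne : i0 ≠ i1)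
    {u w : Fin d → ℂ} (huu : cInner u u = 1) (hww : cInner w w = 1)
    (huw : cInner u w = 0) :
    ∃ V : Matrix (Fin d) (Fin d) ℂ, V ∈ Matrix.unitaryGroup (Fin d) ℂ ∧
      ∀ φ, cInner u (V.mulVec φ) = φ i0 ∧ cInner w (V.mulVec φ) = φ i1 := by
  classical
  let u' : EuclideanSpace ℂ (Fin d) := (WithLp.equiv 2 (Fin d → ℂ)).symm u
  let w' : EuclideanSpace ℂ (Fin d) := (WithLp.equiv 2 (Fin d → ℂ)).symm w
  have hinner : ∀ x y : Fin d → ℂ,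
      (inner ℂ ((WithLp.equiv 2 (Fin d → ℂ)).symm x) ((WithLp.equiv 2 (Fin d → ℂ)).symm y) : ℂ)
        = cInner x y := by
    intro x y
    simp [PiLp.inner_apply, RCLike.inner_apply, cInner]
    exact Finset.sum_congr rfl fun _ _ => mul_comm _ _
  have hwu : cInner w u = 0 := by
    have := hinner w u
    rw [← this]
    rw [← inner_conj_symm]
    rw [hinner u w, huw, map_zero]
  let vf : Fin d → EuclideanSpace ℂ (Fin d) := fun i => if i = i0 then u' else w'
  have hvf : Orthonormal ℂ (Set.restrict {i0, i1} vf) := by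
    rw [orthonormal_iff_ite]
    rintro ⟨i, hi⟩ ⟨j, hj⟩
    simp only [Set.restrict_apply, Subtype.mk.injEq]
    rcases hi with hi | hi <;> rcases hj with hj | hj <;> subst hi <;> subst hj <;>
      change inner ℂ (vf _) (vf _) = _ <;>
      simp [vf, hne, hne.symm, -inner_self_eq_norm_sq_to_K] <;>
      first
      | exact (hinner u u).trans huu
      | exact (hinner w w).trans hww
      | exact (hinner u w).trans huw
      | exact (hinner w u).trans hwu
  obtain ⟨b, hb⟩ := hvf.exists_orthonormalBasis_extension_of_card_eq
    (by simp [finrank_euclideanSpace_fin])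
  have hb0 : b i0 = u' := by simpa [vf] using hb i0 (by simp)
  have hb1 : b i1 = w' := by
    have := hb i1 (by simp)
    simpa [vf, hne.symm] using this
  refine ⟨Matrix.of fun j i => b i j, ?_, ?_⟩
  · rw [Matrix.mem_unitaryGroup_iff']
    ext i j
    have : (star (Matrix.of fun j i => b i j) * Matrix.of fun j i => b i j) i j
        = ∑ k, (starRingEnd ℂ) (b i k) * b j k := by
      simp [Matrix.mul_apply, Matrix.conjTranspose_apply]
    rw [this]
    have horth := orthonormal_iff_ite.mp b.orthonormal i j
    have : (inner ℂ (b i) (b j) : ℂ) = ∑ k, (starRingEnd ℂ) (b i k) * b j k := by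
      simp [PiLp.inner_apply, RCLike.inner_apply]
      exact Finset.sum_congr rfl fun _ _ => mul_comm _ _
    rw [← this, horth, Matrix.one_apply]
  · intro φ
    constructor
    · have : cInner u ((Matrix.of fun j i => b i j).mulVec φ)
          = ∑ k, (starRingEnd ℂ) ((inner ℂ (b k) u' : ℂ)) * φ k := by
        unfold cInner
        simp only [Matrix.mulVec, dotProduct, Matrix.of_apply, Finset.mul_sum]
        rw [Finset.sum_comm]
        refine Finset.sum_congr rfl fun k _ => ?_
        simp only [PiLp.inner_apply, RCLike.inner_apply, map_sum, _root_.map_mul,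
          RingHomCompTriple.comp_apply, RingHom.id_apply, starRingEnd_self_apply,
          Finset.sum_mul]
        refine Finset.sum_congr rfl fun i _ => ?_
        simp only [u', WithLp.equiv_symm_apply, WithLp.ofLp_toLp]
        ring
      rw [this]
      have : ∀ k, (inner ℂ (b k) u' : ℂ) = if k = i0 then 1 else 0 := by
        intro k
        rw [← hb0]
        have := orthonormal_iff_ite.mp b.orthonormal k i0
        simpa using this
      simp [this]
    · have : cInner w ((Matrix.of fun j i => b i j).mulVec φ)
          = ∑ k, (starRingEnd ℂ) ((inner ℂ (b k) w' : ℂ)) * φ k := by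
        unfold cInner
        simp only [Matrix.mulVec, dotProduct, Matrix.of_apply, Finset.mul_sum]
        rw [Finset.sum_comm]
        refine Finset.sum_congr rfl fun k _ => ?_
        simp only [PiLp.inner_apply, RCLike.inner_apply, map_sum, _root_.map_mul,
          RingHomCompTriple.comp_apply, RingHom.id_apply, starRingEnd_self_apply,
          Finset.sum_mul]
        refine Finset.sum_congr rfl fun i _ => ?_
        simp only [w', WithLp.equiv_symm_apply, WithLp.ofLp_toLp]
        ring
      rw [this]
      have : ∀ k, (inner ℂ (b k) w' : ℂ) = if k = i1 then 1 else 0 := by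
        intro k
        rw [← hb1]
        have := orthonormal_iff_ite.mp b.orthonormal k i1
        simpa using this
      simp [this]

/-- Single-vector version of `exists_unitary_pair`. -/
lemma exists_unitary_single {i0 : Fin d} {u : Fin d → ℂ} (huu : cInner u u = 1) :
    ∃ V : Matrix (Fin d) (Fin d) ℂ, V ∈ Matrix.unitaryGroup (Fin d) ℂ ∧
      ∀ φ, cInner u (V.mulVec φ) = φ i0 := by
  classical
  let u' : EuclideanSpace ℂ (Fin d) := (WithLp.equiv 2 (Fin d → ℂ)).symm u
  have hinner : ∀ x y : Fin d → ℂ,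
      (inner ℂ ((WithLp.equiv 2 (Fin d → ℂ)).symm x) ((WithLp.equiv 2 (Fin d → ℂ)).symm y) : ℂ)
        = cInner x y := by
    intro x y
    simp [PiLp.inner_apply, RCLike.inner_apply, cInner]
    exact Finset.sum_congr rfl fun _ _ => mul_comm _ _
  let vf : Fin d → EuclideanSpace ℂ (Fin d) := fun _ => u'
  have hvf : Orthonormal ℂ (Set.restrict {i0} vf) := by
    rw [orthonormal_iff_ite]
    rintro ⟨i, hi⟩ ⟨j, hj⟩
    simp only [Set.mem_singleton_iff] at hi hj
    subst hi; subst hj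
    simp [vf, hinner, huu, -inner_self_eq_norm_sq_to_K, Set.restrict_apply, (hinner u u).trans huu]
    exact (hinner u u).trans huu
  obtain ⟨b, hb⟩ := hvf.exists_orthonormalBasis_extension_of_card_eq
    (by simp [finrank_euclideanSpace_fin])
  have hb0 : b i0 = u' := by simpa [vf] using hb i0 (by simp)
  refine ⟨Matrix.of fun j i => b i j, ?_, ?_⟩
  · rw [Matrix.mem_unitaryGroup_iff']
    ext i j
    have h1 : (star (Matrix.of fun j i => b i j) * Matrix.of fun j i => b i j) i j
        = ∑ k, (starRingEnd ℂ) (b i k) * b j k := by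
      simp [Matrix.mul_apply, Matrix.conjTranspose_apply]
    rw [h1]
    have horth := orthonormal_iff_ite.mp b.orthonormal i j
    have h2 : (inner ℂ (b i) (b j) : ℂ) = ∑ k, (starRingEnd ℂ) (b i k) * b j k := by
      simp [PiLp.inner_apply, RCLike.inner_apply]
      exact Finset.sum_congr rfl fun _ _ => mul_comm _ _
    rw [← h2, horth, Matrix.one_apply]
  · intro φ
    have h3 : cInner u ((Matrix.of fun j i => b i j).mulVec φ)
        = ∑ k, (starRingEnd ℂ) ((inner ℂ (b k) u' : ℂ)) * φ k := by
      unfold cInner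
      simp only [Matrix.mulVec, dotProduct, Matrix.of_apply, Finset.mul_sum]
      rw [Finset.sum_comm]
      refine Finset.sum_congr rfl fun k _ => ?_
      simp only [PiLp.inner_apply, RCLike.inner_apply, map_sum, _root_.map_mul,
        RingHomCompTriple.comp_apply, RingHom.id_apply, starRingEnd_self_apply,
        Finset.sum_mul]
      refine Finset.sum_congr rfl fun i _ => ?_
      simp only [u', WithLp.equiv_symm_apply, WithLp.ofLp_toLp]
      ring
    rw [h3]
    have h4 : ∀ k, (inner ℂ (b k) u' : ℂ) = if k = i0 then 1 else 0 := by
      intro k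
      rw [← hb0]
      have := orthonormal_iff_ite.mp b.orthonormal k i0
      simpa using this
    simp [h4]

/-- `cInner` of a vector supported on two coordinates. -/
lemma cInner_two {i0 i1 : Fin d} (hne : i0 ≠ i1) (α β : ℂ) (φ : Fin d → ℂ) :
    cInner (fun i => if i = i0 then α else if i = i1 then β else 0) φ
      = (starRingEnd ℂ) α * φ i0 + (starRingEnd ℂ) β * φ i1 := by
  classical
  unfold cInner
  rw [← Finset.sum_subset (Finset.subset_univ ({i0, i1} : Finset (Fin d)))]
  · rw [Finset.sum_insert (by simp [hne]), Finset.sum_singleton]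
    simp [hne.symm]
  · intro x _ hx
    simp only [Finset.mem_insert, Finset.mem_singleton] at hx
    push_neg at hx
    simp [hx.1, hx.2]

/-- `cInner` with a standard basis vector. -/
lemma cInner_single (l : Fin d) (φ : Fin d → ℂ) :
    cInner (Pi.single l 1) φ = φ l := by
  classical
  unfold cInner
  rw [Finset.sum_eq_single l]
  · simp
  · intro i _ hi
    simp [Pi.single_apply, hi]
  · simp


end HaarAux

namespace HaarAux
variable {d : ℕ} {ν : Measure (Fin d → ℂ)}

lemma Nice.integral_single (h : Nice ν) (i0 : Fin d) {u : Fin d → ℂ}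
    (huu : cInner u u = 1) {G : Type*} [NormedAddCommGroup G] [NormedSpace ℝ G]
    (g : ℂ → G) (hg : Continuous g) :
    ∫ φ, g (cInner u φ) ∂ν = ∫ φ, g (φ i0) ∂ν := by
  obtain ⟨V, hV, hVc⟩ := exists_unitary_single (i0 := i0) huu
  have h1 : AEStronglyMeasurable (fun φ => g (cInner u φ)) ν :=
    (hg.comp (continuous_cInner u)).aestronglyMeasurable
  have h2 := h.integral_comp_mulVec hV h1
  rw [← h2]
  exact integral_congr_ae (Filter.Eventually.of_forall fun φ => by simp only [hVc φ])

lemma Nice.integral_pair (h : Nice ν) {i0 i1 : Fin d} (hne : i0 ≠ i1)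
    {u w : Fin d → ℂ} (huu : cInner u u = 1) (hww : cInner w w = 1)
    (huw : cInner u w = 0) {G : Type*} [NormedAddCommGroup G] [NormedSpace ℝ G]
    (g : ℂ → ℂ → G) (hg : Continuous fun p : ℂ × ℂ => g p.1 p.2) :
    ∫ φ, g (cInner u φ) (cInner w φ) ∂ν = ∫ φ, g (φ i0) (φ i1) ∂ν := by
  obtain ⟨V, hV, hVc⟩ := exists_unitary_pair hne huu hww huw
  have h1 : AEStronglyMeasurable (fun φ => g (cInner u φ) (cInner w φ)) ν :=
    (hg.comp ((continuous_cInner u).prodMk (continuous_cInner w))).aestronglyMeasurable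
  have h2 := h.integral_comp_mulVec hV h1
  rw [← h2]
  exact integral_congr_ae (Filter.Eventually.of_forall fun φ => by
    simp only [(hVc φ).1, (hVc φ).2])

lemma Nice.phase_kill (h : Nice ν) {i0 i1 : Fin d} (hne : i0 ≠ i1)
    (a b c e : ℕ) (hab : a ≠ b) :
    ∫ φ, (φ i0)^a * ((starRingEnd ℂ) (φ i0))^b *
      ((φ i1)^c * ((starRingEnd ℂ) (φ i1))^e) ∂ν = 0 := by
  classical
  have hz : (a : ℂ) - (b : ℂ) ≠ 0 := sub_ne_zero.2 (by exact_mod_cast hab)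
  set ω : ℂ := Complex.exp (Real.pi * Complex.I / ((a : ℂ) - (b : ℂ))) with hω
  have hconj : (starRingEnd ℂ) ω = Complex.exp (-(Real.pi * Complex.I / ((a : ℂ) - (b : ℂ)))) := by
    rw [hω, ← Complex.exp_conj]
    congr 1
    simp [map_div₀, Complex.conj_I]
    ring
  have hωunit : (starRingEnd ℂ) ω * ω = 1 := by
    rw [hconj, hω, ← Complex.exp_add]
    simp
  have hfactor : ω ^ a * ((starRingEnd ℂ) ω) ^ b = -1 := by
    rw [hconj, hω, ← Complex.exp_nat_mul, ← Complex.exp_nat_mul, ← Complex.exp_add]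
    rw [← Complex.exp_pi_mul_I]
    congr 1
    field_simp
    ring
  set D : Matrix (Fin d) (Fin d) ℂ := Matrix.diagonal (fun i => if i = i0 then ω else 1) with hD
  have hωunit' : star ω * ω = 1 := by rw [← starRingEnd_apply]; exact hωunit
  have hDU : D ∈ Matrix.unitaryGroup (Fin d) ℂ := by
    rw [Matrix.mem_unitaryGroup_iff']
    rw [hD, Matrix.star_eq_conjTranspose, Matrix.diagonal_conjTranspose,
      Matrix.diagonal_mul_diagonal]
    have hfun : (fun i => star (fun i => if i = i0 then ω else 1) i *
        if i = i0 then ω else (1 : ℂ)) = fun _ : Fin d => (1 : ℂ) := by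
      funext i
      by_cases hi : i = i0 <;> simp [Pi.star_apply, hi, hωunit]
    rw [hfun, Matrix.diagonal_one]
  set f : (Fin d → ℂ) → ℂ := fun φ => (φ i0)^a * ((starRingEnd ℂ) (φ i0))^b *
      ((φ i1)^c * ((starRingEnd ℂ) (φ i1))^e) with hf
  have hfc : Continuous f := by
    apply Continuous.mul
    · exact ((continuous_apply i0).pow a).mul
        ((continuous_star.comp (continuous_apply i0)).pow b)
    · exact ((continuous_apply i1).pow c).mul
        ((continuous_star.comp (continuous_apply i1)).pow e)
  have key := h.integral_comp_mulVec hDU hfc.aestronglyMeasurable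
  have hcomp : ∀ φ : Fin d → ℂ, f (D.mulVec φ) = (ω ^ a * ((starRingEnd ℂ) ω) ^ b) * f φ := by
    intro φ
    have h0 : D.mulVec φ i0 = ω * φ i0 := by rw [hD, Matrix.mulVec_diagonal]; simp
    have h1 : D.mulVec φ i1 = φ i1 := by
      rw [hD, Matrix.mulVec_diagonal]; simp [hne.symm]
    rw [hf]
    simp only [h0, h1, _root_.map_mul, mul_pow]
    ring
  rw [funext hcomp] at key
  rw [integral_const_mul, hfactor] at key
  have : (2 : ℂ) * ∫ φ, f φ ∂ν = 0 := by linear_combination -key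
  simpa using this

end HaarAux

namespace HaarAux
variable {d : ℕ} {ν : Measure (Fin d → ℂ)}

noncomputable def mom (ν : Measure (Fin d → ℂ)) (i0 : Fin d) (n : ℕ) : ℝ :=
  ∫ φ, ‖φ i0‖ ^ (2 * n) ∂ν

noncomputable def mm (ν : Measure (Fin d → ℂ)) (i0 i1 : Fin d) (j c : ℕ) : ℝ :=
  ∫ φ, ‖φ i0‖ ^ (2 * j) * ‖φ i1‖ ^ (2 * c) ∂ν

lemma monomial_real (z w : ℂ) (j c : ℕ) :
    z ^ j * ((starRingEnd ℂ) z) ^ j * (w ^ c * ((starRingEnd ℂ) w) ^ c)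
      = ((‖z‖ ^ (2 * j) * ‖w‖ ^ (2 * c) : ℝ) : ℂ) := by
  rw [← mul_pow, ← mul_pow, Complex.mul_conj, Complex.mul_conj,
    Complex.normSq_eq_norm_sq, Complex.normSq_eq_norm_sq]
  push_cast
  rw [pow_mul, pow_mul]

lemma Nice.integrable_mono (h : Nice ν) (i0 i1 : Fin d) (a b c e : ℕ) :
    Integrable (fun φ => (φ i0) ^ a * ((starRingEnd ℂ) (φ i0)) ^ b *
      ((φ i1) ^ c * ((starRingEnd ℂ) (φ i1)) ^ e)) ν := by
  have hcont : Continuous fun φ : Fin d → ℂ => (φ i0) ^ a * ((starRingEnd ℂ) (φ i0)) ^ b *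
      ((φ i1) ^ c * ((starRingEnd ℂ) (φ i1)) ^ e) :=
    (((continuous_apply i0).pow a).mul
      ((continuous_star.comp (continuous_apply i0)).pow b)).mul
      (((continuous_apply i1).pow c).mul
        ((continuous_star.comp (continuous_apply i1)).pow e))
  apply h.integrable_of_bound hcont.aestronglyMeasurable 1
  filter_upwards [h.bound_ae] with φ hφ
  have h0 := hφ i0
  have h1 := hφ i1
  have n0 := norm_nonneg (φ i0)
  have n1 := norm_nonneg (φ i1)
  simp only [norm_mul, norm_pow, RCLike.norm_conj]
  exact mul_le_one₀
    (mul_le_one₀ (pow_le_one₀ n0 h0) (pow_nonneg n0 _) (pow_le_one₀ n0 h0))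
    (mul_nonneg (pow_nonneg n1 _) (pow_nonneg n1 _))
    (mul_le_one₀ (pow_le_one₀ n1 h1) (pow_nonneg n1 _) (pow_le_one₀ n1 h1))

lemma Nice.integrable_norm_mono (h : Nice ν) (i0 i1 : Fin d) (p q : ℕ) :
    Integrable (fun φ => ‖φ i0‖ ^ p * ‖φ i1‖ ^ q) ν := by
  have hcont : Continuous fun φ : Fin d → ℂ => ‖φ i0‖ ^ p * ‖φ i1‖ ^ q :=
    (((continuous_apply i0).norm).pow p).mul (((continuous_apply i1).norm).pow q)
  apply h.integrable_of_bound hcont.aestronglyMeasurable 1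
  filter_upwards [h.bound_ae] with φ hφ
  have n0 := norm_nonneg (φ i0)
  have n1 := norm_nonneg (φ i1)
  rw [Real.norm_eq_abs, abs_of_nonneg (by positivity)]
  exact mul_le_one₀ (pow_le_one₀ n0 (hφ i0)) (pow_nonneg n1 _) (pow_le_one₀ n1 (hφ i1))

lemma Nice.Tc_real (i0 i1 : Fin d) (j c : ℕ) :
    ∫ φ, (φ i0) ^ j * ((starRingEnd ℂ) (φ i0)) ^ j *
        ((φ i1) ^ c * ((starRingEnd ℂ) (φ i1)) ^ c) ∂ν
      = ((mm ν i0 i1 j c : ℝ) : ℂ) := by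
  have key : ∫ φ, ((‖φ i0‖ ^ (2*j) * ‖φ i1‖ ^ (2*c) : ℝ) : ℂ) ∂ν
      = ((mm ν i0 i1 j c : ℝ) : ℂ) := by
    rw [mm]; exact integral_ofReal
  rw [← key]
  exact integral_congr_ae (Filter.Eventually.of_forall fun φ =>
    monomial_real (φ i0) (φ i1) j c)

lemma Nice.mom_expand (h : Nice ν) {i0 i1 : Fin d} (hne : i0 ≠ i1) (n : ℕ)
    {t : ℝ} (ht : t ∈ Set.Icc (0:ℝ) 1) :
    mom ν i0 n = ∑ j ∈ Finset.range (n+1),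
      (n.choose j : ℝ) ^ 2 * (t ^ j * (1-t) ^ (n-j)) * mm ν i0 i1 j (n-j) := by
  obtain ⟨ht0, ht1⟩ := ht
  set a := Real.sqrt t with ha
  set b' := Real.sqrt (1 - t) with hb'
  have ha0 : 0 ≤ a := Real.sqrt_nonneg t
  have hb0 : 0 ≤ b' := Real.sqrt_nonneg _
  have ha2 : a ^ 2 = t := Real.sq_sqrt ht0
  have hb2 : b' ^ 2 = 1 - t := Real.sq_sqrt (by linarith)
  have ha1 : a ≤ 1 := Real.sqrt_le_one.2 ht1
  have hb1 : b' ≤ 1 := Real.sqrt_le_one.2 (by linarith)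
  set u : Fin d → ℂ := fun i => if i = i0 then (a:ℂ) else if i = i1 then (b':ℂ) else 0 with hu
  have hcu : ∀ φ, cInner u φ = (a:ℂ) * φ i0 + (b':ℂ) * φ i1 := by
    intro φ
    rw [hu, cInner_two hne]
    simp [Complex.conj_ofReal]
  have huu : cInner u u = 1 := by
    rw [hcu]
    have hui0 : u i0 = (a:ℂ) := by simp [hu]
    have hui1 : u i1 = (b':ℂ) := by simp [hu, hne.symm]
    rw [hui0, hui1, ← Complex.ofReal_mul, ← Complex.ofReal_mul, ← Complex.ofReal_add,
      show a * a + b' * b' = 1 by nlinarith, Complex.ofReal_one]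
  have step1 : mom ν i0 n = ∫ φ, ‖cInner u φ‖ ^ (2*n) ∂ν := by
    rw [mom]
    exact (h.integral_single i0 huu (fun z => ‖z‖ ^ (2*n)) (continuous_norm.pow _)).symm
  set F : (Fin d → ℂ) → ℂ := fun φ => ((a:ℂ) * φ i0 + (b':ℂ) * φ i1) ^ n *
      ((starRingEnd ℂ) ((a:ℂ) * φ i0 + (b':ℂ) * φ i1)) ^ n with hF
  have hFre : ∀ φ, ‖cInner u φ‖ ^ (2*n) = (F φ).re := by
    intro φ
    rw [hcu φ, hF]
    simp only
    rw [← mul_pow, Complex.mul_conj, ← Complex.ofReal_pow, Complex.ofReal_re,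
      Complex.normSq_eq_norm_sq, ← pow_mul]
  have hFcont : Continuous F := by
    have hz : Continuous fun φ : Fin d → ℂ => (a:ℂ) * φ i0 + (b':ℂ) * φ i1 :=
      (continuous_const.mul (continuous_apply i0)).add
        (continuous_const.mul (continuous_apply i1))
    exact (hz.pow n).mul ((continuous_star.comp hz).pow n)
  have hFint : Integrable F ν := by
    apply h.integrable_of_bound hFcont.aestronglyMeasurable (4 ^ n)
    filter_upwards [h.bound_ae] with φ hφ
    have hzb : ‖(a:ℂ) * φ i0 + (b':ℂ) * φ i1‖ ≤ 2 := by
      calc ‖(a:ℂ) * φ i0 + (b':ℂ) * φ i1‖ ≤ ‖(a:ℂ) * φ i0‖ + ‖(b':ℂ) * φ i1‖ :=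
            norm_add_le _ _
        _ ≤ 1 + 1 := add_le_add
            (by rw [norm_mul, Complex.norm_real, Real.norm_eq_abs, abs_of_nonneg ha0]
                exact mul_le_one₀ ha1 (norm_nonneg _) (hφ i0))
            (by rw [norm_mul, Complex.norm_real, Real.norm_eq_abs, abs_of_nonneg hb0]
                exact mul_le_one₀ hb1 (norm_nonneg _) (hφ i1))
        _ = 2 := by norm_num
    rw [hF]
    simp only [norm_mul, norm_pow, RCLike.norm_conj]
    calc ‖(a:ℂ) * φ i0 + (b':ℂ) * φ i1‖ ^ n * ‖(a:ℂ) * φ i0 + (b':ℂ) * φ i1‖ ^ n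
        ≤ 2 ^ n * 2 ^ n := mul_le_mul (pow_le_pow_left₀ (norm_nonneg _) hzb n)
            (pow_le_pow_left₀ (norm_nonneg _) hzb n) (pow_nonneg (norm_nonneg _) n)
            (pow_nonneg (by norm_num) n)
      _ = 4 ^ n := by rw [← mul_pow]; norm_num
  have step2 : mom ν i0 n = (∫ φ, F φ ∂ν).re := by
    rw [step1]
    rw [integral_congr_ae (Filter.Eventually.of_forall hFre)]
    simpa [RCLike.re_to_complex] using integral_re hFint
  have hFexp : ∀ φ : Fin d → ℂ, F φ = ∑ j ∈ Finset.range (n+1), ∑ k ∈ Finset.range (n+1),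
      ((a:ℂ) ^ (j+k) * (b':ℂ) ^ ((n-j)+(n-k)) * (n.choose j) * (n.choose k)) *
        ((φ i0) ^ j * ((starRingEnd ℂ) (φ i0)) ^ k *
          ((φ i1) ^ (n-j) * ((starRingEnd ℂ) (φ i1)) ^ (n-k))) := by
    intro φ
    rw [hF]
    simp only [map_add, _root_.map_mul, Complex.conj_ofReal]
    rw [add_pow, add_pow, Finset.sum_mul_sum]
    refine Finset.sum_congr rfl fun j hj => Finset.sum_congr rfl fun k hk => ?_
    rw [pow_add, pow_add]
    ring
  have hterm : ∀ j k : ℕ, Integrable (fun φ =>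
      ((a:ℂ) ^ (j+k) * (b':ℂ) ^ ((n-j)+(n-k)) * (n.choose j) * (n.choose k)) *
        ((φ i0) ^ j * ((starRingEnd ℂ) (φ i0)) ^ k *
          ((φ i1) ^ (n-j) * ((starRingEnd ℂ) (φ i1)) ^ (n-k)))) ν :=
    fun j k => (h.integrable_mono i0 i1 _ _ _ _).const_mul _
  have step3 : ∫ φ, F φ ∂ν = ∑ j ∈ Finset.range (n+1),
      ((a:ℂ) ^ (2*j) * (b':ℂ) ^ (2*(n-j)) * ((n.choose j : ℂ)) ^ 2) *
        ((mm ν i0 i1 j (n-j) : ℝ) : ℂ) := by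
    rw [integral_congr_ae (Filter.Eventually.of_forall hFexp)]
    rw [integral_finset_sum _ (fun j _ => integrable_finset_sum _ (fun k _ => hterm j k))]
    refine Finset.sum_congr rfl fun j hj => ?_
    rw [integral_finset_sum _ (fun k _ => hterm j k)]
    rw [Finset.sum_eq_single j]
    · rw [integral_const_mul, Nice.Tc_real]
      rw [show (a:ℂ) ^ (j+j) * (b':ℂ) ^ ((n-j)+(n-j)) * (n.choose j) * (n.choose j)
          = (a:ℂ) ^ (2*j) * (b':ℂ) ^ (2*(n-j)) * ((n.choose j : ℂ)) ^ 2 by ring]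
    · intro k hk hkj
      rw [integral_const_mul, h.phase_kill hne j k _ _ (Ne.symm hkj), mul_zero]
    · intro hj'
      exact absurd hj hj'
  rw [step2, step3, Complex.re_sum]
  refine Finset.sum_congr rfl fun j hj => ?_
  rw [show ((a:ℂ) ^ (2*j) * (b':ℂ) ^ (2*(n-j)) * ((n.choose j : ℂ)) ^ 2)
      = ((a ^ (2*j) * b' ^ (2*(n-j)) * (n.choose j : ℝ) ^ 2 : ℝ) : ℂ) by push_cast; ring]
  rw [← Complex.ofReal_mul, Complex.ofReal_re]
  rw [pow_mul a, ha2, pow_mul b', hb2]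
  ring

end HaarAux

namespace HaarAux
variable {d : ℕ} {ν : Measure (Fin d → ℂ)}

lemma coeff_extract {n : ℕ} {c : ℕ → ℝ}
    (hpoly : ∀ t ∈ Set.Ioo (0:ℝ) 1,
      ∑ j ∈ Finset.range (n+1), c j * (t ^ j * (1-t) ^ (n-j)) = 0) :
    ∀ j ≤ n, c j = 0 := by
  classical
  set P : Polynomial ℝ := ∑ j ∈ Finset.range (n+1), Polynomial.C (c j) * Polynomial.X ^ j
    with hP
  have hroots : ∀ u : ℝ, 0 < u → P.IsRoot u := by
    intro u hu
    have h1u : (0:ℝ) < 1 + u := by linarith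
    have ht : u / (1+u) ∈ Set.Ioo (0:ℝ) 1 :=
      ⟨by positivity, by rw [div_lt_one h1u]; linarith⟩
    have hkey := hpoly _ ht
    have h1t : 1 - u / (1+u) = 1 / (1+u) := by field_simp; ring
    have hterm : ∀ j ∈ Finset.range (n+1),
        c j * ((u/(1+u)) ^ j * (1 - u/(1+u)) ^ (n-j)) = c j * u ^ j / (1+u) ^ n := by
      intro j hj
      rw [h1t, div_pow, div_pow, one_pow, div_mul_div_comm, ← pow_add,
        Nat.add_sub_cancel' (Nat.lt_succ_iff.mp (Finset.mem_range.mp hj))]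
      ring
    rw [Finset.sum_congr rfl hterm] at hkey
    have hsum : ∑ j ∈ Finset.range (n+1), c j * u ^ j = 0 := by
      have h2 : (∑ j ∈ Finset.range (n+1), c j * u ^ j) / (1+u) ^ n = 0 := by
        rw [Finset.sum_div]
        exact hkey
      have h3 : ((1:ℝ)+u) ^ n ≠ 0 := by positivity
      field_simp at h2
      simpa using h2
    unfold Polynomial.IsRoot
    rw [hP, Polynomial.eval_finset_sum]
    simpa using hsum
  have hPzero : P = 0 := by
    apply Polynomial.eq_zero_of_infinite_isRoot
    apply Set.Infinite.mono _ (Set.Ioi_infinite (0:ℝ))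
    intro u hu
    exact hroots u hu
  intro j hj
  have hcoeff : P.coeff j = c j := by
    rw [hP, Polynomial.finset_sum_coeff]
    rw [Finset.sum_eq_single j]
    · simp
    · intro k hk hkj
      simp [Polynomial.coeff_C_mul, Polynomial.coeff_X_pow, Ne.symm hkj]
    · intro hj'
      exact absurd (Finset.mem_range.mpr (Nat.lt_succ_of_le hj)) hj'
  rw [← hcoeff, hPzero]
  simp

lemma Nice.mm_choose (h : Nice ν) {i0 i1 : Fin d} (hne : i0 ≠ i1) {n j : ℕ}
    (hj : j ≤ n) :
    (n.choose j : ℝ) * mm ν i0 i1 j (n-j) = mom ν i0 n := by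
  have hbin : ∀ t : ℝ, ∑ j ∈ Finset.range (n+1),
      (n.choose j : ℝ) * (t ^ j * (1-t) ^ (n-j)) = 1 := by
    intro t
    have hap := add_pow t (1-t) n
    rw [show t + (1-t) = 1 by ring, one_pow] at hap
    conv_rhs => rw [hap]
    exact Finset.sum_congr rfl fun k _ => by ring
  set c : ℕ → ℝ := fun j => (n.choose j : ℝ) ^ 2 * mm ν i0 i1 j (n-j)
      - (n.choose j : ℝ) * mom ν i0 n with hc
  have hzero := coeff_extract (n := n) (c := c) (fun t ht => by
    have h1 := h.mom_expand hne n (Set.mem_Icc_of_Ioo ht)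
    have h2 := hbin t
    simp only [hc, sub_mul]
    rw [Finset.sum_sub_distrib]
    have e1 : ∑ j ∈ Finset.range (n+1),
        (n.choose j : ℝ) ^ 2 * mm ν i0 i1 j (n-j) * (t ^ j * (1-t) ^ (n-j))
        = mom ν i0 n := by
      rw [h1]
      exact Finset.sum_congr rfl fun k _ => by ring
    have e2 : ∑ j ∈ Finset.range (n+1),
        (n.choose j : ℝ) * mom ν i0 n * (t ^ j * (1-t) ^ (n-j))
        = mom ν i0 n := by
      calc ∑ j ∈ Finset.range (n+1),
          (n.choose j : ℝ) * mom ν i0 n * (t ^ j * (1-t) ^ (n-j))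
          = mom ν i0 n * ∑ j ∈ Finset.range (n+1),
            (n.choose j : ℝ) * (t ^ j * (1-t) ^ (n-j)) := by
            rw [Finset.mul_sum]
            exact Finset.sum_congr rfl fun k _ => by ring
        _ = mom ν i0 n := by rw [h2, mul_one]
    rw [e1, e2, sub_self])
  have hcj := hzero j hj
  rw [hc] at hcj
  have hCpos : (0:ℝ) < (n.choose j : ℝ) := by exact_mod_cast Nat.choose_pos hj
  apply mul_left_cancel₀ (ne_of_gt hCpos)
  linear_combination hcj

lemma Nice.mom_rec (h : Nice ν) {i0 i1 : Fin d} (hne : i0 ≠ i1) (n : ℕ) :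
    mom ν i0 n = mom ν i0 (n+1) + ((d - 1 : ℕ) : ℝ) * mm ν i0 i1 n 1 := by
  classical
  have hint : ∀ l : Fin d, Integrable (fun φ => ‖φ i0‖ ^ (2*n) * ‖φ l‖ ^ 2) ν :=
    fun l => h.integrable_norm_mono i0 l (2*n) 2
  have hsum : mom ν i0 n = ∑ l : Fin d, ∫ φ, ‖φ i0‖ ^ (2*n) * ‖φ l‖ ^ 2 ∂ν := by
    rw [mom, ← integral_finset_sum _ (fun l _ => hint l)]
    apply integral_congr_ae
    filter_upwards [h.sph] with φ hφ
    rw [← Finset.mul_sum, hφ, mul_one]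
  have hl : ∀ l : Fin d, l ≠ i0 →
      ∫ φ, ‖φ i0‖ ^ (2*n) * ‖φ l‖ ^ 2 ∂ν = mm ν i0 i1 n 1 := by
    intro l hli0
    have hg : Continuous fun p : ℂ × ℂ => ‖p.1‖ ^ (2*n) * ‖p.2‖ ^ (2*1) :=
      ((continuous_fst.norm).pow _).mul ((continuous_snd.norm).pow _)
    have huu : cInner (Pi.single i0 1) (Pi.single i0 1) = 1 := by
      rw [cInner_single]; simp
    have hww : cInner (Pi.single l 1) (Pi.single l 1) = 1 := by
      rw [cInner_single]; simp
    have huw : cInner (Pi.single i0 1) (Pi.single l 1) = 0 := by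
      rw [cInner_single]; exact Pi.single_eq_of_ne (Ne.symm hli0) 1
    have hpair := h.integral_pair hne huu hww huw
      (fun z w => ‖z‖ ^ (2*n) * ‖w‖ ^ (2*1)) hg
    rw [mm]
    rw [← hpair]
    apply integral_congr_ae
    apply Filter.Eventually.of_forall
    intro φ
    simp [cInner_single]
  rw [hsum, Finset.sum_eq_sum_sdiff_singleton_add (Finset.mem_univ i0)]
  have hi0term : ∫ φ, ‖φ i0‖ ^ (2*n) * ‖φ i0‖ ^ 2 ∂ν = mom ν i0 (n+1) := by
    rw [mom]
    apply integral_congr_ae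
    apply Filter.Eventually.of_forall
    intro φ
    show ‖φ i0‖ ^ (2*n) * ‖φ i0‖ ^ 2 = ‖φ i0‖ ^ (2*(n+1))
    rw [← pow_add, show 2*n+2 = 2*(n+1) by omega]
  rw [hi0term]
  have hrest : ∑ l ∈ Finset.univ \ {i0}, ∫ φ, ‖φ i0‖ ^ (2*n) * ‖φ l‖ ^ 2 ∂ν
      = ((d - 1 : ℕ) : ℝ) * mm ν i0 i1 n 1 := by
    rw [Finset.sum_congr rfl (fun l hlmem => hl l (by
      simp only [Finset.mem_sdiff, Finset.mem_singleton] at hlmem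
      exact hlmem.2))]
    rw [Finset.sum_const, nsmul_eq_mul]
    congr 1
    rw [Finset.card_sdiff_of_subset (by simp), Finset.card_univ, Fintype.card_fin]
    simp
  rw [hrest]
  ring

lemma Nice.mom_formula (h : Nice ν) {i0 i1 : Fin d} (hne : i0 ≠ i1) (n : ℕ) :
    mom ν i0 n = (n.factorial * (d-1).factorial : ℝ) / ((n + d - 1).factorial) := by
  have hd1 : 1 ≤ d := Nat.one_le_iff_ne_zero.mpr (by rintro rfl; exact (Fin.elim0 i0))
  induction n with
  | zero =>
    have : mom ν i0 0 = 1 := by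
      rw [mom]
      simp only [Nat.mul_zero, pow_zero]
      haveI := h.prob
      rw [integral_const]
      simp
    rw [this]
    rw [show 0 + d - 1 = d - 1 by omega]
    have hfac : ((d-1).factorial : ℝ) ≠ 0 := by exact_mod_cast (Nat.factorial_pos _).ne'
    rw [Nat.factorial_zero]
    field_simp
    norm_num
  | succ n ih =>
    have heq1 := h.mom_rec hne n
    have heq2 := h.mm_choose hne (n := n+1) (j := n) (Nat.le_succ n)
    rw [Nat.choose_succ_self_right] at heq2
    rw [show n + 1 - n = 1 by omega] at heq2
    -- mom n = mom (n+1) + (d-1) * mm, (n+1) * mm = mom (n+1)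
    have hdr : ((d - 1 : ℕ) : ℝ) = (d : ℝ) - 1 := by
      rw [Nat.cast_sub hd1]; simp
    have hcomb : mom ν i0 n * (n+1 : ℝ) = mom ν i0 (n+1) * ((n : ℝ) + d) := by
      rw [heq1, hdr]
      have hd1' : (1:ℝ) ≤ (d:ℝ) := by exact_mod_cast hd1
      push_cast at heq2
      linear_combination ((d:ℝ) - 1) * heq2
    -- factorial identities
    have hf1 : ((n + 1 + d - 1).factorial : ℝ) = ((n:ℝ) + d) * ((n + d - 1).factorial : ℝ) := by
      rw [show n + 1 + d - 1 = (n + d - 1) + 1 by omega, Nat.factorial_succ,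
        show (n + d - 1) + 1 = n + d by omega]
      push_cast
      ring
    have hnd : (0:ℝ) < (n:ℝ) + d := by
      have : (1:ℝ) ≤ (d:ℝ) := by exact_mod_cast hd1
      linarith [Nat.cast_nonneg (α := ℝ) n]
    have hfacpos : (0:ℝ) < ((n + d - 1).factorial : ℝ) := by
      exact_mod_cast Nat.factorial_pos _
    have hndne : ((n:ℝ) + d) ≠ 0 := ne_of_gt hnd
    have hmom1 : mom ν i0 (n+1) = (mom ν i0 n * ((n:ℝ)+1)) / ((n:ℝ) + d) := by
      rw [eq_div_iff hndne]
      linarith [hcomb]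
    rw [hmom1, ih, Nat.factorial_succ, hf1]
    push_cast
    field_simp

end HaarAux

namespace HaarAux
variable {d : ℕ} {ν : Measure (Fin d → ℂ)}

lemma conj_mul_self (z : ℂ) : (starRingEnd ℂ) z * z = ((‖z‖ ^ 2 : ℝ) : ℂ) := by
  rw [mul_comm, Complex.mul_conj, Complex.normSq_eq_norm_sq]

lemma cInner_self_one {v : Fin d → ℂ} (hv : ∑ j, ‖v j‖ ^ 2 = 1) :
    cInner v v = 1 := by
  unfold cInner
  rw [Finset.sum_congr rfl (fun j _ => conj_mul_self (v j)), ← Complex.ofReal_sum, hv]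
  exact Complex.ofReal_one

lemma inner_eq_cInner (x y : Fin d → ℂ) :
    (inner ℂ ((WithLp.equiv 2 (Fin d → ℂ)).symm x)
      ((WithLp.equiv 2 (Fin d → ℂ)).symm y) : ℂ) = cInner x y := by
  simp [PiLp.inner_apply, RCLike.inner_apply, cInner]
  exact Finset.sum_congr rfl fun _ _ => mul_comm _ _

lemma cInner_norm_le_one {v φ : Fin d → ℂ} (hv : ∑ j, ‖v j‖ ^ 2 = 1)
    (hφ : ∑ j, ‖φ j‖ ^ 2 = 1) : ‖cInner v φ‖ ≤ 1 := by
  rw [← inner_eq_cInner]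
  have hnv : ‖(WithLp.equiv 2 (Fin d → ℂ)).symm v‖ = 1 := by
    rw [EuclideanSpace.norm_eq]
    simp only [WithLp.equiv_symm_apply, WithLp.ofLp_toLp]
    rw [hv, Real.sqrt_one]
  have hnφ : ‖(WithLp.equiv 2 (Fin d → ℂ)).symm φ‖ = 1 := by
    rw [EuclideanSpace.norm_eq]
    simp only [WithLp.equiv_symm_apply, WithLp.ofLp_toLp]
    rw [hφ, Real.sqrt_one]
  calc ‖(inner ℂ ((WithLp.equiv 2 (Fin d → ℂ)).symm v)
        ((WithLp.equiv 2 (Fin d → ℂ)).symm φ) : ℂ)‖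
      ≤ ‖(WithLp.equiv 2 (Fin d → ℂ)).symm v‖ * ‖(WithLp.equiv 2 (Fin d → ℂ)).symm φ‖ :=
        norm_inner_le_norm _ _
    _ = 1 := by rw [hnv, hnφ, mul_one]

lemma amgm {N : ℕ} (hN : 0 < N) (x : Fin N → ℝ) (hx : ∀ i, 0 ≤ x i) :
    ∏ i, x i ≤ (N:ℝ)⁻¹ * ∑ i, x i ^ N := by
  have hNne : (N:ℝ) ≠ 0 := by exact_mod_cast hN.ne'
  have hw : ∑ _i : Fin N, (N:ℝ)⁻¹ = 1 := by
    rw [Finset.sum_const, Finset.card_univ, Fintype.card_fin, nsmul_eq_mul]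
    field_simp
  have key := Real.geom_mean_le_arith_mean_weighted Finset.univ (fun _ => (N:ℝ)⁻¹)
    (fun i => x i ^ N) (fun i _ => by positivity) hw (fun i _ => pow_nonneg (hx i) N)
  have hL : ∀ i, (x i ^ N : ℝ) ^ ((N:ℝ)⁻¹) = x i := by
    intro i
    rw [← Real.rpow_natCast (x i) N, ← Real.rpow_mul (hx i),
      mul_inv_cancel₀ hNne, Real.rpow_one]
  calc ∏ i, x i = ∏ i, (x i ^ N : ℝ) ^ ((N:ℝ)⁻¹) :=
        (Finset.prod_congr rfl (fun i _ => hL i)).symm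
    _ ≤ ∑ i, (N:ℝ)⁻¹ * x i ^ N := key
    _ = (N:ℝ)⁻¹ * ∑ i, x i ^ N := (Finset.mul_sum _ _ _).symm

end HaarAux

open HaarAux in
/-- For unit vectors `v_1, …, v_N ∈ ℂ^d`, the probability of any fixed outcome
string under `N` independent single-copy measurements of a Haar-random pure
state is at most the reciprocal of the dimension of the symmetric subspace:
`∫ ∏ i, |⟨v_i, φ⟩|² dμ_d(φ) ≤ N! (d − 1)! / (N + d − 1)!`. -/
theorem haar_outcome_prob_le_symmetric_dim_inv {d N : ℕ} (hd : 0 < d) (hN : 0 < N)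
    (μU : Measure (Fin d → Fin d → ℂ)) (hμU : IsHaarUnitary μU)
    (v : Fin N → Fin d → ℂ) (hv : ∀ i, ∑ j, ‖v i j‖ ^ 2 = 1) :
    ∫ φ, ∏ i, ‖cInner (v i) φ‖ ^ 2 ∂(pureStateMeasure hd μU)
      ≤ (Nat.factorial N * Nat.factorial (d - 1) : ℝ) /
          Nat.factorial (N + d - 1) := by
  classical
  obtain ⟨hp, hae, hinv⟩ := hμU
  set i0 : Fin d := ⟨0, hd⟩ with hi0
  set col : (Fin d → Fin d → ℂ) → (Fin d → ℂ) := fun U i => U i i0 with hcol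
  have hcolm : Measurable col := by
    apply measurable_pi_lambda
    intro i
    exact (measurable_pi_apply i0).comp (measurable_pi_apply i)
  have hνdef : pureStateMeasure hd μU = μU.map col := rfl
  set ν : Measure (Fin d → ℂ) := μU.map col with hν
  have hNice : Nice ν := by
    refine ⟨?_, ?_, ?_⟩
    · exact Measure.isProbabilityMeasure_map hcolm.aemeasurable
    · have hms : MeasurableSet {x : Fin d → ℂ | (∑ j, ‖x j‖ ^ 2) = 1} := by
        have hcont : Continuous fun x : Fin d → ℂ => ∑ j, ‖x j‖ ^ 2 :=
          continuous_finset_sum _ (fun j _ => ((continuous_apply j).norm).pow 2)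
        exact hcont.measurable (measurableSet_singleton 1)
      rw [hν, MeasureTheory.ae_map_iff hcolm.aemeasurable hms]
      filter_upwards [hae] with U hU
      have hmem := Matrix.mem_unitaryGroup_iff'.mp hU
      have hentry := congrFun (congrFun hmem i0) i0
      rw [Matrix.mul_apply, Matrix.one_apply_eq] at hentry
      have hentry2 : ∑ k, ((‖U k i0‖ ^ 2 : ℝ) : ℂ) = 1 := by
        rw [← hentry]
        refine Finset.sum_congr rfl fun k _ => ?_
        show ((‖U k i0‖ ^ 2 : ℝ) : ℂ) = star (Matrix.of U) i0 k * Matrix.of U k i0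
        rw [Matrix.star_eq_conjTranspose, Matrix.conjTranspose_apply]
        exact (conj_mul_self (U k i0)).symm
      rw [← Complex.ofReal_sum] at hentry2
      exact_mod_cast hentry2
    · intro V hV
      have hmul : Measurable (fun U : Fin d → Fin d → ℂ => Matrix.of.symm (V * Matrix.of U)) := by
        apply measurable_pi_lambda
        intro i
        apply measurable_pi_lambda
        intro j
        have : (fun U : Fin d → Fin d → ℂ => Matrix.of.symm (V * Matrix.of U) i j)
            = fun U => ∑ k, V i k * U k j := by
          funext U
          simp [Matrix.mul_apply]
        rw [this]
        exact Finset.measurable_sum _ fun k _ =>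
          measurable_const.mul ((measurable_pi_apply j).comp (measurable_pi_apply k))
      have hcomp : V.mulVec ∘ col = col ∘ (fun U => Matrix.of.symm (V * Matrix.of U)) := by
        funext U
        funext i
        simp [hcol, Matrix.mulVec, dotProduct, Matrix.mul_apply]
      calc (μU.map col).map V.mulVec
          = μU.map (V.mulVec ∘ col) := Measure.map_map (measurable_mulVec V) hcolm
        _ = μU.map (col ∘ (fun U => Matrix.of.symm (V * Matrix.of U))) := by rw [hcomp]
        _ = (μU.map (fun U => Matrix.of.symm (V * Matrix.of U))).map col :=
            (Measure.map_map hcolm hmul).symm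
        _ = μU.map col := by rw [hinv V hV]
  rw [hνdef]
  -- integrability of the product integrand
  have hprodcont : Continuous fun φ : Fin d → ℂ => ∏ i, ‖cInner (v i) φ‖ ^ 2 :=
    continuous_finset_prod _ (fun i _ => ((continuous_cInner (v i)).norm).pow 2)
  have hprodbound : ∀ᵐ φ ∂ν, ∏ i, ‖cInner (v i) φ‖ ^ 2 ≤ 1 := by
    filter_upwards [hNice.sph] with φ hφ
    exact Finset.prod_le_one (fun i _ => by positivity)
      (fun i _ => pow_le_one₀ (norm_nonneg _) (cInner_norm_le_one (hv i) hφ))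
  have hLHSint : Integrable (fun φ => ∏ i, ‖cInner (v i) φ‖ ^ 2) ν := by
    apply hNice.integrable_of_bound hprodcont.aestronglyMeasurable 1
    filter_upwards [hprodbound] with φ hφ
    rw [Real.norm_eq_abs, abs_of_nonneg (by positivity)]
    exact hφ
  haveI hprob : IsProbabilityMeasure ν := hNice.prob
  rcases Nat.lt_or_ge d 2 with hd1 | hd2
  · -- d = 1
    have hd1' : d = 1 := by omega
    have hRHS : (Nat.factorial N * Nat.factorial (d - 1) : ℝ) /
        Nat.factorial (N + d - 1) = 1 := by
      subst hd1'
      have hfne : (N.factorial : ℝ) ≠ 0 := by exact_mod_cast (Nat.factorial_pos N).ne'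
      simp only [Nat.factorial, Nat.add_sub_cancel, Nat.sub_self]
      field_simp
      norm_num
    rw [hRHS]
    calc ∫ φ, ∏ i, ‖cInner (v i) φ‖ ^ 2 ∂ν
        ≤ ∫ _φ, (1:ℝ) ∂ν := integral_mono_ae hLHSint (integrable_const 1) hprodbound
      _ = 1 := by simp
  · -- d ≥ 2
    set i1 : Fin d := ⟨1, by omega⟩ with hi1
    have hne : i0 ≠ i1 := by
      simp [hi0, hi1, Fin.ext_iff]
    have hsingle : ∀ i : Fin N, ∫ φ, ‖cInner (v i) φ‖ ^ (2*N) ∂ν = mom ν i0 N := by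
      intro i
      rw [mom]
      exact hNice.integral_single i0 (cInner_self_one (hv i))
        (fun z => ‖z‖ ^ (2*N)) (continuous_norm.pow _)
    have hptwise : ∀ φ : Fin d → ℂ, ∏ i, ‖cInner (v i) φ‖ ^ 2
        ≤ (N:ℝ)⁻¹ * ∑ i, ‖cInner (v i) φ‖ ^ (2*N) := by
      intro φ
      have := amgm hN (fun i => ‖cInner (v i) φ‖ ^ 2) (fun i => by positivity)
      calc ∏ i, ‖cInner (v i) φ‖ ^ 2
          ≤ (N:ℝ)⁻¹ * ∑ i, (‖cInner (v i) φ‖ ^ 2) ^ N := this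
        _ = (N:ℝ)⁻¹ * ∑ i, ‖cInner (v i) φ‖ ^ (2*N) := by
            congr 1
            exact Finset.sum_congr rfl fun i _ => by rw [← pow_mul]
    have htermint : ∀ i : Fin N, Integrable (fun φ => ‖cInner (v i) φ‖ ^ (2*N)) ν := by
      intro i
      apply hNice.integrable_of_bound
        (((continuous_cInner (v i)).norm.pow (2*N)).aestronglyMeasurable) 1
      filter_upwards [hNice.sph] with φ hφ
      show ‖‖cInner (v i) φ‖ ^ (2*N)‖ ≤ 1
      rw [Real.norm_eq_abs, abs_of_nonneg (by positivity : (0:ℝ) ≤ ‖cInner (v i) φ‖ ^ (2*N))]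
      exact pow_le_one₀ (norm_nonneg _) (cInner_norm_le_one (hv i) hφ)
    have hRHSint : Integrable (fun φ => (N:ℝ)⁻¹ * ∑ i, ‖cInner (v i) φ‖ ^ (2*N)) ν :=
      (integrable_finset_sum _ (fun i _ => htermint i)).const_mul _
    have hmomval := hNice.mom_formula hne N
    calc ∫ φ, ∏ i, ‖cInner (v i) φ‖ ^ 2 ∂ν
        ≤ ∫ φ, (N:ℝ)⁻¹ * ∑ i, ‖cInner (v i) φ‖ ^ (2*N) ∂ν :=
          integral_mono hLHSint hRHSint hptwise
      _ = (N:ℝ)⁻¹ * ∑ i : Fin N, ∫ φ, ‖cInner (v i) φ‖ ^ (2*N) ∂ν := by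
          rw [integral_const_mul, integral_finset_sum _ (fun i _ => htermint i)]
      _ = (N:ℝ)⁻¹ * ((N:ℝ) * mom ν i0 N) := by
          rw [Finset.sum_congr rfl (fun i _ => hsingle i), Finset.sum_const,
            Finset.card_univ, Fintype.card_fin, nsmul_eq_mul]
      _ = mom ν i0 N := by
          field_simp
      _ = (Nat.factorial N * Nat.factorial (d - 1) : ℝ) / Nat.factorial (N + d - 1) :=
          hmomval
end
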